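/- arXiv:1905.02028 — 7 statements merged into one kernel-verified Lean document; each statement's English description precedes it below -/
import Mathlib

section
/- Let Ω ⊂ ℝⁿ be a convex compact set with nonempty interior and M ≥ 0. Suppose u_k : Ω → ℝ is a sequence of convex functions with −M ≤ u_k ≤ 0 on Ω that converges pointwise on the interior of Ω to a convex function u : Ω → ℝ with −M ≤ u ≤ 0. Let f : ℝⁿ → ℝ be bounded and continuous. Then ∫_Ω f(∇u_k(x)) dx → ∫_Ω f(∇u(x)) dx as k → ∞, where ∇u_k and ∇u denote the gradients, which exist Lebesgue-almost everywhere on Ω since the functions are convex; in particular all the integrals are well defined and finite. -/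
open MeasureTheory Metric Set Filter InnerProductSpace
open scoped Topology

lemma aux_subgrad {s : Set (EuclideanSpace ℝ (Fin n))} {g : EuclideanSpace ℝ (Fin n) → ℝ}
    (hconv : ConvexOn ℝ s g) {x y p : EuclideanSpace ℝ (Fin n)}
    (hx : x ∈ s) (hy : y ∈ s) (hg : HasGradientAt g p x) :
    inner ℝ p (y - x) ≤ g y - g x := by
  set v := y - x with hv
  have hline : HasDerivAt (fun t : ℝ => x + t • v) v 0 := by
    simpa using ((hasDerivAt_id (0 : ℝ)).smul_const v).const_add x
  have hc : HasDerivAt (fun t : ℝ => g (x + t • v)) (inner ℝ p v : ℝ) 0 := by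
    have hL : HasFDerivAt g (toDual ℝ _ p) x := hg.hasFDerivAt
    have h0 : x = x + (0:ℝ) • v := by simp
    rw [h0] at hL
    have := hL.comp_hasDerivAt (x := (0:ℝ)) hline
    exact this
  have hslope := hasDerivAt_iff_tendsto_slope.1 hc
  have hmono : Tendsto (slope (fun t : ℝ => g (x + t • v)) 0) (𝓝[>] (0:ℝ)) (𝓝 (inner ℝ p v : ℝ)) :=
    hslope.mono_left (nhdsWithin_mono 0 (fun t ht => ne_of_gt ht))
  refine le_of_tendsto hmono ?_
  filter_upwards [Ioc_mem_nhdsGT_of_mem (⟨le_refl (0:ℝ), one_pos⟩ : (0:ℝ) ∈ Ico 0 1)] with t ht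
  have ht0 : (0:ℝ) < t := ht.1
  have ht1 : t ≤ 1 := ht.2
  have key : g (x + t • v) ≤ (1 - t) * g x + t * g y := by
    have h2 := hconv.2 hx hy (by linarith : (0:ℝ) ≤ 1 - t) ht0.le (by ring)
    have he : (1 - t) • x + t • y = x + t • v := by rw [hv]; module
    rwa [he] at h2
  rw [slope_def_field]
  simp only [sub_zero, zero_smul, add_zero]
  rw [div_le_iff₀ ht0]
  nlinarith [key]

lemma aux_grad_bound {s : Set (EuclideanSpace ℝ (Fin n))} {g : EuclideanSpace ℝ (Fin n) → ℝ}
    (hconv : ConvexOn ℝ s g) {x p : EuclideanSpace ℝ (Fin n)} {r M : ℝ}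
    (hr : 0 < r) (hM : 0 ≤ M) (hball : closedBall x r ⊆ s)
    (hbd : ∀ a ∈ s, -M ≤ g a ∧ g a ≤ 0) (hg : HasGradientAt g p x) :
    ‖p‖ ≤ M / r := by
  rcases eq_or_ne p 0 with rfl | hp
  · simp [le_div_iff₀ hr]; positivity
  · have hpn : (0:ℝ) < ‖p‖ := norm_pos_iff.2 hp
    set y := x + (r / ‖p‖) • p with hy
    have hxs : x ∈ s := hball (mem_closedBall_self hr.le)
    have hys : y ∈ s := by
      apply hball
      have : dist y x = r := by
        rw [hy, dist_eq_norm]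
        simp [norm_smul, abs_of_nonneg (div_nonneg hr.le hpn.le), div_mul_cancel₀ _ hpn.ne', hr.le]
      simp [mem_closedBall, this, hr.le]
    have h1 := aux_subgrad hconv hxs hys hg
    have h2 : (inner ℝ p (y - x) : ℝ) = r * ‖p‖ := by
      rw [hy, add_sub_cancel_left, real_inner_smul_right, real_inner_self_eq_norm_sq]
      field_simp
    rw [h2] at h1
    have h3 : g y - g x ≤ M := by
      have := hbd y hys; have := hbd x hxs; linarith
    rw [le_div_iff₀ hr]
    nlinarith


lemma aux_ae_diff {Ω : Set (EuclideanSpace ℝ (Fin n))} {g : EuclideanSpace ℝ (Fin n) → ℝ} {M : ℝ}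
    (hconv : ConvexOn ℝ Ω g) (hbd : ∀ a ∈ Ω, |g a| ≤ M) :
    ∀ᵐ x, x ∈ interior Ω → DifferentiableAt ℝ g x := by
  rw [ae_iff]
  set B := {x | ¬(x ∈ interior Ω → DifferentiableAt ℝ g x)} with hB
  have hBsub : ∀ x ∈ B, x ∈ interior Ω ∧ ¬ DifferentiableAt ℝ g x := by
    intro x hx; by_contra h; push_neg at h
    rcases Classical.em (x ∈ interior Ω) with h1 | h1
    · exact hx (fun _ => by by_contra hd; exact hd (by tauto))
    · exact hx (fun h2 => absurd h2 h1)
  apply measure_null_of_locally_null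
  intro x hx
  obtain ⟨hxi, hxd⟩ := hBsub x hx
  obtain ⟨ε, hε, hballs⟩ := Metric.isOpen_iff.1 isOpen_interior x hxi
  have hconv' : ConvexOn ℝ (ball x ε) g :=
    hconv.subset ((hballs.trans interior_subset)) (convex_ball x ε)
  have hlip := hconv'.lipschitzOnWith_of_abs_le (half_pos hε)
    (fun a ha => hbd a (hballs.trans interior_subset (mem_ball.2 ha)))
  have hεh : ε - ε/2 = ε/2 := by ring
  rw [hεh] at hlip
  have hae := hlip.ae_differentiableWithinAt_of_mem (μ := volume)
  refine ⟨B ∩ ball x (ε/2), inter_mem_nhdsWithin B (ball_mem_nhds x (half_pos hε)), ?_⟩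
  refine measure_mono_null ?_ (ae_iff.1 hae)
  rintro y ⟨hyB, hyb⟩
  simp only [mem_setOf_eq]
  exact fun hall => (hBsub y hyB).2 ((hall hyb).differentiableAt (isOpen_ball.mem_nhds hyb))

set_option maxHeartbeats 1000000 in
lemma aux_grad_tendsto {Ω : Set (EuclideanSpace ℝ (Fin n))}
    {u : ℕ → EuclideanSpace ℝ (Fin n) → ℝ} {ulim : EuclideanSpace ℝ (Fin n) → ℝ} {M : ℝ}
    (hM : 0 ≤ M)
    (huconv : ∀ k, ConvexOn ℝ Ω (u k))
    (hubd : ∀ k, ∀ x ∈ Ω, -M ≤ u k x ∧ u k x ≤ 0)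
    (hlimconv : ConvexOn ℝ Ω ulim)
    (hptwise : ∀ x ∈ interior Ω, Tendsto (fun k => u k x) atTop (𝓝 (ulim x)))
    {x : EuclideanSpace ℝ (Fin n)} (hx : x ∈ interior Ω)
    (hdu : ∀ k, DifferentiableAt ℝ (u k) x) (hdl : DifferentiableAt ℝ ulim x) :
    Tendsto (fun k => gradient (u k) x) atTop (𝓝 (gradient ulim x)) := by
  obtain ⟨ε, hε, hballs⟩ := Metric.isOpen_iff.1 isOpen_interior x hx
  have hcb : closedBall x (ε/2) ⊆ Ω := fun z hz =>
    interior_subset (hballs (mem_ball.2 (lt_of_le_of_lt (mem_closedBall.1 hz) (by linarith))))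
  have hr : (0:ℝ) < ε/2 := half_pos hε
  set p := fun k => gradient (u k) x with hp
  have hgrad : ∀ k, HasGradientAt (u k) (p k) x := fun k => (hdu k).hasGradientAt
  have hbound : ∀ k, ‖p k‖ ≤ M / (ε/2) := fun k =>
    aux_grad_bound (huconv k) hr hM hcb (hubd k) (hgrad k)
  -- the limit candidate
  set q0 := gradient ulim x with hq0
  apply tendsto_of_subseq_tendsto
  intro ns hns
  obtain ⟨q, hqmem, ms, hms, hconv_sub⟩ :=
    (isCompact_closedBall (0 : EuclideanSpace ℝ (Fin n)) (M / (ε/2))).tendsto_subseq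
      (fun k => mem_closedBall_zero_iff.2 (hbound (ns k)))
  refine ⟨ms, ?_⟩
  suffices hq : q = q0 by rw [← hq]; exact hconv_sub
  -- q is a subgradient of ulim at x
  have key : ∀ y ∈ interior Ω, (inner ℝ q (y - x) : ℝ) ≤ ulim y - ulim x := by
    intro y hy
    have hms' : Tendsto (fun j => ns (ms j)) atTop atTop := hns.comp hms.tendsto_atTop
    have h1 : Tendsto (fun j => (inner ℝ (p (ns (ms j))) (y - x) : ℝ)) atTop
        (𝓝 (inner ℝ q (y - x))) := hconv_sub.inner tendsto_const_nhds
    have h2 : Tendsto (fun j => u (ns (ms j)) y - u (ns (ms j)) x) atTop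
        (𝓝 (ulim y - ulim x)) :=
      ((hptwise y hy).comp hms').sub ((hptwise x hx).comp hms')
    exact le_of_tendsto_of_tendsto' h1 h2 (fun j =>
      aux_subgrad (huconv _) (interior_subset hx) (interior_subset hy) (hgrad _))
  -- uniqueness of the subgradient at a point of differentiability
  by_contra hne
  set w := q - q0 with hw
  have hwne : w ≠ 0 := sub_ne_zero.2 hne
  have hwpos : (0:ℝ) < ‖w‖ := norm_pos_iff.2 hwne
  have hlit : (fun y => ulim y - ulim x - (inner ℝ q0 (y - x) : ℝ)) =o[𝓝 x] fun y => y - x :=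
    hasGradientAt_iff_isLittleO.1 hdl.hasGradientAt
  have hev := hlit.def (half_pos hwpos)
  have hcurve : Tendsto (fun t : ℝ => x + t • w) (𝓝[>] (0:ℝ)) (𝓝 x) := by
    have hcont : Continuous fun t : ℝ => x + t • w := by continuity
    have h0 := hcont.tendsto 0
    simp only [zero_smul, add_zero] at h0
    exact h0.mono_left nhdsWithin_le_nhds
  have hev2 := hcurve.eventually hev
  have hmul : Tendsto (fun t : ℝ => t * ‖w‖) (𝓝[>] (0:ℝ)) (𝓝 0) := by
    have hcont : Continuous fun t : ℝ => t * ‖w‖ := by continuity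
    have h0 := hcont.tendsto 0
    simp only [zero_mul] at h0
    exact h0.mono_left nhdsWithin_le_nhds
  have hev3 : ∀ᶠ t : ℝ in 𝓝[>] 0, 0 < t ∧ t * ‖w‖ < ε :=
    (eventually_mem_nhdsWithin).and (hmul.eventually_lt_const hε)
  obtain ⟨t, hmain, ht0, htε⟩ := (hev2.and hev3).exists
  -- x + t • w ∈ interior Ω
  have hyint : x + t • w ∈ interior Ω := by
    apply hballs
    rw [mem_ball_iff_norm, add_sub_cancel_left, norm_smul, Real.norm_eq_abs, abs_of_pos ht0]
    exact htε
  have hkey := key (x + t • w) hyint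
  rw [add_sub_cancel_left] at hkey
  rw [add_sub_cancel_left] at hmain
  -- lower bound: t * ‖w‖^2 ≤ ulim (x+t•w) - ulim x - ⟪q0, t•w⟫
  have hlow : t * ‖w‖^2 ≤ ulim (x + t • w) - ulim x - (inner ℝ q0 (t • w) : ℝ) := by
    have e1 : (inner ℝ q (t • w) : ℝ) - inner ℝ q0 (t • w) = t * ‖w‖^2 := by
      rw [real_inner_smul_right, real_inner_smul_right, ← mul_sub,
        ← inner_sub_left, ← hw, real_inner_self_eq_norm_sq]
    nlinarith [hkey, e1]
  have hup : ulim (x + t • w) - ulim x - (inner ℝ q0 (t • w) : ℝ) ≤ (‖w‖/2) * (t * ‖w‖) := by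
    have := hmain
    rw [Real.norm_eq_abs] at this
    calc ulim (x + t • w) - ulim x - (inner ℝ q0 (t • w) : ℝ)
        ≤ |ulim (x + t • w) - ulim x - (inner ℝ q0 (t • w) : ℝ)| := le_abs_self _
      _ ≤ ‖w‖/2 * ‖t • w‖ := this
      _ = (‖w‖/2) * (t * ‖w‖) := by
          rw [norm_smul, Real.norm_eq_abs, abs_of_pos ht0]
  nlinarith [hlow, hup, hwpos, ht0, mul_pos ht0 (mul_pos hwpos hwpos)]


/-- If convex functions `u_k` on a convex body `Ω ⊂ ℝⁿ`, uniformly bounded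
between `−M` and `0`, converge pointwise on the interior of `Ω` to a convex function `u`
(also bounded between `−M` and `0`), and `f` is bounded and continuous, then
`∫_Ω f(∇u_k) → ∫_Ω f(∇u)`, all integrals being well defined and finite. -/
theorem newton_gradient_integral_convergence
    (n : ℕ) (hn : 1 ≤ n) (Ω : Set (EuclideanSpace ℝ (Fin n)))
    (hΩconv : Convex ℝ Ω) (hΩcomp : IsCompact Ω) (hΩint : (interior Ω).Nonempty)
    (M : ℝ) (hM : 0 ≤ M)
    (u : ℕ → EuclideanSpace ℝ (Fin n) → ℝ) (ulim : EuclideanSpace ℝ (Fin n) → ℝ)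
    (huconv : ∀ k, ConvexOn ℝ Ω (u k))
    (hubd : ∀ k, ∀ x ∈ Ω, -M ≤ u k x ∧ u k x ≤ 0)
    (hlimconv : ConvexOn ℝ Ω ulim)
    (hlimbd : ∀ x ∈ Ω, -M ≤ ulim x ∧ ulim x ≤ 0)
    (hptwise : ∀ x ∈ interior Ω,
      Filter.Tendsto (fun k => u k x) Filter.atTop (nhds (ulim x)))
    (f : EuclideanSpace ℝ (Fin n) → ℝ) (hf : Continuous f)
    (hfbdd : ∃ C, ∀ p, |f p| ≤ C) :
    (∀ k, MeasureTheory.IntegrableOn (fun x => f (gradient (u k) x)) Ω) ∧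
    MeasureTheory.IntegrableOn (fun x => f (gradient ulim x)) Ω ∧
    Filter.Tendsto (fun k => ∫ x in Ω, f (gradient (u k) x)) Filter.atTop
      (nhds (∫ x in Ω, f (gradient ulim x))) := by
  classical
  obtain ⟨C, hC⟩ := hfbdd
  have hΩmeas : MeasurableSet Ω := hΩcomp.isClosed.measurableSet
  have hmeasg : ∀ g : EuclideanSpace ℝ (Fin n) → ℝ, Measurable fun x => gradient g x := fun g =>
    ((InnerProductSpace.toDual ℝ (EuclideanSpace ℝ (Fin n))).symm.continuous.measurable).comp
      (measurable_fderiv ℝ g)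
  have hmeasf : ∀ g : EuclideanSpace ℝ (Fin n) → ℝ,
      AEStronglyMeasurable (fun x => f (gradient g x)) (volume.restrict Ω) :=
    fun g => ((hf.measurable.comp (hmeasg g)).aestronglyMeasurable)
  have hCint : MeasureTheory.IntegrableOn (fun _ => C) Ω volume :=
    MeasureTheory.integrableOn_const hΩcomp.measure_lt_top.ne
  have hint : ∀ g : EuclideanSpace ℝ (Fin n) → ℝ,
      MeasureTheory.IntegrableOn (fun x => f (gradient g x)) Ω := fun g =>
    MeasureTheory.Integrable.mono' hCint (hmeasf g)
      (Filter.Eventually.of_forall fun x => by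
        simpa [Real.norm_eq_abs] using hC (gradient g x))
  refine ⟨fun k => hint _, hint _, ?_⟩
  have hfront : volume (Ω \ interior Ω) = 0 := by
    have h1 : Ω \ interior Ω ⊆ frontier Ω := by
      rw [frontier, hΩcomp.isClosed.closure_eq]
    exact measure_mono_null h1 (hΩconv.addHaar_frontier volume)
  have hae1 : ∀ᵐ x : EuclideanSpace ℝ (Fin n), x ∈ Ω → x ∈ interior Ω := by
    rw [ae_iff]
    refine measure_mono_null ?_ hfront
    intro x hx
    simp only [mem_setOf_eq, Classical.not_imp] at hx
    exact ⟨hx.1, hx.2⟩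
  have habs : ∀ g : EuclideanSpace ℝ (Fin n) → ℝ, (∀ x ∈ Ω, -M ≤ g x ∧ g x ≤ 0) →
      ∀ a ∈ Ω, |g a| ≤ M := by
    intro g hg a ha
    rw [abs_le]
    have := hg a ha
    constructor <;> linarith [this.1, this.2]
  have hae2 := aux_ae_diff hlimconv (habs ulim hlimbd)
  have hae3 : ∀ᵐ x : EuclideanSpace ℝ (Fin n), ∀ k, x ∈ interior Ω → DifferentiableAt ℝ (u k) x :=
    ae_all_iff.2 fun k => aux_ae_diff (huconv k) (habs (u k) (hubd k))
  have haelim : ∀ᵐ x ∂(volume.restrict Ω),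
      Filter.Tendsto (fun k => f (gradient (u k) x)) atTop (𝓝 (f (gradient ulim x))) := by
    rw [ae_restrict_iff' hΩmeas]
    filter_upwards [hae1, hae2, hae3] with x h1 h2 h3 hxΩ
    exact (hf.tendsto _).comp
      (aux_grad_tendsto hM huconv hubd hlimconv hptwise (h1 hxΩ)
        (fun k => h3 k (h1 hxΩ)) (h2 (h1 hxΩ)))
  exact MeasureTheory.tendsto_integral_of_dominated_convergence (fun _ => C)
    (fun k => hmeasf (u k)) hCint
    (fun k => Filter.Eventually.of_forall fun x => by
      simpa [Real.norm_eq_abs] using hC (gradient (u k) x)) haelim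
end

section
/- Let Ω ⊂ ℝⁿ be a convex compact set with nonempty interior and M > 0. Then the Newton resistance functional J(u) = ∫_Ω 1/(1 + ‖∇u(x)‖²) dx attains its minimum over the class C_M: there exists a convex function û : Ω → ℝ with −M ≤ û ≤ 0 on Ω such that J(û) ≤ J(u) for every convex function u : Ω → ℝ with −M ≤ u ≤ 0 on Ω. -/
open Metric Set Filter MeasureTheory Topology
open scoped InnerProductSpace

set_option maxHeartbeats 1000000

section NewtonAux1
variable {E : Type*} [NormedAddCommGroup E] [InnerProductSpace ℝ E]




/-- One-sided slope bound for a bounded convex function: if `ball y δ ⊆ s` then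
`u y - u x ≤ (2M/δ) * ‖y - x‖`. -/
lemma newton_slope {s : Set E} {u : E → ℝ} (hu : ConvexOn ℝ s u)
    {M : ℝ} (hbd : ∀ z ∈ s, -M ≤ u z ∧ u z ≤ 0)
    {x y : E} (hx : x ∈ s) {δ : ℝ} (hδ : 0 < δ) (hball : Metric.ball y δ ⊆ s) :
    u y - u x ≤ (2 * M / δ) * ‖y - x‖ := by
  have hy : y ∈ s := hball (mem_ball_self hδ)
  have hM : 0 ≤ M := by have := hbd y hy; linarith [this.1, this.2]
  rcases eq_or_ne y x with rfl | hne
  · simp [div_nonneg, hM, hδ.le]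
  set a : ℝ := ‖y - x‖ with ha_def
  have ha : 0 < a := by
    simpa [ha_def] using sub_ne_zero.2 hne
  set c : ℝ := δ / 2 with hc_def
  have hc : 0 < c := by positivity
  set z : E := y + (c / a) • (y - x) with hz_def
  have hzball : z ∈ Metric.ball y δ := by
    have : ‖z - y‖ = c := by
      have : z - y = (c / a) • (y - x) := by rw [hz_def]; abel
      rw [this, norm_smul, Real.norm_eq_abs]
      rw [abs_of_nonneg (by positivity : (0:ℝ) ≤ c / a)]
      field_simp; exact ha_def.symm
    simp only [mem_ball, dist_eq_norm]
    rw [this]; simpa [hc_def] using hδ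
  have hz : z ∈ s := hball hzball
  have hac : 0 < a + c := by linarith
  have hcomb : u ((c / (a + c)) • x + (a / (a + c)) • z) ≤
      (c / (a + c)) * u x + (a / (a + c)) * u z :=
    hu.2 hx hz (by positivity) (by positivity) (by field_simp; try ring)
  have hpt : (c / (a + c)) • x + (a / (a + c)) • z = y := by
    rw [hz_def]
    match_scalars <;> field_simp <;> try ring
  rw [hpt] at hcomb
  have h1 : u y - u x ≤ (a / (a + c)) * (u z - u x) := by
    have hβ : c / (a + c) = 1 - a / (a + c) := by field_simp; try ring
    rw [hβ] at hcomb
    ring_nf at hcomb ⊢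
    linarith [hcomb]
  have h2 : u z - u x ≤ M := by have := hbd z hz; have := hbd x hx; linarith [hz, (hbd z hz).2, (hbd x hx).1]
  have h3 : (0:ℝ) ≤ a / (a + c) := by positivity
  have h4 : a / (a + c) ≤ a / c := by
    apply div_le_div_of_nonneg_left ha.le hc; linarith
  have h5 : u y - u x ≤ (a / c) * M := by
    rcases le_or_gt (u z - u x) 0 with h | h
    · have : (a / (a + c)) * (u z - u x) ≤ 0 := mul_nonpos_of_nonneg_of_nonpos h3 h
      have : u y - u x ≤ 0 := le_trans h1 this
      nlinarith
    · calc u y - u x ≤ (a / (a + c)) * (u z - u x) := h1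
        _ ≤ (a / c) * (u z - u x) := by nlinarith
        _ ≤ (a / c) * M := by nlinarith [div_nonneg ha.le hc.le]
  calc u y - u x ≤ (a / c) * M := h5
    _ = (2 * M / δ) * a := by rw [hc_def]; field_simp




private lemma newton_nhdsGT : 𝓝[>] (0:ℝ) ≤ 𝓝[≠] (0:ℝ) :=
  nhdsWithin_mono 0 fun t ht => ne_of_gt ht

private lemma newton_nhdsLT : 𝓝[<] (0:ℝ) ≤ 𝓝[≠] (0:ℝ) :=
  nhdsWithin_mono 0 fun t ht => ne_of_lt ht

/-- Two-sided Lipschitz estimate. -/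
lemma newton_dist {s : Set E} {u : E → ℝ} (hu : ConvexOn ℝ s u)
    {M : ℝ} (hbd : ∀ z ∈ s, -M ≤ u z ∧ u z ≤ 0)
    {x y : E} {δ : ℝ} (hδ : 0 < δ)
    (hbx : Metric.ball x δ ⊆ s) (hby : Metric.ball y δ ⊆ s) :
    |u y - u x| ≤ (2 * M / δ) * dist y x := by
  have hx : x ∈ s := hbx (mem_ball_self hδ)
  have h1 := newton_slope hu hbd hx hδ hby
  have h2 := newton_slope hu hbd (hby (mem_ball_self hδ)) hδ hbx
  have hd1 : dist y x = ‖y - x‖ := dist_eq_norm _ _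
  have hd2 : ‖x - y‖ = ‖y - x‖ := norm_sub_rev _ _
  rw [hd2] at h2
  rw [abs_le, hd1]
  constructor <;> linarith

/-- Subgradient inequality for a differentiable convex function. -/
lemma newton_subgrad {s : Set E} {u : E → ℝ} (hu : ConvexOn ℝ s u)
    {x y : E} (hx : x ∈ s) (hy : y ∈ s) (hd : DifferentiableAt ℝ u x) :
    fderiv ℝ u x (y - x) ≤ u y - u x := by
  set w := y - x with hw
  have hline : HasDerivAt (fun t : ℝ => x + t • w) w 0 := by
    simpa using ((hasDerivAt_id (0:ℝ)).smul_const w).const_add x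
  have hg : HasDerivAt (fun t : ℝ => u (x + t • w)) (fderiv ℝ u x w) 0 := by
    have h0 : x + (0:ℝ) • w = x := by simp
    have := (h0 ▸ hd.hasFDerivAt).comp_hasDerivAt (0:ℝ) hline
    simpa [Function.comp_def] using this
  have hslope : ∀ᶠ t in 𝓝[>] (0:ℝ),
      slope (fun t : ℝ => u (x + t • w)) 0 t ≤ u y - u x := by
    filter_upwards [Ioc_mem_nhdsGT (zero_lt_one)] with t ht
    have hcv : u (x + t • w) ≤ (1 - t) * u x + t * u y := by
      have hpt : x + t • w = (1 - t) • x + t • y := by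
        rw [hw]; match_scalars <;> ring
      rw [hpt]
      exact hu.2 hx hy (by linarith [ht.2]) ht.1.le (by ring)
    rw [slope_def_field]
    have h0 : x + (0:ℝ) • w = x := by simp
    rw [h0, sub_zero, div_le_iff₀ ht.1]
    nlinarith [hcv]
  have htend : Tendsto (slope (fun t : ℝ => u (x + t • w)) 0) (𝓝[>] (0:ℝ))
      (𝓝 (fderiv ℝ u x w)) :=
    (hasDerivAt_iff_tendsto_slope.1 hg).mono_left newton_nhdsGT
  exact le_of_tendsto htend hslope

/-- If `p` is a local subgradient of `u` at `x` and `u` is differentiable at `x`,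
then `⟪p, w⟫ = fderiv u x w` for every `w`. -/
lemma newton_unique {u : E → ℝ} {x p : E} {ε : ℝ} (hε : 0 < ε)
    (hd : DifferentiableAt ℝ u x)
    (h : ∀ y : E, ‖y - x‖ < ε → (inner ℝ p (y - x) : ℝ) ≤ u y - u x) (w : E) :
    (inner ℝ p w : ℝ) = fderiv ℝ u x w := by
  rcases eq_or_ne w 0 with rfl | hw0
  · simp
  have hwpos : (0:ℝ) < ‖w‖ := norm_pos_iff.2 hw0
  have hline : HasDerivAt (fun t : ℝ => x + t • w) w 0 := by
    simpa using ((hasDerivAt_id (0:ℝ)).smul_const w).const_add x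
  have hg : HasDerivAt (fun t : ℝ => u (x + t • w)) (fderiv ℝ u x w) 0 := by
    have h0 : x + (0:ℝ) • w = x := by simp
    have := (h0 ▸ hd.hasFDerivAt).comp_hasDerivAt (0:ℝ) hline
    simpa [Function.comp_def] using this
  have hsub : ∀ t : ℝ, |t| < ε / ‖w‖ → t * (inner ℝ p w : ℝ) ≤ u (x + t • w) - u x := by
    intro t ht
    have hnorm : ‖(x + t • w) - x‖ < ε := by
      have : ‖(x + t • w) - x‖ = |t| * ‖w‖ := by
        simp [add_sub_cancel_left, norm_smul]
      rw [this]
      calc |t| * ‖w‖ < (ε / ‖w‖) * ‖w‖ := by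
            exact mul_lt_mul_of_pos_right ht hwpos
        _ = ε := by field_simp
    have := h (x + t • w) hnorm
    have hip : (inner ℝ p ((x + t • w) - x) : ℝ) = t * inner ℝ p w := by
      simp [add_sub_cancel_left, inner_smul_right]
    rw [hip] at this
    exact this
  have hεw : 0 < ε / ‖w‖ := by positivity
  -- from the right
  have hge : (inner ℝ p w : ℝ) ≤ fderiv ℝ u x w := by
    have hev : ∀ᶠ t in 𝓝[>] (0:ℝ),
        (inner ℝ p w : ℝ) ≤ slope (fun t : ℝ => u (x + t • w)) 0 t := by
      filter_upwards [Ioo_mem_nhdsGT hεw] with t ht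
      have habs : |t| < ε / ‖w‖ := by
        rw [abs_of_pos ht.1]; exact ht.2
      have := hsub t habs
      rw [slope_def_field]
      have h0 : x + (0:ℝ) • w = x := by simp
      rw [h0, sub_zero, le_div_iff₀ ht.1]
      nlinarith [this]
    exact ge_of_tendsto ((hasDerivAt_iff_tendsto_slope.1 hg).mono_left
      newton_nhdsGT) hev
  -- from the left
  have hle : fderiv ℝ u x w ≤ (inner ℝ p w : ℝ) := by
    have hev : ∀ᶠ t in 𝓝[<] (0:ℝ),
        slope (fun t : ℝ => u (x + t • w)) 0 t ≤ (inner ℝ p w : ℝ) := by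
      filter_upwards [Ioo_mem_nhdsLT (neg_lt_zero.2 hεw)] with t ht
      have habs : |t| < ε / ‖w‖ := by
        rw [abs_of_neg ht.2]; linarith [ht.1]
      have := hsub t habs
      rw [slope_def_field]
      have h0 : x + (0:ℝ) • w = x := by simp
      rw [h0, sub_zero, div_le_iff_of_neg ht.2]
      nlinarith [this]
    exact le_of_tendsto ((hasDerivAt_iff_tendsto_slope.1 hg).mono_left
      newton_nhdsLT) hev
  linarith

end NewtonAux1

section NewtonAux3
variable {E : Type*} [NormedAddCommGroup E] [InnerProductSpace ℝ E] [CompleteSpace E]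



lemma newton_gradient_norm (f : E → ℝ) (x : E) :
    ‖gradient f x‖ = ‖fderiv ℝ f x‖ := by
  rw [gradient]
  exact LinearIsometryEquiv.norm_map _ _

lemma newton_gradient_inner (f : E → ℝ) (x w : E) :
    (inner ℝ (gradient f x) w : ℝ) = fderiv ℝ f x w := by
  rw [gradient]
  exact InnerProductSpace.toDual_symm_apply

/-- A pointwise limit of convex functions is convex. -/
lemma newton_limit_convexOn {s : Set E} (hs : Convex ℝ s) {f : ℕ → E → ℝ} {g : E → ℝ}
    (hf : ∀ k, ConvexOn ℝ s (f k))
    (hlim : ∀ x ∈ s, Tendsto (fun k => f k x) atTop (𝓝 (g x))) :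
    ConvexOn ℝ s g := by
  refine ⟨hs, fun x hx y hy a b ha hb hab => ?_⟩
  exact le_of_tendsto_of_tendsto' (hlim _ (hs hx hy ha hb hab))
    (((hlim x hx).const_mul a).add ((hlim y hy).const_mul b))
    (fun k => (hf k).2 hx hy ha hb hab)

/-- Extension inequality: convex on the interior, nonpositive, gives the convexity
inequality with a boundary point (where the extension takes value `0`). -/
lemma newton_ext {s : Set E} (hconv : Convex ℝ s) {uh : E → ℝ}
    (hco : ConvexOn ℝ (interior s) uh) (hle : ∀ z ∈ interior s, uh z ≤ 0)
    {x y : E} (hx : x ∈ interior s) (hy : y ∈ s) {a b : ℝ}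
    (ha : 0 < a) (hb : 0 < b) (hab : a + b = 1) :
    uh (a • x + b • y) ≤ a * uh x := by
  have hb1 : b < 1 := by linarith
  have hzs : ∀ t : ℝ, 0 ≤ t → t < 1 → (1 - t) • x + t • y ∈ interior s := fun t ht0 ht1 =>
    hconv.combo_interior_closure_mem_interior hx (subset_closure hy) (by linarith) ht0 (by ring)
  rw [show a = 1 - b by linarith]
  have key : ∀ t : ℝ, b < t → t < 1 →
      uh ((1 - b) • x + b • y) ≤ (1 - b / t) * uh x := by
    intro t hbt ht1
    have ht0 : 0 < t := lt_trans hb hbt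
    have hzt : (1 - t) • x + t • y ∈ interior s := hzs t ht0.le ht1
    have hbt1 : b / t < 1 := (div_lt_one ht0).2 hbt
    have hpt : (1 - b / t) • x + (b / t) • ((1 - t) • x + t • y) = (1 - b) • x + b • y := by
      match_scalars <;> field_simp <;> try ring
    have hc1 : (0:ℝ) ≤ 1 - b / t := by linarith
    have hc2 : (0:ℝ) ≤ b / t := by positivity
    have hc3 : (1 - b / t) + b / t = 1 := by ring
    have := hco.2 hx hzt hc1 hc2 hc3
    rw [hpt] at this
    calc uh ((1 - b) • x + b • y) ≤ (1 - b / t) * uh x + (b / t) * uh ((1 - t) • x + t • y) :=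
          this
      _ ≤ (1 - b / t) * uh x := by
          nlinarith [hle _ hzt, div_nonneg hb.le ht0.le]
  have htendsto : Tendsto (fun t : ℝ => (1 - b / t) * uh x) (𝓝[<] (1:ℝ))
      (𝓝 ((1 - b) * uh x)) := by
    have hc : ContinuousAt (fun t : ℝ => (1 - b / t) * uh x) 1 := by
      have : ContinuousAt (fun t : ℝ => b / t) 1 :=
        (continuousAt_const.div continuousAt_id one_ne_zero)
      exact (continuousAt_const.sub this).mul continuousAt_const
    have := hc.tendsto.mono_left (nhdsWithin_le_nhds (s := Iio (1:ℝ)))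
    simpa using this
  refine ge_of_tendsto htendsto ?_
  filter_upwards [Ioo_mem_nhdsLT hb1] with t ht
  exact key t ht.1 ht.2

end NewtonAux3

section NewtonAux4
variable {E : Type*} [NormedAddCommGroup E] [InnerProductSpace ℝ E] [FiniteDimensional ℝ E]
  [MeasurableSpace E] [BorelSpace E]



/-- Rademacher wrapper: a function satisfying the uniform local Lipschitz estimate on `Ω`
is differentiable a.e. on the interior. -/
lemma newton_ae_diff {Ω : Set E} (hne : Ωᶜ.Nonempty) (μ : Measure E) [μ.IsAddHaarMeasure]
    {w : E → ℝ} {M : ℝ} (hM : 0 < M)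
    (hw : ∀ δ : ℝ, 0 < δ → ∀ x y, Metric.ball x δ ⊆ Ω → Metric.ball y δ ⊆ Ω →
      |w y - w x| ≤ (2 * M / δ) * dist y x) :
    ∀ᵐ x ∂μ, x ∈ interior Ω → DifferentiableAt ℝ w x := by
  set U : ℕ → Set E := fun m => {x | 1 / (m + 1 : ℝ) < Metric.infDist x Ωᶜ} with hU
  have hm1 : ∀ m : ℕ, (0:ℝ) < 1 / (m + 1 : ℝ) := fun m => by positivity
  have hUopen : ∀ m, IsOpen (U m) := fun m =>
    isOpen_lt continuous_const (continuous_infDist_pt _)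
  have hUball : ∀ m, ∀ x ∈ U m, Metric.ball x (1 / (m + 1 : ℝ)) ⊆ Ω := by
    intro m x hx y hy
    by_contra hyΩ
    have h1 : Metric.infDist x Ωᶜ ≤ dist x y := Metric.infDist_le_dist_of_mem hyΩ
    have h2 : dist x y < 1 / (m + 1 : ℝ) := by rwa [Metric.mem_ball, dist_comm] at hy
    have h3 : 1 / (m + 1 : ℝ) < Metric.infDist x Ωᶜ := hx
    linarith
  have hUint : ∀ m, U m ⊆ interior Ω := fun m x hx =>
    interior_maximal (hUball m x hx) Metric.isOpen_ball (Metric.mem_ball_self (hm1 m))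
  have hcover : interior Ω ⊆ ⋃ m, U m := by
    intro x hx
    have hxnc : x ∉ closure Ωᶜ := by
      rw [closure_compl]
      simpa using hx
    have hpos : 0 < Metric.infDist x (closure Ωᶜ) :=
      (isClosed_closure.notMem_iff_infDist_pos (hne.mono subset_closure)).1 hxnc
    rw [Metric.infDist_closure] at hpos
    obtain ⟨m, hm⟩ := exists_nat_one_div_lt hpos
    exact mem_iUnion.2 ⟨m, by simpa [hU, mem_setOf_eq] using hm⟩
  have hlip : ∀ m : ℕ, LipschitzOnWith (2 * M * (m + 1) : ℝ).toNNReal w (U m) := by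
    intro m
    apply LipschitzOnWith.of_dist_le_mul
    intro x hx y hy
    have := hw (1 / (m + 1 : ℝ)) (hm1 m) y x (hUball m y hy) (hUball m x hx)
    rw [Real.dist_eq, Real.coe_toNNReal _ (by positivity)]
    calc |w x - w y| ≤ 2 * M / (1 / (m + 1 : ℝ)) * dist x y := this
      _ = 2 * M * (m + 1) * dist x y := by
          rw [div_div_eq_mul_div, div_one]
  have hae : ∀ m : ℕ, ∀ᵐ x ∂μ, x ∈ U m → DifferentiableAt ℝ w x := by
    intro m
    filter_upwards [(hlip m).ae_differentiableWithinAt_of_mem (μ := μ)] with x hx hxU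
    exact (hx hxU).differentiableAt ((hUopen m).mem_nhds hxU)
  filter_upwards [ae_all_iff.2 hae] with x hx hxint
  obtain ⟨m, hm⟩ := mem_iUnion.1 (hcover hxint)
  exact hx m hm

end NewtonAux4

section NewtonAux5
variable {E : Type*} [NormedAddCommGroup E] [InnerProductSpace ℝ E] [FiniteDimensional ℝ E]





/-- Local Lipschitz estimate around an interior point, for any member of the class. -/
lemma newton_lip_ball {Ω : Set E} {u : E → ℝ} (hu : ConvexOn ℝ Ω u)
    {M : ℝ} (hbd : ∀ z ∈ Ω, -M ≤ u z ∧ u z ≤ 0)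
    {x : E} {δ : ℝ} (hδ : 0 < δ) (hball : Metric.ball x δ ⊆ Ω) :
    LipschitzOnWith (4 * M / δ).toNNReal u (Metric.ball x (δ / 4)) := by
  have hM : 0 ≤ M := by
    have := hbd x (hball (mem_ball_self hδ)); linarith [this.1, this.2]
  apply LipschitzOnWith.of_dist_le_mul
  intro y hy z hz
  have hby : Metric.ball y (δ / 2) ⊆ Ω := by
    intro y' hy'
    apply hball
    calc dist y' x ≤ dist y' y + dist y x := dist_triangle _ _ _
      _ < δ / 2 + δ / 4 := add_lt_add hy' hy
      _ < δ := by linarith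
  have hbz : Metric.ball z (δ / 2) ⊆ Ω := by
    intro z' hz'
    apply hball
    calc dist z' x ≤ dist z' z + dist z x := dist_triangle _ _ _
      _ < δ / 2 + δ / 4 := add_lt_add hz' hz
      _ < δ := by linarith
  have := newton_dist hu hbd (by positivity : (0:ℝ) < δ / 2) hbz hby
  rw [Real.dist_eq, Real.coe_toNNReal _ (by positivity)]
  calc |u y - u z| ≤ 2 * M / (δ / 2) * dist y z := this
    _ = 4 * M / δ * dist y z := by rw [div_div_eq_mul_div]; ring_nf
  -- note : 2*M/(δ/2) = 4*M/δ

/-- Gradient bound. -/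
lemma newton_grad_bound {Ω : Set E} {u : E → ℝ} (hu : ConvexOn ℝ Ω u)
    {M : ℝ} (hbd : ∀ z ∈ Ω, -M ≤ u z ∧ u z ≤ 0)
    {x : E} {δ : ℝ} (hδ : 0 < δ) (hball : Metric.ball x δ ⊆ Ω) :
    ‖gradient u x‖ ≤ 4 * M / δ := by
  have hM : 0 ≤ M := by
    have := hbd x (hball (mem_ball_self hδ)); linarith [this.1, this.2]
  rw [newton_gradient_norm]
  have := norm_fderiv_le_of_lipschitzOn ℝ
    (Metric.ball_mem_nhds x (by positivity : (0:ℝ) < δ / 4))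
    (newton_lip_ball hu hbd hδ hball)
  rwa [Real.coe_toNNReal _ (by positivity)] at this

/-- Core: gradients of a pointwise-converging sequence of convex functions converge at
differentiability points. -/
lemma newton_grad_tendsto {Ω : Set E} {M : ℝ}
    {v : ℕ → E → ℝ} (hvconv : ∀ k, ConvexOn ℝ Ω (v k))
    (hvbd : ∀ k, ∀ z ∈ Ω, -M ≤ v k z ∧ v k z ≤ 0)
    {uh : E → ℝ}
    (hlim : ∀ y ∈ interior Ω, Tendsto (fun k => v k y) atTop (𝓝 (uh y)))
    {x : E} (hx : x ∈ interior Ω)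
    (hdv : ∀ k, DifferentiableAt ℝ (v k) x) (hdu : DifferentiableAt ℝ uh x) :
    Tendsto (fun k => gradient (v k) x) atTop (𝓝 (gradient uh x)) := by
  obtain ⟨δ, hδ, hball⟩ := Metric.isOpen_iff.1 isOpen_interior x hx
  have hballΩ : Metric.ball x δ ⊆ Ω := hball.trans interior_subset
  have hbound : ∀ k, gradient (v k) x ∈ Metric.closedBall (0:E) (4 * M / δ) := by
    intro k
    rw [Metric.mem_closedBall, dist_zero_right]
    exact newton_grad_bound (hvconv k) (hvbd k) hδ hballΩ
  apply tendsto_of_subseq_tendsto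
  intro ns hns
  obtain ⟨p, _hp, ms, hms, htend⟩ := (isCompact_closedBall (0:E) (4 * M / δ)).tendsto_subseq
    (fun i => hbound (ns i))
  have hcomp : Tendsto (fun i => ns (ms i)) atTop atTop := hns.comp hms.tendsto_atTop
  have hsubp : ∀ y ∈ interior Ω, (inner ℝ p (y - x) : ℝ) ≤ uh y - uh x := by
    intro y hy
    have hineq : ∀ i, (inner ℝ (gradient (v (ns (ms i))) x) (y - x) : ℝ) ≤
        v (ns (ms i)) y - v (ns (ms i)) x := by
      intro i
      rw [newton_gradient_inner]
      exact newton_subgrad (hvconv _) (interior_subset hx) (interior_subset hy) (hdv _)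
    have hL : Tendsto (fun i => (inner ℝ (gradient (v (ns (ms i))) x) (y - x) : ℝ)) atTop
        (𝓝 (inner ℝ p (y - x) : ℝ)) := htend.inner tendsto_const_nhds
    have hR : Tendsto (fun i => v (ns (ms i)) y - v (ns (ms i)) x) atTop
        (𝓝 (uh y - uh x)) := ((hlim y hy).comp hcomp).sub ((hlim x hx).comp hcomp)
    exact le_of_tendsto_of_tendsto' hL hR hineq
  have hpG : p = gradient uh x := by
    apply ext_inner_right ℝ
    intro w
    rw [newton_gradient_inner]
    refine newton_unique hδ hdu (fun y hy => hsubp y ?_) w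
    exact hball (by rwa [Metric.mem_ball, dist_eq_norm])
  exact ⟨ms, by rw [← hpG]; exact htend⟩

end NewtonAux5

/-- The Newton resistance functional
`J(u) = ∫_Ω 1/(1 + ‖∇u(x)‖²) dx` attains its minimum over the class `C_M` of convex
functions `u : Ω → ℝ` with `−M ≤ u ≤ 0` on `Ω`. -/




theorem newton_resistance_min_exists
    (n : ℕ) (hn : 1 ≤ n) (Ω : Set (EuclideanSpace ℝ (Fin n)))
    (hΩconv : Convex ℝ Ω) (hΩcomp : IsCompact Ω) (hΩint : (interior Ω).Nonempty)
    (M : ℝ) (hM : 0 < M) :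
    ∃ uhat : EuclideanSpace ℝ (Fin n) → ℝ,
      (ConvexOn ℝ Ω uhat ∧ ∀ x ∈ Ω, -M ≤ uhat x ∧ uhat x ≤ 0) ∧
      ∀ u : EuclideanSpace ℝ (Fin n) → ℝ,
        (ConvexOn ℝ Ω u ∧ ∀ x ∈ Ω, -M ≤ u x ∧ u x ≤ 0) →
        (∫ x in Ω, 1 / (1 + ‖gradient uhat x‖ ^ 2)) ≤
          ∫ x in Ω, 1 / (1 + ‖gradient u x‖ ^ 2) := by
  classical
  haveI : Nonempty (Fin n) := ⟨⟨0, hn⟩⟩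
  set C : Set ((EuclideanSpace ℝ (Fin n)) → ℝ) := {u | ConvexOn ℝ Ω u ∧ ∀ x ∈ Ω, -M ≤ u x ∧ u x ≤ 0} with hC
  set J : ((EuclideanSpace ℝ (Fin n)) → ℝ) → ℝ := fun u => ∫ x in Ω, 1 / (1 + ‖gradient u x‖ ^ 2) with hJ
  have hmeasΩ : MeasurableSet Ω := hΩcomp.isClosed.measurableSet
  have hJ0 : ∀ u : (EuclideanSpace ℝ (Fin n)) → ℝ, 0 ≤ J u := by
    intro u
    apply integral_nonneg
    intro x
    positivity
  have h0C : (fun _ : (EuclideanSpace ℝ (Fin n)) => (0:ℝ)) ∈ C := by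
    refine ⟨convexOn_const 0 hΩconv, fun x _ => ⟨by simp; linarith, by simp⟩⟩
  set S : Set ℝ := J '' C with hS
  have hSne : S.Nonempty := ⟨J (fun _ => 0), ⟨_, h0C, rfl⟩⟩
  have hSbdd : BddBelow S := ⟨0, fun r ⟨u, _, hr⟩ => hr ▸ hJ0 u⟩
  set m : ℝ := sInf S with hm
  -- minimizing sequence
  have hseq : ∀ k : ℕ, ∃ w : (EuclideanSpace ℝ (Fin n)) → ℝ, w ∈ C ∧ J w < m + 1 / (k + 1) := by
    intro k
    have : m < m + 1 / (k + 1 : ℝ) := by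
      have : (0:ℝ) < 1 / (k + 1 : ℝ) := by positivity
      linarith
    obtain ⟨r, ⟨w, hwC, rfl⟩, hr⟩ := exists_lt_of_csInf_lt hSne this
    exact ⟨w, hwC, hr⟩
  choose u huC hJu using hseq
  have hJge : ∀ k, m ≤ J (u k) := fun k => csInf_le hSbdd ⟨u k, huC k, rfl⟩
  have hJm : Tendsto (fun k => J (u k)) atTop (𝓝 m) := by
    have h1 : Tendsto (fun k : ℕ => m + 1 / (k + 1 : ℝ)) atTop (𝓝 (m + 0)) :=
      tendsto_const_nhds.add tendsto_one_div_add_atTop_nhds_zero_nat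
    rw [add_zero] at h1
    exact tendsto_of_tendsto_of_tendsto_of_le_of_le tendsto_const_nhds h1
      hJge (fun k => (hJu k).le)
  -- countable dense subset of the interior
  haveI := hΩint.to_subtype
  obtain ⟨D, hDc, hDd⟩ := TopologicalSpace.exists_countable_dense ↥(interior Ω)
  have hQne : (Subtype.val '' D : Set (EuclideanSpace ℝ (Fin n))).Nonempty := (hDd.nonempty.image _)
  obtain ⟨f, hf⟩ := (hDc.image Subtype.val).exists_eq_range hQne
  have hfmem : ∀ i, f i ∈ interior Ω := by
    intro i
    have : f i ∈ Subtype.val '' D := by rw [hf]; exact mem_range_self i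
    obtain ⟨q, _, hqi⟩ := this
    rw [← hqi]
    exact q.2
  have happrox : ∀ x ∈ interior Ω, ∀ ε : ℝ, 0 < ε → ∃ i, dist x (f i) < ε := by
    intro x hx ε hε
    obtain ⟨q, hq1, hq2⟩ := Metric.dense_iff.1 hDd ⟨x, hx⟩ ε hε
    have : (q : (EuclideanSpace ℝ (Fin n))) ∈ Subtype.val '' D := ⟨q, hq2, rfl⟩
    rw [hf] at this
    obtain ⟨i, hi⟩ := this
    refine ⟨i, ?_⟩
    rw [hi]
    have := Metric.mem_ball.1 hq1
    rw [Subtype.dist_eq] at this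
    rw [dist_comm]
    exact this
  -- extract a subsequence converging on the dense set
  have hyS : ∀ k, (fun i => u k (f i)) ∈ Set.pi univ (fun _ : ℕ => Icc (-M) (0:ℝ)) := by
    intro k i _
    exact (huC k).2 (f i) (interior_subset (hfmem i))
  obtain ⟨L, _, φ, hφ, hφt⟩ :=
    (isCompact_univ_pi (fun _ : ℕ => isCompact_Icc)).tendsto_subseq hyS
  set v : ℕ → (EuclideanSpace ℝ (Fin n)) → ℝ := fun k => u (φ k) with hv
  have hvC : ∀ k, v k ∈ C := fun k => huC (φ k)
  have hvconv : ∀ k, ConvexOn ℝ Ω (v k) := fun k => (hvC k).1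
  have hvbd : ∀ k, ∀ z ∈ Ω, -M ≤ v k z ∧ v k z ≤ 0 := fun k => (hvC k).2
  have hJv : Tendsto (fun k => J (v k)) atTop (𝓝 m) := hJm.comp hφ.tendsto_atTop
  have hq : ∀ i, Tendsto (fun k => v k (f i)) atTop (𝓝 (L i)) := by
    intro i
    exact (tendsto_pi_nhds.1 hφt) i
  -- uniform local Lipschitz estimate for members of C
  have hlip : ∀ w ∈ C, ∀ δ : ℝ, 0 < δ → ∀ x y : (EuclideanSpace ℝ (Fin n)),
      Metric.ball x δ ⊆ Ω → Metric.ball y δ ⊆ Ω →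
      |w y - w x| ≤ (2 * M / δ) * dist y x := by
    intro w hw δ hδ x y hbx hby
    exact newton_dist hw.1 hw.2 hδ hbx hby
  -- convergence at every interior point
  have hCauchy : ∀ x ∈ interior Ω, ∃ l : ℝ, Tendsto (fun k => v k x) atTop (𝓝 l) := by
    intro x hx
    obtain ⟨δ, hδ, hball⟩ := Metric.isOpen_iff.1 isOpen_interior x hx
    have hballΩ : Metric.ball x δ ⊆ Ω := hball.trans interior_subset
    set K : ℝ := 4 * M / δ with hK
    have hK0 : (0:ℝ) < K := by positivity
    have hloc : ∀ w ∈ C, ∀ q : (EuclideanSpace ℝ (Fin n)), dist q x < δ / 4 →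
        |w q - w x| ≤ K * dist q x := by
      intro w hw q hqx
      have hbq : Metric.ball q (δ / 2) ⊆ Ω := by
        intro z hz
        apply hballΩ
        rw [Metric.mem_ball] at hz ⊢
        calc dist z x ≤ dist z q + dist q x := dist_triangle _ _ _
          _ < δ / 2 + δ / 4 := add_lt_add hz hqx
          _ < δ := by linarith
      have hbx : Metric.ball x (δ / 2) ⊆ Ω := by
        intro z hz
        apply hballΩ
        rw [Metric.mem_ball] at hz ⊢
        linarith
      have := hlip w hw (δ / 2) (by positivity) x q hbx hbq
      calc |w q - w x| ≤ 2 * M / (δ / 2) * dist q x := this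
        _ = K * dist q x := by rw [hK, div_div_eq_mul_div]; ring_nf
    apply cauchySeq_tendsto_of_complete
    rw [Metric.cauchySeq_iff]
    intro ε hε
    obtain ⟨i, hi⟩ := happrox x hx (min (δ / 4) (ε / (3 * K))) (by positivity)
    have hdi : dist x (f i) < δ / 4 := lt_of_lt_of_le hi (min_le_left _ _)
    have hdi2 : dist x (f i) < ε / (3 * K) := lt_of_lt_of_le hi (min_le_right _ _)
    obtain ⟨N, hN⟩ := Metric.cauchySeq_iff.1 (hq i).cauchySeq (ε / 3) (by positivity)
    refine ⟨N, fun j hj k hk => ?_⟩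
    have hqd : dist (f i) x < δ / 4 := by rwa [dist_comm] at hdi
    have h1 := hloc (v j) (hvC j) (f i) hqd
    have h2 := hloc (v k) (hvC k) (f i) hqd
    have h3 := hN j hj k hk
    rw [Real.dist_eq] at h3 ⊢
    have hKd : K * dist (f i) x < ε / 3 := by
      rw [dist_comm]
      calc K * dist x (f i) < K * (ε / (3 * K)) := mul_lt_mul_of_pos_left hdi2 hK0
        _ = ε / 3 := by field_simp
    have t1 : |v j x - v j (f i)| ≤ K * dist (f i) x := by
      rw [abs_sub_comm]; exact h1
    have t2 : |v k (f i) - v k x| ≤ K * dist (f i) x := h2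
    calc |v j x - v k x| ≤ |v j x - v j (f i)| + |v j (f i) - v k x| := abs_sub_le _ _ _
      _ ≤ |v j x - v j (f i)| + (|v j (f i) - v k (f i)| + |v k (f i) - v k x|) := by
          have := abs_sub_le (v j (f i)) (v k (f i)) (v k x)
          linarith
      _ < ε := by linarith
  set uh : (EuclideanSpace ℝ (Fin n)) → ℝ := fun x =>
    if h : ∃ l : ℝ, Tendsto (fun k => v k x) atTop (𝓝 l) then h.choose else 0 with huh
  have hlim : ∀ x ∈ interior Ω, Tendsto (fun k => v k x) atTop (𝓝 (uh x)) := by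
    intro x hx
    have h := hCauchy x hx
    simp only [huh, dif_pos h]
    exact h.choose_spec
  have hbduh : ∀ x ∈ interior Ω, -M ≤ uh x ∧ uh x ≤ 0 := by
    intro x hx
    constructor
    · exact ge_of_tendsto (hlim x hx)
        (Eventually.of_forall fun k => (hvbd k x (interior_subset hx)).1)
    · exact le_of_tendsto (hlim x hx)
        (Eventually.of_forall fun k => (hvbd k x (interior_subset hx)).2)
  have hconvuh : ConvexOn ℝ (interior Ω) uh :=
    newton_limit_convexOn hΩconv.interior
      (fun k => (hvconv k).subset interior_subset hΩconv.interior) hlim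
  -- the extension
  set uhat : (EuclideanSpace ℝ (Fin n)) → ℝ := fun x => if x ∈ interior Ω then uh x else 0 with huhat
  have huhat_int : ∀ x ∈ interior Ω, uhat x = uh x := fun x hx => if_pos hx
  have hbdhat : ∀ x ∈ Ω, -M ≤ uhat x ∧ uhat x ≤ 0 := by
    intro x hx
    by_cases h : x ∈ interior Ω
    · rw [huhat_int x h]; exact hbduh x h
    · simp only [huhat, if_neg h]
      exact ⟨by linarith, le_refl _⟩
  have hconvuhat : ConvexOn ℝ Ω uhat := by
    have hle0 : ∀ z ∈ interior Ω, uh z ≤ 0 := fun z hz => (hbduh z hz).2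
    refine ⟨hΩconv, fun x hx y hy a b ha hb hab => ?_⟩
    by_cases ha0 : a = 0
    · have hb1 : b = 1 := by linarith
      rw [ha0, hb1]; simp
    by_cases hb0 : b = 0
    · have ha1 : a = 1 := by linarith
      rw [hb0, ha1]; simp
    have ha' : 0 < a := lt_of_le_of_ne ha (Ne.symm ha0)
    have hb' : 0 < b := lt_of_le_of_ne hb (Ne.symm hb0)
    by_cases hxi : x ∈ interior Ω
    · by_cases hyi : y ∈ interior Ω
      · have hmem : a • x + b • y ∈ interior Ω := hΩconv.interior hxi hyi ha hb hab
        rw [huhat_int _ hmem, huhat_int _ hxi, huhat_int _ hyi]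
        exact hconvuh.2 hxi hyi ha hb hab
      · have hmem : a • x + b • y ∈ interior Ω :=
          hΩconv.combo_interior_closure_mem_interior hxi (subset_closure hy) ha' hb hab
        rw [huhat_int _ hmem, huhat_int _ hxi]
        have hext := newton_ext hΩconv hconvuh hle0 hxi hy ha' hb' hab
        have : uhat y = 0 := if_neg hyi
        rw [this]
        simp only [smul_eq_mul]
        linarith
    · by_cases hyi : y ∈ interior Ω
      · have hmem : b • y + a • x ∈ interior Ω :=
          hΩconv.combo_interior_closure_mem_interior hyi (subset_closure hx) hb' ha
            (by linarith)
        have hcomm : a • x + b • y = b • y + a • x := add_comm _ _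
        rw [hcomm, huhat_int _ hmem, huhat_int _ hyi]
        have hext := newton_ext hΩconv hconvuh hle0 hyi hx hb' ha' (by linarith)
        have : uhat x = 0 := if_neg hxi
        rw [this]
        simp only [smul_eq_mul]
        linarith
      · have hx0 : uhat x = 0 := if_neg hxi
        have hy0 : uhat y = 0 := if_neg hyi
        rw [hx0, hy0]
        by_cases hci : a • x + b • y ∈ interior Ω
        · rw [huhat_int _ hci]
          have := hle0 _ hci
          simp only [smul_eq_mul]
          linarith
        · have : uhat (a • x + b • y) = 0 := if_neg hci
          rw [this]
          simp
  -- null sets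
  have h_ae_int : ∀ᵐ x ∂(volume : Measure (EuclideanSpace ℝ (Fin n))), x ∈ Ω → x ∈ interior Ω := by
    have hfr : (volume : Measure (EuclideanSpace ℝ (Fin n))) (frontier Ω) = 0 :=
      hΩconv.addHaar_frontier volume
    rw [ae_iff]
    refine measure_mono_null ?_ hfr
    intro x hx
    simp only [mem_setOf_eq, _root_.not_imp] at hx
    rw [hΩcomp.isClosed.frontier_eq]
    exact ⟨hx.1, hx.2⟩
  have hΩc_ne : Ωᶜ.Nonempty := by
    rw [Set.nonempty_compl]
    exact hΩcomp.ne_univ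
  have hdiffv : ∀ k, ∀ᵐ x ∂(volume : Measure (EuclideanSpace ℝ (Fin n))),
      x ∈ interior Ω → DifferentiableAt ℝ (v k) x := by
    intro k
    exact newton_ae_diff hΩc_ne volume hM (hlip (v k) (hvC k))
  have hdiffu : ∀ᵐ x ∂(volume : Measure (EuclideanSpace ℝ (Fin n))), x ∈ interior Ω → DifferentiableAt ℝ uh x := by
    apply newton_ae_diff hΩc_ne volume hM
    intro δ hδ x y hbx hby
    have hxint : x ∈ interior Ω :=
      interior_maximal hbx Metric.isOpen_ball (Metric.mem_ball_self hδ)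
    have hyint : y ∈ interior Ω :=
      interior_maximal hby Metric.isOpen_ball (Metric.mem_ball_self hδ)
    have habs : Tendsto (fun k => |v k y - v k x|) atTop (𝓝 (|uh y - uh x|)) :=
      ((hlim y hyint).sub (hlim x hxint)).abs
    exact le_of_tendsto habs
      (Eventually.of_forall fun k => hlip (v k) (hvC k) δ hδ x y hbx hby)
  -- a.e. convergence of the integrands
  have hgradae : ∀ᵐ x ∂((volume : Measure (EuclideanSpace ℝ (Fin n))).restrict Ω),
      Tendsto (fun k => 1 / (1 + ‖gradient (v k) x‖ ^ 2)) atTop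
        (𝓝 (1 / (1 + ‖gradient uhat x‖ ^ 2))) := by
    rw [ae_restrict_iff' hmeasΩ]
    filter_upwards [h_ae_int, ae_all_iff.2 hdiffv, hdiffu] with x h1 h2 h3 hxΩ
    have hxint : x ∈ interior Ω := h1 hxΩ
    have hgt : Tendsto (fun k => gradient (v k) x) atTop (𝓝 (gradient uh x)) :=
      newton_grad_tendsto hvconv hvbd hlim hxint (fun k => h2 k hxint) (h3 hxint)
    have hEq : gradient uhat x = gradient uh x := by
      apply Filter.EventuallyEq.gradient_eq
      filter_upwards [isOpen_interior.mem_nhds hxint] with y hy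
      exact huhat_int y hy
    rw [hEq]
    have hden : Tendsto (fun k => 1 + ‖gradient (v k) x‖ ^ 2) atTop
        (𝓝 (1 + ‖gradient uh x‖ ^ 2)) :=
      tendsto_const_nhds.add ((hgt.norm).pow 2)
    exact tendsto_const_nhds.div hden (by positivity)
  -- measurability of integrands
  have hFmeas : ∀ w : (EuclideanSpace ℝ (Fin n)) → ℝ,
      AEStronglyMeasurable (fun x => 1 / (1 + ‖gradient w x‖ ^ 2))
        ((volume : Measure (EuclideanSpace ℝ (Fin n))).restrict Ω) := by
    intro w
    have h1 : Measurable (gradient w) := by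
      have : Measurable (fderiv ℝ w) := measurable_fderiv ℝ w
      exact ((InnerProductSpace.toDual ℝ (EuclideanSpace ℝ (Fin n))).symm.continuous.measurable).comp this
    have h2 : Continuous fun p : (EuclideanSpace ℝ (Fin n)) => 1 / (1 + ‖p‖ ^ 2) := by
      apply continuous_const.div
      · exact continuous_const.add ((continuous_norm).pow 2)
      · intro p; positivity
    exact ((h2.measurable).comp h1).aestronglyMeasurable
  -- dominated convergence
  have htendJ : Tendsto (fun k => J (v k)) atTop
      (𝓝 (∫ x in Ω, 1 / (1 + ‖gradient uhat x‖ ^ 2))) := by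
    apply tendsto_integral_of_dominated_convergence (fun _ => (1:ℝ))
      (fun k => hFmeas (v k))
      (integrableOn_const hΩcomp.measure_lt_top.ne)
      ?_ hgradae
    intro k
    apply Eventually.of_forall
    intro x
    rw [Real.norm_eq_abs, abs_of_pos (by positivity)]
    rw [div_le_one (by positivity)]
    nlinarith [sq_nonneg ‖gradient (v k) x‖]
  have huniq : (∫ x in Ω, 1 / (1 + ‖gradient uhat x‖ ^ 2)) = m :=
    tendsto_nhds_unique htendJ hJv
  refine ⟨uhat, ⟨hconvuhat, hbdhat⟩, fun w hw => ?_⟩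
  rw [huniq]
  exact csInf_le hSbdd ⟨w, hw, rfl⟩
end

section
/- Let U ⊂ ℝ² be a convex set with nonempty interior, t₀ < t₁, s₀ < s₁ real numbers, x₀, x₁ ∈ ℝ, and f ∈ C²(ℝ³, ℝ). Consider the problem of minimizing I(x) = ∫_{t₀}^{t₁} f(t, x(t), ẋ(t)) dt over convex functions x : [t₀, t₁] → ℝ with (t, x(t)) ∈ U for all t, x(t₀) = x₀, x(t₁) = x₁, right derivative ẋ(t₀+0) ≥ s₀ and left derivative ẋ(t₁−0) ≤ s₁. Suppose x̂ is an optimal solution of this problem, (t, x̂(t)) lies in the interior of U for all t ∈ (t₀, t₁), and the strong Legendre condition f_{ẋẋ}(t, x, ẋ) > 0 holds at every point of the graph Γ = {(t, x, ẋ) : t ∈ [t₀, t₁], x = x̂(t), ẋ ∈ ∂x̂(t)} ⊂ ℝ³, where ∂x̂(t) is the subdifferential of x̂ at t. Then x̂ ∈ C¹[t₀, t₁]. -/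
open Set Filter MeasureTheory Topology

namespace CM1

variable {g : ℝ → ℝ} {a b : ℝ}

/-- The right derivative candidate of `g` at `t` (inf of forward slopes up to `b`). -/
noncomputable def Rd (g : ℝ → ℝ) (b t : ℝ) : ℝ := sInf (slope g t '' Ioo t b)

/-- The left derivative candidate of `g` at `t` (sup of backward slopes down to `a`). -/
noncomputable def Ld (g : ℝ → ℝ) (a t : ℝ) : ℝ := sSup (slope g t '' Ioo a t)

lemma slope_mono (hg : ConvexOn ℝ (Icc a b) g) {t : ℝ} (ht : t ∈ Icc a b)
    {x y : ℝ} (hx : x ∈ Icc a b) (hy : y ∈ Icc a b) (hxt : x ≠ t) (hyt : y ≠ t) (hxy : x ≤ y) :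
    slope g t x ≤ slope g t y := by
  simp only [slope_def_field]
  exact hg.secant_mono ht hx hy hxt hyt hxy

lemma slope_monoOn (hg : ConvexOn ℝ (Icc a b) g) {t : ℝ} (ht : t ∈ Icc a b)
    {s : Set ℝ} (hs : s ⊆ Icc a b \ {t}) : MonotoneOn (slope g t) s := fun x hx y hy hxy =>
  slope_mono hg ht (hs hx).1 (hs hy).1 (hs hx).2 (hs hy).2 hxy

lemma bddBelow_slopes (hg : ConvexOn ℝ (Icc a b) g) {t : ℝ} (ht : t ∈ Ioo a b) :
    BddBelow (slope g t '' Ioo t b) := by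
  refine ⟨slope g t a, ?_⟩
  rintro _ ⟨u, hu, rfl⟩
  exact slope_mono hg (Ioo_subset_Icc_self ht) ⟨le_refl a, (ht.1.trans ht.2).le⟩
    ⟨(ht.1.trans hu.1).le, hu.2.le⟩ (ne_of_lt ht.1) (ne_of_gt hu.1) ((ht.1.trans hu.1).le)

lemma bddAbove_slopes (hg : ConvexOn ℝ (Icc a b) g) {t : ℝ} (ht : t ∈ Ioo a b) :
    BddAbove (slope g t '' Ioo a t) := by
  refine ⟨slope g t b, ?_⟩
  rintro _ ⟨s, hs, rfl⟩
  exact slope_mono hg (Ioo_subset_Icc_self ht) ⟨hs.1.le, (hs.2.trans ht.2).le⟩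
    ⟨(ht.1.trans ht.2).le, le_refl b⟩ (ne_of_lt hs.2) (ne_of_gt ht.2) ((hs.2.trans ht.2).le)

lemma Rd_le_slope (hg : ConvexOn ℝ (Icc a b) g) {t : ℝ} (ht : t ∈ Ioo a b)
    {u : ℝ} (hu : u ∈ Ioc t b) : Rd g b t ≤ slope g t u := by
  rcases lt_or_eq_of_le hu.2 with h | h
  · exact csInf_le (bddBelow_slopes hg ht) (mem_image_of_mem _ ⟨hu.1, h⟩)
  · obtain ⟨v, hv⟩ := nonempty_Ioo.2 hu.1
    refine le_trans (csInf_le (bddBelow_slopes hg ht) (mem_image_of_mem _ ⟨hv.1, hv.2.trans_le hu.2⟩)) ?_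
    subst h
    exact slope_mono hg (Ioo_subset_Icc_self ht) ⟨(ht.1.trans hv.1).le, (hv.2.trans_le hu.2).le⟩
      ⟨(ht.1.trans hu.1).le, le_refl _⟩ (ne_of_gt hv.1) (ne_of_gt hu.1) hv.2.le

lemma slope_le_Ld (hg : ConvexOn ℝ (Icc a b) g) {t : ℝ} (ht : t ∈ Ioo a b)
    {s : ℝ} (hs : s ∈ Ico a t) : slope g t s ≤ Ld g a t := by
  rcases lt_or_eq_of_le hs.1 with h | h
  · exact le_csSup (bddAbove_slopes hg ht) (mem_image_of_mem _ ⟨h, hs.2⟩)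
  · obtain ⟨v, hv⟩ := nonempty_Ioo.2 hs.2
    refine le_trans ?_ (le_csSup (bddAbove_slopes hg ht) (mem_image_of_mem _ ⟨hs.1.trans_lt hv.1, hv.2⟩))
    subst h
    exact slope_mono hg (Ioo_subset_Icc_self ht) ⟨le_refl _, (ht.1.trans ht.2).le⟩
      ⟨hv.1.le, (hv.2.trans ht.2).le⟩ (ne_of_lt hs.2) (ne_of_lt hv.2) hv.1.le

lemma le_Rd (hg : ConvexOn ℝ (Icc a b) g) {t : ℝ} (ht : t ∈ Ioo a b)
    {M : ℝ} (h : ∀ u ∈ Ioo t b, M ≤ slope g t u) : M ≤ Rd g b t := by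
  refine le_csInf ((nonempty_Ioo.2 ht.2).image _) ?_
  rintro _ ⟨u, hu, rfl⟩; exact h u hu

lemma Ld_le (hg : ConvexOn ℝ (Icc a b) g) {t : ℝ} (ht : t ∈ Ioo a b)
    {M : ℝ} (h : ∀ s ∈ Ioo a t, slope g t s ≤ M) : Ld g a t ≤ M := by
  refine csSup_le ((nonempty_Ioo.2 ht.1).image _) ?_
  rintro _ ⟨s, hs, rfl⟩; exact h s hs

lemma Ld_le_Rd (hg : ConvexOn ℝ (Icc a b) g) {t : ℝ} (ht : t ∈ Ioo a b) :
    Ld g a t ≤ Rd g b t := by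
  refine Ld_le hg ht fun s hs => le_Rd hg ht fun u hu => ?_
  exact slope_mono hg (Ioo_subset_Icc_self ht) ⟨hs.1.le, (hs.2.trans ht.2).le⟩
    ⟨(ht.1.trans hu.1).le, hu.2.le⟩ (ne_of_lt hs.2) (ne_of_gt hu.1) (hs.2.trans hu.1).le

lemma tendsto_slope_R (hg : ConvexOn ℝ (Icc a b) g) {t : ℝ} (ht : t ∈ Ioo a b) :
    Tendsto (slope g t) (𝓝[>] t) (𝓝 (Rd g b t)) :=
  MonotoneOn.tendsto_nhdsWithin_Ioo_right (nonempty_Ioo.2 ht.2)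
    (slope_monoOn hg (Ioo_subset_Icc_self ht) (fun u hu =>
      ⟨⟨(ht.1.trans hu.1).le, hu.2.le⟩, ne_of_gt hu.1⟩)) (bddBelow_slopes hg ht)

lemma tendsto_slope_L (hg : ConvexOn ℝ (Icc a b) g) {t : ℝ} (ht : t ∈ Ioo a b) :
    Tendsto (slope g t) (𝓝[<] t) (𝓝 (Ld g a t)) :=
  MonotoneOn.tendsto_nhdsWithin_Ioo_left (nonempty_Ioo.2 ht.1)
    (slope_monoOn hg (Ioo_subset_Icc_self ht) (fun u hu =>
      ⟨⟨hu.1.le, (hu.2.trans ht.2).le⟩, ne_of_lt hu.2⟩)) (bddAbove_slopes hg ht)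

lemma hasDerivWithinAt_R (hg : ConvexOn ℝ (Icc a b) g) {t : ℝ} (ht : t ∈ Ioo a b) :
    HasDerivWithinAt g (Rd g b t) (Icc t b) t := by
  rw [hasDerivWithinAt_iff_tendsto_slope]
  have : Icc t b \ {t} = Ioc t b := by
    rw [Icc_diff_left]  -- maybe name wrong
  rw [this, nhdsWithin_Ioc_eq_nhdsGT ht.2]
  exact tendsto_slope_R hg ht

lemma hasDerivWithinAt_L (hg : ConvexOn ℝ (Icc a b) g) {t : ℝ} (ht : t ∈ Ioo a b) :
    HasDerivWithinAt g (Ld g a t) (Icc a t) t := by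
  rw [hasDerivWithinAt_iff_tendsto_slope]
  have : Icc a t \ {t} = Ico a t := by
    rw [Icc_sdiff_right]
  rw [this, nhdsWithin_Ico_eq_nhdsLT ht.1]
  exact tendsto_slope_L hg ht


section Endpoints

lemma tendsto_slope_a (hab : a < b) {d₀ : ℝ} (h0 : HasDerivWithinAt g d₀ (Icc a b) a) :
    Tendsto (slope g a) (𝓝[>] a) (𝓝 d₀) := by
  have := hasDerivWithinAt_iff_tendsto_slope.1 h0
  rwa [Icc_diff_left, nhdsWithin_Ioc_eq_nhdsGT hab] at this

lemma tendsto_slope_b (hab : a < b) {d₁ : ℝ} (h1 : HasDerivWithinAt g d₁ (Icc a b) b) :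
    Tendsto (slope g b) (𝓝[<] b) (𝓝 d₁) := by
  have := hasDerivWithinAt_iff_tendsto_slope.1 h1
  rwa [Icc_sdiff_right, nhdsWithin_Ico_eq_nhdsLT hab] at this

lemma d0_le_slope (hg : ConvexOn ℝ (Icc a b) g) (hab : a < b) {d₀ : ℝ}
    (h0 : HasDerivWithinAt g d₀ (Icc a b) a) {u : ℝ} (hu : u ∈ Ioc a b) :
    d₀ ≤ slope g a u := by
  refine le_of_tendsto (tendsto_slope_a hab h0) ?_
  filter_upwards [Ioo_mem_nhdsGT_of_mem ⟨le_refl a, hu.1⟩] with v hv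
  exact slope_mono hg ⟨le_refl a, hab.le⟩ ⟨hv.1.le, (hv.2.trans_le hu.2).le⟩
    ⟨(hu.1).le, hu.2⟩ (ne_of_gt hv.1) (ne_of_gt hu.1) hv.2.le

lemma slope_le_d1 (hg : ConvexOn ℝ (Icc a b) g) (hab : a < b) {d₁ : ℝ}
    (h1 : HasDerivWithinAt g d₁ (Icc a b) b) {s : ℝ} (hs : s ∈ Ico a b) :
    slope g b s ≤ d₁ := by
  refine ge_of_tendsto (tendsto_slope_b hab h1) ?_
  filter_upwards [Ioo_mem_nhdsLT_of_mem ⟨hs.2, le_refl b⟩] with v hv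
  exact slope_mono hg ⟨hab.le, le_refl b⟩ ⟨hs.1, hs.2.le⟩
    ⟨(hs.1.trans_lt hv.1).le, hv.2.le⟩ (ne_of_lt hs.2) (ne_of_lt hv.2) hv.1.le

lemma d0_le_Ld (hg : ConvexOn ℝ (Icc a b) g) {d₀ : ℝ}
    (h0 : HasDerivWithinAt g d₀ (Icc a b) a) {t : ℝ} (ht : t ∈ Ioo a b) :
    d₀ ≤ Ld g a t := by
  have h1 : d₀ ≤ slope g a t := d0_le_slope hg (ht.1.trans ht.2) h0 ⟨ht.1, ht.2.le⟩
  have h2 : slope g t a ≤ Ld g a t := slope_le_Ld hg ht ⟨le_refl a, ht.1⟩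
  rw [slope_comm] at h2
  exact h1.trans h2

lemma Rd_le_d1 (hg : ConvexOn ℝ (Icc a b) g) {d₁ : ℝ}
    (h1 : HasDerivWithinAt g d₁ (Icc a b) b) {t : ℝ} (ht : t ∈ Ioo a b) :
    Rd g b t ≤ d₁ := by
  have h2 : Rd g b t ≤ slope g t b := Rd_le_slope hg ht ⟨ht.2, le_refl b⟩
  have h3 : slope g b t ≤ d₁ := slope_le_d1 hg (ht.1.trans ht.2) h1 ⟨ht.1.le, ht.2⟩
  rw [slope_comm] at h3
  exact h2.trans h3

lemma Rd_le_Ld_of_lt (hg : ConvexOn ℝ (Icc a b) g) {s t : ℝ} (hs : s ∈ Ioo a b)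
    (ht : t ∈ Ioo a b) (hst : s < t) : Rd g b s ≤ Ld g a t := by
  have h1 : Rd g b s ≤ slope g s t := Rd_le_slope hg hs ⟨hst, ht.2.le⟩
  have h2 : slope g t s ≤ Ld g a t := slope_le_Ld hg ht ⟨hs.1.le, hst⟩
  rw [slope_comm] at h2
  exact h1.trans h2

lemma subgrad (hg : ConvexOn ℝ (Icc a b) g) {t : ℝ} (ht : t ∈ Ioo a b) {d : ℝ}
    (hd : d ∈ Icc (Ld g a t) (Rd g b t)) : ∀ s ∈ Icc a b, g t + d * (s - t) ≤ g s := by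
  intro s hs
  rcases lt_trichotomy s t with h | h | h
  · have h1 : slope g t s ≤ d := (slope_le_Ld hg ht ⟨hs.1, h⟩).trans hd.1
    rw [slope_def_field, div_le_iff_of_neg (by linarith)] at h1
    linarith
  · subst h; simp
  · have h1 : d ≤ slope g t s := hd.2.trans (Rd_le_slope hg ht ⟨h, hs.2⟩)
    rw [slope_def_field, le_div_iff₀ (by linarith)] at h1
    linarith

lemma countable_corner (hg : ConvexOn ℝ (Icc a b) g) :
    {t ∈ Ioo a b | Ld g a t < Rd g b t}.Countable := by
  set S := {t ∈ Ioo a b | Ld g a t < Rd g b t}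
  have hq : ∀ t : S, ∃ q : ℚ, Ld g a t < (q : ℝ) ∧ (q : ℝ) < Rd g b t := by
    rintro ⟨t, ht⟩
    exact_mod_cast exists_rat_btwn ht.2
  choose q hq1 hq2 using hq
  have hinj : Function.Injective q := by
    rintro ⟨t, ht⟩ ⟨t', ht'⟩ h
    ext
    by_contra hne
    rcases lt_or_gt_of_ne hne with hlt | hlt
    · have := Rd_le_Ld_of_lt hg ht.1 ht'.1 hlt
      have := hq2 ⟨t, ht⟩; have := hq1 ⟨t', ht'⟩
      rw [h] at *
      linarith
    · have := Rd_le_Ld_of_lt hg ht'.1 ht.1 hlt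
      have := hq2 ⟨t', ht'⟩; have := hq1 ⟨t, ht⟩
      rw [h] at *
      linarith
  have : Countable S := hinj.countable
  exact Set.countable_coe_iff.mp this

lemma continuousWithinAt_interior (hg : ConvexOn ℝ (Icc a b) g) {t : ℝ} (ht : t ∈ Ioo a b) :
    ContinuousWithinAt g (Icc a b) t := by
  have h := ((hasDerivWithinAt_L hg ht).continuousWithinAt).union
    ((hasDerivWithinAt_R hg ht).continuousWithinAt)
  rwa [Icc_union_Icc_eq_Icc ht.1.le ht.2.le] at h

/-- key right-limit lemma -/
lemma right_lim (hg : ConvexOn ℝ (Icc a b) g) (hab : a < b) {t q : ℝ} (ht : t ∈ Ico a b)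
    (hq1 : ∀ u ∈ Ioc t b, q ≤ slope g t u)
    (hq2 : ∀ δ, 0 < δ → ∃ u ∈ Ioo t b, slope g t u < q + δ)
    (hcont : ContinuousWithinAt g (Icc a b) t)
    {δ : ℝ} (hδ : 0 < δ) :
    ∃ η > 0, ∀ s ∈ Ioo t (t + η), s ∈ Ioo a b → q ≤ Ld g a s ∧ Rd g b s < q + δ := by
  obtain ⟨u, hu, hufar⟩ := hq2 (δ / 2) (by linarith)
  have hcont' : ContinuousWithinAt (fun s => slope g u s) (Icc a b) t := by
    simp only [slope_def_field]
    exact ((hcont.sub continuousWithinAt_const).div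
      (continuousWithinAt_id.sub continuousWithinAt_const) (by simp [sub_ne_zero]; exact ne_of_lt hu.1))
  have hlim : slope g u t < q + δ := by
    rw [slope_comm]
    linarith
  have hev : ∀ᶠ s in 𝓝[Icc a b] t, slope g u s < q + δ :=
    hcont' (Iio_mem_nhds hlim)
  rw [eventually_iff, Metric.mem_nhdsWithin_iff] at hev
  obtain ⟨ε', hε', hball⟩ := hev
  refine ⟨min ε' (u - t), by simp [hε', hu.1, sub_pos], ?_⟩
  intro s hs hsab
  constructor
  · have h1 : q ≤ slope g t s := hq1 s ⟨hs.1, hsab.2.le⟩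
    have h2 : slope g s t ≤ Ld g a s := slope_le_Ld hg hsab ⟨ht.1, hs.1⟩
    rw [slope_comm] at h2
    exact h1.trans h2
  · have hsu : s < u := by
      have h4 := min_le_right ε' (u - t)
      have h5 := hs.2
      linarith
    have h1 : Rd g b s ≤ slope g s u := Rd_le_slope hg hsab ⟨hsu, hu.2.le⟩
    have h2 : slope g u s < q + δ := by
      refine hball ⟨?_, ⟨hsab.1.le, hsab.2.le⟩⟩
      have h3 : s - t < ε' := lt_of_lt_of_le (by linarith [hs.2]) (min_le_left _ _)
      rw [Metric.mem_ball, Real.dist_eq, abs_of_pos (by linarith [hs.1])]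
      exact h3
    rw [slope_comm] at h2
    exact lt_of_le_of_lt h1 h2

/-- key left-limit lemma -/
lemma left_lim (hg : ConvexOn ℝ (Icc a b) g) (hab : a < b) {t p : ℝ} (ht : t ∈ Ioc a b)
    (hp1 : ∀ s ∈ Ico a t, slope g t s ≤ p)
    (hp2 : ∀ δ, 0 < δ → ∃ s ∈ Ioo a t, p - δ < slope g t s)
    (hcont : ContinuousWithinAt g (Icc a b) t)
    {δ : ℝ} (hδ : 0 < δ) :
    ∃ η > 0, ∀ s ∈ Ioo (t - η) t, s ∈ Ioo a b → p - δ < Ld g a s ∧ Rd g b s ≤ p := by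
  obtain ⟨w, hw, hwfar⟩ := hp2 (δ / 2) (by linarith)
  have hcont' : ContinuousWithinAt (fun s => slope g w s) (Icc a b) t := by
    simp only [slope_def_field]
    exact ((hcont.sub continuousWithinAt_const).div
      (continuousWithinAt_id.sub continuousWithinAt_const) (by simp [sub_ne_zero]; exact ne_of_gt hw.2))
  have hlim : p - δ < slope g w t := by
    rw [slope_comm]
    linarith
  have hev : ∀ᶠ s in 𝓝[Icc a b] t, p - δ < slope g w s :=
    hcont' (Ioi_mem_nhds hlim)
  rw [eventually_iff, Metric.mem_nhdsWithin_iff] at hev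
  obtain ⟨ε', hε', hball⟩ := hev
  refine ⟨min ε' (t - w), by simp [hε', hw.2, sub_pos], ?_⟩
  intro s hs hsab
  constructor
  · have hws : w < s := by
      have : t - (t - w) < s := lt_of_le_of_lt (by simp [min_le_right]; linarith [min_le_right ε' (t-w)]) hs.1
      linarith
    have h1 : slope g s w ≤ Ld g a s := slope_le_Ld hg hsab ⟨hw.1.le, hws⟩
    have h2 : p - δ < slope g w s := by
      refine hball ⟨?_, ⟨hsab.1.le, hsab.2.le⟩⟩
      have h3 : t - s < ε' := lt_of_lt_of_le (by linarith [hs.1]) (min_le_left _ _)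
      rw [Metric.mem_ball, Real.dist_eq, abs_of_neg (by linarith [hs.2])]
      linarith
    rw [slope_comm] at h1
    exact h2.trans_le h1
  · have h1 : Rd g b s ≤ slope g s t := Rd_le_slope hg hsab ⟨hs.2, ht.2⟩
    have h2 : slope g t s ≤ p := hp1 s ⟨hsab.1.le, hs.2⟩
    rw [slope_comm] at h2
    exact h1.trans h2

end Endpoints


section Chord

lemma hasDerivWithinAt_of_eq (hg : ConvexOn ℝ (Icc a b) g) {t : ℝ} (ht : t ∈ Ioo a b)
    (h : Ld g a t = Rd g b t) : HasDerivWithinAt g (Rd g b t) (Icc a b) t := by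
  have hL := hasDerivWithinAt_L hg ht
  rw [h] at hL
  have := hL.union (hasDerivWithinAt_R hg ht)
  rwa [Icc_union_Icc_eq_Icc ht.1.le ht.2.le] at this

lemma derivWithin_eq_Rd (hg : ConvexOn ℝ (Icc a b) g) (hab : a < b) {t : ℝ} (ht : t ∈ Ioo a b)
    (h : Ld g a t = Rd g b t) : derivWithin g (Icc a b) t = Rd g b t :=
  (hasDerivWithinAt_of_eq hg ht h).derivWithin (uniqueDiffOn_Icc hab t (Ioo_subset_Icc_self ht))

variable (g) in
/-- The chord of `g` over `[c, d]`. -/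
noncomputable def chord (c d : ℝ) : ℝ → ℝ := fun t => g c + slope g c d * (t - c)

lemma chord_c (c d : ℝ) : chord g c d c = g c := by simp [chord]

lemma chord_d {c d : ℝ} (hcd : c < d) : chord g c d d = g d := by
  unfold chord
  rw [slope_def_field, div_mul_cancel₀ _ (sub_ne_zero.2 (ne_of_gt hcd))]
  ring

lemma chord_le_inside (hg : ConvexOn ℝ (Icc a b) g) {c d : ℝ} (hc : c ∈ Icc a b)
    (hd : d ∈ Icc a b) (hcd : c < d) {t : ℝ} (ht : t ∈ Icc c d) : g t ≤ chord g c d t := by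
  rcases eq_or_lt_of_le ht.1 with h | h
  · subst h; simp [chord]
  · have hs : slope g c t ≤ slope g c d :=
      slope_mono hg hc ⟨hc.1.trans h.le, ht.2.trans hd.2⟩ hd (ne_of_gt h) (ne_of_gt hcd) ht.2
    rw [slope_def_field, slope_def_field, div_le_div_iff₀ (by linarith) (by linarith)] at hs
    have hdc : (0:ℝ) < d - c := by linarith
    unfold chord
    rw [slope_def_field, ← sub_le_iff_le_add', div_mul_eq_mul_div, le_div_iff₀ hdc]
    linarith

lemma chord_ge_outside (hg : ConvexOn ℝ (Icc a b) g) {c d : ℝ} (hc : c ∈ Icc a b)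
    (hd : d ∈ Icc a b) (hcd : c < d) {t : ℝ} (ht : t ∈ Icc a b) (h : t ≤ c ∨ d ≤ t) :
    chord g c d t ≤ g t := by
  unfold chord
  rcases h with h | h
  · rcases eq_or_lt_of_le h with h' | h'
    · subst h'; simp
    · have hs : slope g c t ≤ slope g c d :=
        slope_mono hg hc ht hd (ne_of_lt h') (ne_of_gt hcd) (h'.le.trans hcd.le)
      rw [slope_def_field (f := g) (a := c) (b := t), div_le_iff_of_neg (by linarith : t - c < 0)] at hs
      linarith
  · rcases eq_or_lt_of_le h with h' | h'
    · subst h'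
      rw [slope_def_field, div_mul_cancel₀ _ (sub_ne_zero.2 (ne_of_gt hcd))]
      linarith
    · have hs : slope g c d ≤ slope g c t :=
        slope_mono hg hc hd ht (ne_of_gt hcd) (ne_of_gt (hcd.trans h')) h
      rw [slope_def_field (f := g) (a := c) (b := t), le_div_iff₀ (by linarith : (0:ℝ) < t - c)] at hs
      linarith

lemma chord_strict (hg : ConvexOn ℝ (Icc a b) g) {c d : ℝ} (hc : c ∈ Icc a b)
    (hd : d ∈ Icc a b) (hcd : c < d) {τ : ℝ} (hτ : τ ∈ Ioo c d) (hτab : τ ∈ Ioo a b)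
    (hpq : Ld g a τ < Rd g b τ) : ∀ t ∈ Ioo c d, g t < chord g c d t := by
  intro t htcd
  rcases lt_or_ge (g t) (chord g c d t) with h | h
  · exact h
  exfalso
  set m := slope g c d with hm
  set p := Ld g a τ with hp
  set q := Rd g b τ with hq
  have htI : t ∈ Icc a b := ⟨hc.1.trans htcd.1.le, htcd.2.le.trans hd.2⟩
  have heq : g t = g c + m * (t - c) :=
    le_antisymm (chord_le_inside hg hc hd hcd (Ioo_subset_Icc_self htcd)) h
  have hmd : m * (d - c) = g d - g c := by
    rw [hm, slope_def_field, div_mul_cancel₀ _ (sub_ne_zero.2 (ne_of_gt hcd))]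
  have hgd : g d - g t = m * (d - t) := by
    rw [heq]; linarith [hmd]
  have hpm : m ≤ p := by
    rcases lt_trichotomy t τ with hlt | heqt | hgt
    · have h3 := hg.slope_mono_adjacent hc (Ioo_subset_Icc_self hτab) htcd.1 hlt
      rw [div_le_div_iff₀ (by linarith [htcd.1] : (0:ℝ) < t - c) (by linarith : (0:ℝ) < τ - t)] at h3
      have h4 : slope g τ t ≤ p := slope_le_Ld hg hτab ⟨htI.1, hlt⟩
      rw [slope_def_field, div_le_iff_of_neg (by linarith : t - τ < 0)] at h4
      have k1 : m * (τ - t) ≤ g τ - g t := by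
        refine le_of_mul_le_mul_right ?_ (by linarith [htcd.1] : (0:ℝ) < t - c)
        calc m * (τ - t) * (t - c) = (g t - g c) * (τ - t) := by rw [heq]; ring
          _ ≤ (g τ - g t) * (t - c) := h3
      refine le_of_mul_le_mul_right ?_ (by linarith : (0:ℝ) < τ - t)
      linarith
    · subst heqt
      refine le_of_mul_le_mul_right ?_ (by linarith [hτ.1] : (0:ℝ) < t - c)
      have h4 : slope g t c ≤ p := slope_le_Ld hg hτab ⟨hc.1, hτ.1⟩
      rw [slope_def_field, div_le_iff_of_neg (by linarith [hτ.1] : c - t < 0)] at h4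
      linarith [heq]
    · have h3 := hg.slope_mono_adjacent (Ioo_subset_Icc_self hτab) hd hgt htcd.2
      rw [div_le_div_iff₀ (by linarith : (0:ℝ) < t - τ) (by linarith [htcd.2] : (0:ℝ) < d - t)] at h3
      have k1 : g t - g τ ≤ m * (t - τ) := by
        refine le_of_mul_le_mul_right ?_ (by linarith [htcd.2] : (0:ℝ) < d - t)
        calc (g t - g τ) * (d - t) ≤ (g d - g t) * (t - τ) := h3
          _ = m * (t - τ) * (d - t) := by rw [hgd]; ring
      have h4 : slope g τ c ≤ p := slope_le_Ld hg hτab ⟨hc.1, hτ.1⟩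
      rw [slope_def_field, div_le_iff_of_neg (by linarith [hτ.1] : c - τ < 0)] at h4
      refine le_of_mul_le_mul_right ?_ (by linarith [hτ.1] : (0:ℝ) < τ - c)
      linarith [heq]
  have hqm : q ≤ m := by
    rcases lt_trichotomy τ t with hlt | heqt | hgt
    · have h5 : q ≤ slope g τ t := Rd_le_slope hg hτab ⟨hlt, htI.2⟩
      rw [slope_def_field, le_div_iff₀ (by linarith : (0:ℝ) < t - τ)] at h5
      have h3 := hg.slope_mono_adjacent (Ioo_subset_Icc_self hτab) hd hlt htcd.2
      rw [div_le_div_iff₀ (by linarith : (0:ℝ) < t - τ) (by linarith [htcd.2] : (0:ℝ) < d - t)] at h3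
      have k1 : g t - g τ ≤ m * (t - τ) := by
        refine le_of_mul_le_mul_right ?_ (by linarith [htcd.2] : (0:ℝ) < d - t)
        calc (g t - g τ) * (d - t) ≤ (g d - g t) * (t - τ) := h3
          _ = m * (t - τ) * (d - t) := by rw [hgd]; ring
      refine le_of_mul_le_mul_right ?_ (by linarith : (0:ℝ) < t - τ)
      linarith
    · subst heqt
      have h5 : q ≤ slope g τ d := Rd_le_slope hg hτab ⟨hτ.2, hd.2⟩
      rw [slope_def_field, le_div_iff₀ (by linarith [hτ.2] : (0:ℝ) < d - τ)] at h5
      refine le_of_mul_le_mul_right ?_ (by linarith [hτ.2] : (0:ℝ) < d - τ)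
      linarith [hgd]
    · have h5 : q ≤ slope g τ d := Rd_le_slope hg hτab ⟨hτ.2, hd.2⟩
      rw [slope_def_field, le_div_iff₀ (by linarith [hτ.2] : (0:ℝ) < d - τ)] at h5
      have h3 := hg.slope_mono_adjacent hc (Ioo_subset_Icc_self hτab) htcd.1 hgt
      rw [div_le_div_iff₀ (by linarith [htcd.1] : (0:ℝ) < t - c) (by linarith : (0:ℝ) < τ - t)] at h3
      have k1 : m * (τ - t) ≤ g τ - g t := by
        refine le_of_mul_le_mul_right ?_ (by linarith [htcd.1] : (0:ℝ) < t - c)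
        calc m * (τ - t) * (t - c) = (g t - g c) * (τ - t) := by rw [heq]; ring
          _ ≤ (g τ - g t) * (t - c) := h3
      refine le_of_mul_le_mul_right ?_ (by linarith [hτ.2] : (0:ℝ) < d - τ)
      have k2 : g d - g τ ≤ m * (d - τ) := by linarith [hgd]
      linarith
  linarith

end Chord


section Variation

lemma convexOn_chord (c d : ℝ) : ConvexOn ℝ (Icc a b) (chord g c d) := by
  refine ⟨convex_Icc a b, fun x _ y _ p q hp hq hpq => ?_⟩
  have hq1 : q = 1 - p := by linarith
  subst hq1
  simp only [smul_eq_mul, chord]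
  ring_nf
  exact le_of_eq (by ring)

lemma chord_mem_Icc {c d : ℝ} (hcd : c < d) {t : ℝ} (ht : t ∈ Icc c d) :
    chord g c d t ∈ Icc (min (g c) (g d)) (max (g c) (g d)) := by
  have hd' : g c + slope g c d * (d - c) = g d := by
    rw [slope_def_field, div_mul_cancel₀ _ (sub_ne_zero.2 (ne_of_gt hcd))]; ring
  unfold chord
  set m := slope g c d
  rcases le_or_gt 0 m with hm | hm
  · constructor
    · exact le_trans (min_le_left _ _) (by nlinarith [mul_nonneg hm (sub_nonneg.2 ht.1)])
    · refine le_trans ?_ (le_max_right _ _)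
      nlinarith [mul_nonneg hm (sub_nonneg.2 ht.2)]
  · constructor
    · refine le_trans (min_le_right _ _) ?_
      nlinarith [mul_nonpos_of_nonpos_of_nonneg hm.le (sub_nonneg.2 ht.2)]
    · refine le_trans ?_ (le_max_left _ _)
      nlinarith [mul_nonpos_of_nonpos_of_nonneg hm.le (sub_nonneg.2 ht.1)]

variable (g) in
/-- The corner-cutting variation. -/
noncomputable def xe (c d : ℝ) : ℝ → ℝ := g ⊔ chord g c d

lemma xe_convexOn (hg : ConvexOn ℝ (Icc a b) g) (c d : ℝ) :
    ConvexOn ℝ (Icc a b) (xe g c d) := hg.sup (convexOn_chord c d)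

lemma xe_eq_g (hg : ConvexOn ℝ (Icc a b) g) {c d : ℝ} (hc : c ∈ Icc a b)
    (hd : d ∈ Icc a b) (hcd : c < d) {t : ℝ} (ht : t ∈ Icc a b) (h : t ≤ c ∨ d ≤ t) :
    xe g c d t = g t :=
  max_eq_left (chord_ge_outside hg hc hd hcd ht h)

lemma xe_eq_chord (hg : ConvexOn ℝ (Icc a b) g) {c d : ℝ} (hc : c ∈ Icc a b)
    (hd : d ∈ Icc a b) (hcd : c < d) {t : ℝ} (ht : t ∈ Icc c d) :
    xe g c d t = chord g c d t :=
  max_eq_right (chord_le_inside hg hc hd hcd ht)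

lemma xe_derivWithin_outside (hg : ConvexOn ℝ (Icc a b) g) (hab : a < b) {c d : ℝ}
    (hc : c ∈ Icc a b) (hd : d ∈ Icc a b) (hcd : c < d) {t : ℝ} (ht : t ∈ Icc a b)
    (h : t < c ∨ d < t) :
    derivWithin (xe g c d) (Icc a b) t = derivWithin g (Icc a b) t := by
  have hev : xe g c d =ᶠ[𝓝[Icc a b] t] g := by
    rcases h with h | h
    · filter_upwards [nhdsWithin_le_nhds (Iio_mem_nhds h), self_mem_nhdsWithin] with s hs hs'
      exact xe_eq_g hg hc hd hcd hs' (Or.inl (le_of_lt hs))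
    · filter_upwards [nhdsWithin_le_nhds (Ioi_mem_nhds h), self_mem_nhdsWithin] with s hs hs'
      exact xe_eq_g hg hc hd hcd hs' (Or.inr (le_of_lt hs))
  exact hev.derivWithin_eq (xe_eq_g hg hc hd hcd ht (by rcases h with h | h; exacts [Or.inl h.le, Or.inr h.le]))

lemma xe_derivWithin_inside (hg : ConvexOn ℝ (Icc a b) g) (hab : a < b) {c d : ℝ}
    (hc : c ∈ Ioo a b) (hd : d ∈ Ioo a b) (hcd : c < d) {τ : ℝ} (hτ : τ ∈ Ioo c d)
    (hτab : τ ∈ Ioo a b) (hpq : Ld g a τ < Rd g b τ) {t : ℝ} (ht : t ∈ Ioo c d) :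
    derivWithin (xe g c d) (Icc a b) t = slope g c d := by
  have htab : t ∈ Ioo a b := ⟨hc.1.trans ht.1, ht.2.trans hd.2⟩
  have hgt : g t < chord g c d t :=
    chord_strict hg (Ioo_subset_Icc_self hc) (Ioo_subset_Icc_self hd) hcd hτ hτab hpq t ht
  have hgcont : ContinuousAt g t :=
    (continuousWithinAt_interior hg htab).continuousAt (Icc_mem_nhds htab.1 htab.2)
  have hchordcont : ContinuousAt (chord g c d) t := by
    unfold chord; fun_prop
  have hev : ∀ᶠ s in 𝓝 t, g s < chord g c d s := by
    have hcont : ContinuousAt (fun s => chord g c d s - g s) t := hchordcont.sub hgcont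
    have := hcont.eventually_mem (Ioi_mem_nhds (sub_pos.2 hgt))
    filter_upwards [this] with s hs
    simpa [sub_pos] using hs
  have hchordderiv : HasDerivAt (chord g c d) (slope g c d) t := by
    have h1 : HasDerivAt (fun s => g c + slope g c d * (s - c)) (slope g c d) t := by
      simpa using (((hasDerivAt_id t).sub_const c).const_mul (slope g c d)).const_add (g c)
    exact h1
  have hxe : HasDerivAt (xe g c d) (slope g c d) t := by
    refine hchordderiv.congr_of_eventuallyEq ?_
    filter_upwards [hev] with s hs
    exact max_eq_right hs.le
  exact hxe.hasDerivWithinAt.derivWithin (uniqueDiffOn_Icc hab t (Ioo_subset_Icc_self htab))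

lemma xe_hasDerivWithinAt_a (hg : ConvexOn ℝ (Icc a b) g) {c d : ℝ} (hc : c ∈ Ioo a b)
    (hd : d ∈ Icc a b) (hcd : c < d) {d₀ : ℝ} (h0 : HasDerivWithinAt g d₀ (Icc a b) a) :
    HasDerivWithinAt (xe g c d) d₀ (Icc a b) a := by
  refine h0.congr_of_eventuallyEq ?_
    (xe_eq_g hg (Ioo_subset_Icc_self hc) hd hcd (left_mem_Icc.2 (hc.1.trans hc.2).le) (Or.inl hc.1.le))
  filter_upwards [nhdsWithin_le_nhds (Iio_mem_nhds hc.1), self_mem_nhdsWithin] with s hs hs'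
  exact xe_eq_g hg (Ioo_subset_Icc_self hc) hd hcd hs' (Or.inl (le_of_lt hs))

lemma xe_hasDerivWithinAt_b (hg : ConvexOn ℝ (Icc a b) g) {c d : ℝ} (hc : c ∈ Icc a b)
    (hd : d ∈ Ioo a b) (hcd : c < d) {d₁ : ℝ} (h1 : HasDerivWithinAt g d₁ (Icc a b) b) :
    HasDerivWithinAt (xe g c d) d₁ (Icc a b) b := by
  refine h1.congr_of_eventuallyEq ?_
    (xe_eq_g hg hc (Ioo_subset_Icc_self hd) hcd (right_mem_Icc.2 (hd.1.trans hd.2).le) (Or.inr hd.2.le))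
  filter_upwards [nhdsWithin_le_nhds (Ioi_mem_nhds hd.2), self_mem_nhdsWithin] with s hs hs'
  exact xe_eq_g hg hc (Ioo_subset_Icc_self hd) hcd hs' (Or.inr (le_of_lt hs))

lemma xe_graph {U : Set (ℝ × ℝ)} (hUconv : Convex ℝ U) (hg : ConvexOn ℝ (Icc a b) g)
    (hgr : ∀ t ∈ Icc a b, (t, g t) ∈ U) {c d : ℝ} (hc : c ∈ Icc a b) (hd : d ∈ Icc a b)
    (hcd : c < d) : ∀ t ∈ Icc a b, (t, xe g c d t) ∈ U := by
  intro t ht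
  rcases le_or_gt t c with h | h
  · rw [xe_eq_g hg hc hd hcd ht (Or.inl h)]; exact hgr t ht
  rcases le_or_gt d t with h' | h'
  · rw [xe_eq_g hg hc hd hcd ht (Or.inr h')]; exact hgr t ht
  · rw [xe_eq_chord hg hc hd hcd ⟨h.le, h'.le⟩]
    set lam := (t - c) / (d - c) with hlam
    have hdc : (0:ℝ) < d - c := by linarith
    have hlam0 : 0 ≤ lam := div_nonneg (by linarith) hdc.le
    have hlam1 : lam ≤ 1 := by
      rw [hlam, div_le_one hdc]; linarith
    have := hUconv (hgr c hc) (hgr d hd) (by linarith : (0:ℝ) ≤ 1 - lam) hlam0 (by ring)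
    convert this using 1
    have h1 : (1 - lam) • ((c : ℝ), g c) + lam • ((d : ℝ), g d)
        = ((1 - lam) * c + lam * d, (1 - lam) * g c + lam * g d) := by
      simp [Prod.ext_iff, smul_eq_mul]
    rw [h1]
    refine Prod.ext ?_ ?_
    · simp only
      rw [hlam]; field_simp; ring
    · simp only [chord]
      rw [slope_def_field, hlam]; field_simp; ring

end Variation


section MeasureStuff

lemma continuousOn_g (hg : ConvexOn ℝ (Icc a b) g) {d₀ d₁ : ℝ}
    (h0 : HasDerivWithinAt g d₀ (Icc a b) a) (h1 : HasDerivWithinAt g d₁ (Icc a b) b) :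
    ContinuousOn g (Icc a b) := by
  intro t ht
  rcases eq_or_lt_of_le ht.1 with h | h
  · subst h; exact h0.continuousWithinAt
  rcases eq_or_lt_of_le ht.2 with h' | h'
  · subst h'; exact h1.continuousWithinAt
  · exact continuousWithinAt_interior hg ⟨h, h'⟩

lemma ae_good (hg : ConvexOn ℝ (Icc a b) g) :
    ∀ᵐ t ∂(volume.restrict (Icc a b)), t ∈ Ioo a b ∧ Ld g a t = Rd g b t := by
  have hc : ((({a, b} : Set ℝ)) ∪ {t ∈ Ioo a b | Ld g a t < Rd g b t}).Countable :=
    ((Set.countable_singleton b).insert a).union (countable_corner hg)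
  have hnull : volume ((({a, b} : Set ℝ)) ∪ {t ∈ Ioo a b | Ld g a t < Rd g b t}) = 0 :=
    hc.measure_zero _
  rw [ae_iff, Measure.restrict_apply' measurableSet_Icc]
  refine measure_mono_null ?_ hnull
  rintro t ⟨hP, htI⟩
  simp only [Set.mem_union, Set.mem_insert_iff, Set.mem_singleton_iff, Set.mem_setOf_eq]
  by_cases ha : t = a
  · exact Or.inl (Or.inl ha)
  by_cases hb : t = b
  · exact Or.inl (Or.inr hb)
  have htIoo : t ∈ Ioo a b := ⟨lt_of_le_of_ne htI.1 (Ne.symm ha), lt_of_le_of_ne htI.2 hb⟩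
  refine Or.inr ⟨htIoo, ?_⟩
  rcases eq_or_lt_of_le (Ld_le_Rd hg htIoo) with h | h
  · exact absurd ⟨htIoo, h⟩ hP
  · exact h

lemma monotoneOn_Rd (hg : ConvexOn ℝ (Icc a b) g) : MonotoneOn (Rd g b) (Ioo a b) := by
  intro s hs t ht hst
  rcases eq_or_lt_of_le hst with h | h
  · subst h; exact le_refl _
  · exact (Rd_le_Ld_of_lt hg hs ht h).trans (Ld_le_Rd hg ht)

lemma aemeasurable_Rd (hg : ConvexOn ℝ (Icc a b) g) :
    AEMeasurable (Rd g b) (volume.restrict (Icc a b)) := by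
  have h := aemeasurable_restrict_of_monotoneOn (μ := volume) measurableSet_Ioo (monotoneOn_Rd hg)
  rwa [Measure.restrict_congr_set Ioo_ae_eq_Icc] at h

lemma integrable_integrand {F : ℝ × ℝ × ℝ → ℝ} (hF : Continuous F)
    (hgc : ContinuousOn g (Icc a b)) {V : ℝ → ℝ} {lo hi : ℝ}
    (hV : AEMeasurable V (volume.restrict (Icc a b)))
    (hbd : ∀ᵐ t ∂(volume.restrict (Icc a b)), V t ∈ Icc lo hi) :
    IntegrableOn (fun t => F (t, g t, V t)) (Icc a b) := by
  have hK2 : IsCompact (g '' Icc a b) := isCompact_Icc.image_of_continuousOn hgc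
  have hK : IsCompact ((Icc a b) ×ˢ ((g '' Icc a b) ×ˢ (Icc lo hi))) :=
    isCompact_Icc.prod (hK2.prod isCompact_Icc)
  obtain ⟨C, hC⟩ := hK.exists_bound_of_continuousOn hF.continuousOn
  have hmeas : AEStronglyMeasurable (fun t => F (t, g t, V t)) (volume.restrict (Icc a b)) := by
    have h1 : AEMeasurable (fun t => (t, g t, V t)) (volume.restrict (Icc a b)) :=
      aemeasurable_id.prodMk (((hgc.aemeasurable measurableSet_Icc)).prodMk hV)
    exact (hF.measurable.comp_aemeasurable h1).aestronglyMeasurable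
  refine Integrable.mono' ((integrableOn_const measure_Icc_lt_top.ne : IntegrableOn (fun _ => C) (Icc a b) volume)) hmeas ?_
  filter_upwards [ae_restrict_mem measurableSet_Icc, hbd] with t htI htV
  exact hC _ ⟨htI, ⟨mem_image_of_mem g htI, htV⟩⟩

lemma integrableOn_F_derivWithin (hg : ConvexOn ℝ (Icc a b) g) (hab : a < b)
    {d₀ d₁ : ℝ} (h0 : HasDerivWithinAt g d₀ (Icc a b) a)
    (h1 : HasDerivWithinAt g d₁ (Icc a b) b)
    {F : ℝ × ℝ × ℝ → ℝ} (hF : Continuous F) :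
    IntegrableOn (fun t => F (t, g t, derivWithin g (Icc a b) t)) (Icc a b) := by
  have hae : (fun t => F (t, g t, derivWithin g (Icc a b) t))
      =ᵐ[volume.restrict (Icc a b)] (fun t => F (t, g t, Rd g b t)) := by
    filter_upwards [ae_good hg] with t ht
    rw [derivWithin_eq_Rd hg hab ht.1 ht.2]
  refine (integrable_integrand (lo := d₀) (hi := d₁) hF (continuousOn_g hg h0 h1)
    (aemeasurable_Rd hg) ?_).congr hae.symm
  filter_upwards [ae_good hg] with t ht
  exact ⟨(d0_le_Ld hg h0 ht.1).trans (Ld_le_Rd hg ht.1), Rd_le_d1 hg h1 ht.1⟩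

lemma ae_bound_derivWithin (hg : ConvexOn ℝ (Icc a b) g) (hab : a < b) :
    ∀ᵐ t ∂(volume.restrict (Icc a b)),
      derivWithin g (Icc a b) t = Rd g b t ∧ Ld g a t = Rd g b t ∧ t ∈ Ioo a b := by
  filter_upwards [ae_good hg] with t ht
  exact ⟨derivWithin_eq_Rd hg hab ht.1 ht.2, ht.2, ht.1⟩

end MeasureStuff


section NoCorner

lemma slope_symm_mean {τ ε : ℝ} (hε : 0 < ε) :
    slope g (τ - ε) (τ + ε) = (slope g τ (τ - ε) + slope g τ (τ + ε)) / 2 := by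
  have hε' : (ε : ℝ) ≠ 0 := ne_of_gt hε
  simp only [slope_def_field]
  have e1 : τ + ε - (τ - ε) = 2 * ε := by ring
  have e2 : τ - ε - τ = -ε := by ring
  have e3 : τ + ε - τ = ε := by ring
  rw [e1, e2, e3, div_neg]
  field_simp
  ring

set_option maxHeartbeats 2000000 in
lemma no_corner
    (U : Set (ℝ × ℝ)) (hUconv : Convex ℝ U)
    {f : ℝ × ℝ × ℝ → ℝ} (hf : ContDiff ℝ 2 f)
    (hg : ConvexOn ℝ (Icc a b) g) (hab : a < b)
    (hgr : ∀ t ∈ Icc a b, (t, g t) ∈ U)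
    {s₀ s₁ d₀ d₁ : ℝ}
    (hd₀ : s₀ ≤ d₀) (h0 : HasDerivWithinAt g d₀ (Icc a b) a)
    (hd₁ : d₁ ≤ s₁) (h1 : HasDerivWithinAt g d₁ (Icc a b) b)
    (hLeg : ∀ t ∈ Icc a b, ∀ d : ℝ, (∀ s ∈ Icc a b, g t + d * (s - t) ≤ g s) →
      0 < iteratedDeriv 2 (fun w => f (t, g t, w)) d)
    (hopt : ∀ x : ℝ → ℝ,
      (ConvexOn ℝ (Icc a b) x ∧ (∀ t ∈ Icc a b, (t, x t) ∈ U) ∧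
        x a = g a ∧ x b = g b ∧
        (∃ d, s₀ ≤ d ∧ HasDerivWithinAt x d (Icc a b) a) ∧
        (∃ d, d ≤ s₁ ∧ HasDerivWithinAt x d (Icc a b) b)) →
      (∫ t in Icc a b, f (t, g t, derivWithin g (Icc a b) t)) ≤
        ∫ t in Icc a b, f (t, x t, derivWithin x (Icc a b) t))
    {τ : ℝ} (hτ : τ ∈ Ioo a b) : Ld g a τ = Rd g b τ := by
  by_contra hne
  have hpq : Ld g a τ < Rd g b τ := lt_of_le_of_ne (Ld_le_Rd hg hτ) hne
  set p := Ld g a τ with hp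
  set q := Rd g b τ with hq
  set y := g τ with hy
  set F : ℝ → ℝ := fun w => f (τ, g τ, w) with hF
  set m₀ := (p + q) / 2 with hm₀
  -- strict convexity of F on [p, q]
  have hFcont : Continuous F :=
    hf.continuous.comp (continuous_const.prodMk (continuous_const.prodMk continuous_id))
  have hFstrict : StrictConvexOn ℝ (Icc p q) F := by
    refine strictConvexOn_of_deriv2_pos (convex_Icc p q) hFcont.continuousOn fun w hw => ?_
    rw [interior_Icc] at hw
    rw [← iteratedDeriv_eq_iterate]
    exact hLeg τ (Ioo_subset_Icc_self hτ) w (subgrad hg hτ (Ioo_subset_Icc_self hw))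
  have hmid : F m₀ < (F p + F q) / 2 := by
    have h2 := hFstrict.2 (left_mem_Icc.2 hpq.le) (right_mem_Icc.2 hpq.le) (ne_of_lt hpq)
      (by norm_num : (0:ℝ) < 1/2) (by norm_num : (0:ℝ) < 1/2) (by norm_num)
    simp only [smul_eq_mul] at h2
    have e : (1/2 : ℝ) * p + (1/2 : ℝ) * q = m₀ := by rw [hm₀]; ring
    rw [e] at h2
    linarith
  set gap := (F p + F q) / 2 - F m₀ with hgap
  have hgappos : 0 < gap := by rw [hgap]; linarith
  set δ := gap / 3 with hδdef
  have hδpos : 0 < δ := by rw [hδdef]; linarith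
  -- continuity balls for f at the three relevant points
  have hball : ∀ w : ℝ, ∃ δ' > 0, ∀ z : ℝ × ℝ × ℝ, dist z (τ, y, w) < δ' → |f z - F w| < δ := by
    intro w
    have hca : ContinuousAt f ((τ, y, w) : ℝ × ℝ × ℝ) := hf.continuous.continuousAt
    rcases Metric.continuousAt_iff.1 hca δ hδpos with ⟨δ', hδ', hd⟩
    refine ⟨δ', hδ', fun z hz => ?_⟩
    have hthis := hd hz
    have hFw : F w = f (τ, y, w) := rfl
    rw [Real.dist_eq] at hthis
    rwa [hFw]
  obtain ⟨δp, hδp, hballp⟩ := hball p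
  obtain ⟨δq, hδq, hballq⟩ := hball q
  obtain ⟨δm, hδm, hballm⟩ := hball m₀
  set r := min δp (min δq δm) with hr
  have hrpos : 0 < r := by positivity
  set r' := r / 2 with hr'
  have hr'pos : 0 < r' := by positivity
  have hr'p : r' < δp := by
    have := min_le_left δp (min δq δm); rw [hr']; simp only [hr] at *; linarith
  have hr'q : r' < δq := by
    have h3 := (min_le_right δp (min δq δm)).trans (min_le_left δq δm); rw [hr']; linarith
  have hr'm : r' < δm := by
    have h3 := (min_le_right δp (min δq δm)).trans (min_le_right δq δm); rw [hr']; linarith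
  -- one-sided derivative control near τ
  obtain ⟨η₁, hη₁pos, hη₁⟩ : ∃ η > 0, ∀ s ∈ Ioo τ (τ + η), s ∈ Ioo a b →
      q ≤ Ld g a s ∧ Rd g b s < q + r' := by
    refine right_lim hg hab ⟨hτ.1.le, hτ.2⟩ (fun u hu => Rd_le_slope hg hτ hu) ?_
      (continuousWithinAt_interior hg hτ) hr'pos
    intro δ'' hδ''
    have hlt : Rd g b τ < Rd g b τ + δ'' := lt_add_of_pos_right _ hδ''
    obtain ⟨z, hz, hzlt⟩ := exists_lt_of_csInf_lt ((nonempty_Ioo.2 hτ.2).image _) hlt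
    obtain ⟨u, hu, rfl⟩ := hz
    exact ⟨u, hu, hzlt⟩
  obtain ⟨η₂, hη₂pos, hη₂⟩ : ∃ η > 0, ∀ s ∈ Ioo (τ - η) τ, s ∈ Ioo a b →
      p - r' < Ld g a s ∧ Rd g b s ≤ p := by
    refine left_lim hg hab ⟨hτ.1, hτ.2.le⟩ (fun u hu => slope_le_Ld hg hτ hu) ?_
      (continuousWithinAt_interior hg hτ) hr'pos
    intro δ'' hδ''
    have hlt : Ld g a τ - δ'' < Ld g a τ := by linarith
    obtain ⟨z, hz, hzlt⟩ := exists_lt_of_lt_csSup ((nonempty_Ioo.2 hτ.1).image _) hlt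
    obtain ⟨u, hu, rfl⟩ := hz
    exact ⟨u, hu, hzlt⟩
  -- slope control from both sides at τ
  obtain ⟨η₃, hη₃pos, hη₃⟩ : ∃ η > 0, ∀ u, u ∈ Ioo τ (τ + η) → slope g τ u < q + r' := by
    have hev := (tendsto_slope_R hg hτ).eventually (gt_mem_nhds (lt_add_of_pos_right q hr'pos))
    rw [eventually_iff, Metric.mem_nhdsWithin_iff] at hev
    obtain ⟨η, hη, hsub⟩ := hev
    refine ⟨η, hη, fun u hu => hsub ⟨?_, hu.1⟩⟩
    rw [Metric.mem_ball, Real.dist_eq, abs_of_pos (by linarith [hu.1])]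
    linarith [hu.2]
  obtain ⟨η₄, hη₄pos, hη₄⟩ : ∃ η > 0, ∀ u, u ∈ Ioo (τ - η) τ → p - r' < slope g τ u := by
    have hev := (tendsto_slope_L hg hτ).eventually (lt_mem_nhds (by linarith : p - r' < p))
    rw [eventually_iff, Metric.mem_nhdsWithin_iff] at hev
    obtain ⟨η, hη, hsub⟩ := hev
    refine ⟨η, hη, fun u hu => hsub ⟨?_, hu.2⟩⟩
    rw [Metric.mem_ball, Real.dist_eq, abs_of_neg (by linarith [hu.2])]
    linarith [hu.1]
  -- continuity of g at τ
  obtain ⟨η₅, hη₅pos, hη₅⟩ : ∃ η > 0, ∀ s ∈ Icc a b, |s - τ| < η → |g s - y| < r' := by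
    have hev := (continuousWithinAt_interior hg hτ) (Metric.ball_mem_nhds (g τ) hr'pos)
    rw [Filter.mem_map, Metric.mem_nhdsWithin_iff] at hev
    obtain ⟨η, hη, hsub⟩ := hev
    refine ⟨η, hη, fun s hs hd => ?_⟩
    have := hsub ⟨by rwa [Metric.mem_ball, Real.dist_eq], hs⟩
    rwa [Set.mem_preimage, Metric.mem_ball, Real.dist_eq] at this
  -- choose ε
  set E := min r' (min η₁ (min η₂ (min η₃ (min η₄ (min η₅ (min (τ - a) (b - τ))))))) with hE
  have hEpos : 0 < E := by
    refine lt_min hr'pos (lt_min hη₁pos (lt_min hη₂pos (lt_min hη₃pos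
      (lt_min hη₄pos (lt_min hη₅pos (lt_min ?_ ?_))))))
    · linarith [hτ.1]
    · linarith [hτ.2]
  set ε := E / 2 with hε
  have hεpos : 0 < ε := by positivity
  have hεr' : ε < r' := by
    have := min_le_left r' (min η₁ (min η₂ (min η₃ (min η₄ (min η₅ (min (τ - a) (b - τ)))))))
    rw [hε]; linarith
  have hEη₁ : E ≤ η₁ := le_trans (min_le_right _ _) (min_le_left _ _)
  have hEη₂ : E ≤ η₂ := le_trans (min_le_right _ _) (le_trans (min_le_right _ _) (min_le_left _ _))
  have hEη₃ : E ≤ η₃ := le_trans (min_le_right _ _) (le_trans (min_le_right _ _)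
    (le_trans (min_le_right _ _) (min_le_left _ _)))
  have hEη₄ : E ≤ η₄ := le_trans (min_le_right _ _) (le_trans (min_le_right _ _)
    (le_trans (min_le_right _ _) (le_trans (min_le_right _ _) (min_le_left _ _))))
  have hEη₅ : E ≤ η₅ := le_trans (min_le_right _ _) (le_trans (min_le_right _ _)
    (le_trans (min_le_right _ _) (le_trans (min_le_right _ _)
      (le_trans (min_le_right _ _) (min_le_left _ _)))))
  have hEa : E ≤ τ - a := le_trans (min_le_right _ _) (le_trans (min_le_right _ _)
    (le_trans (min_le_right _ _) (le_trans (min_le_right _ _)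
      (le_trans (min_le_right _ _) (le_trans (min_le_right _ _) (min_le_left _ _))))))
  have hEb : E ≤ b - τ := le_trans (min_le_right _ _) (le_trans (min_le_right _ _)
    (le_trans (min_le_right _ _) (le_trans (min_le_right _ _)
      (le_trans (min_le_right _ _) (le_trans (min_le_right _ _) (min_le_right _ _))))))
  have hε1 : ε < η₁ := by rw [hε]; linarith
  have hε2 : ε < η₂ := by rw [hε]; linarith
  have hε3 : ε < η₃ := by rw [hε]; linarith
  have hε4 : ε < η₄ := by rw [hε]; linarith
  have hε5 : ε < η₅ := by rw [hε]; linarith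
  have hεa : ε < τ - a := by rw [hε]; linarith
  have hεb : ε < b - τ := by rw [hε]; linarith
  -- set up the corner interval
  set c := τ - ε with hc
  set dd := τ + ε with hdd
  have hcd : c < dd := by rw [hc, hdd]; linarith
  have hcIoo : c ∈ Ioo a b := ⟨by rw [hc]; linarith, by rw [hc]; linarith [hτ.2]⟩
  have hdIoo : dd ∈ Ioo a b := ⟨by rw [hdd]; linarith [hτ.1], by rw [hdd]; linarith⟩
  have hcI : c ∈ Icc a b := Ioo_subset_Icc_self hcIoo
  have hdI : dd ∈ Icc a b := Ioo_subset_Icc_self hdIoo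
  have hτcd : τ ∈ Ioo c dd := ⟨by rw [hc]; linarith, by rw [hdd]; linarith⟩
  set m := slope g c dd with hm
  have hsR : q ≤ slope g τ dd ∧ slope g τ dd < q + r' :=
    ⟨Rd_le_slope hg hτ ⟨by rw [hdd]; linarith, hdIoo.2.le⟩,
     hη₃ dd ⟨by rw [hdd]; linarith, by rw [hdd]; linarith⟩⟩
  have hsL : p - r' < slope g τ c ∧ slope g τ c ≤ p :=
    ⟨hη₄ c ⟨by rw [hc]; linarith, by rw [hc]; linarith⟩,
     slope_le_Ld hg hτ ⟨hcIoo.1.le, by rw [hc]; linarith⟩⟩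
  have hmval : m = (slope g τ c + slope g τ dd) / 2 := by
    rw [hm, hc, hdd]; exact slope_symm_mean hεpos
  have hmm₀ : |m - m₀| ≤ r' := by
    rw [hmval, hm₀, abs_le]
    constructor
    · linarith [hsR.1, hsL.1]
    · linarith [hsR.2, hsL.2]
  -- apply optimality to the variation
  have hI := hopt (xe g c dd) ⟨xe_convexOn hg c dd,
    xe_graph hUconv hg hgr hcI hdI hcd,
    xe_eq_g hg hcI hdI hcd (left_mem_Icc.2 hab.le) (Or.inl hcIoo.1.le),
    xe_eq_g hg hcI hdI hcd (right_mem_Icc.2 hab.le) (Or.inr hdIoo.2.le),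
    ⟨d₀, hd₀, xe_hasDerivWithinAt_a hg hcIoo hdI hcd h0⟩,
    ⟨d₁, hd₁, xe_hasDerivWithinAt_b hg hcI hdIoo hcd h1⟩⟩
  set h₁ : ℝ → ℝ := fun t => f (t, g t, derivWithin g (Icc a b) t) with hh₁
  set h₂ : ℝ → ℝ := fun t => f (t, xe g c dd t, derivWithin (xe g c dd) (Icc a b) t) with hh₂
  have hInt₁ : IntegrableOn h₁ (Icc a b) := integrableOn_F_derivWithin hg hab h0 h1 hf.continuous
  have hInt₂ : IntegrableOn h₂ (Icc a b) := integrableOn_F_derivWithin (xe_convexOn hg c dd) hab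
    (xe_hasDerivWithinAt_a hg hcIoo hdI hcd h0) (xe_hasDerivWithinAt_b hg hcI hdIoo hcd h1)
    hf.continuous
  have hIoosub : Ioo c dd ⊆ Icc a b := fun x hx => ⟨hcI.1.trans hx.1.le, hx.2.le.trans hdI.2⟩
  have hsplit : ∀ (h : ℝ → ℝ), IntegrableOn h (Icc a b) →
      ∫ t in Icc a b, h t = (∫ t in Ioo c dd, h t) + ∫ t in Icc a b \ Ioo c dd, h t := by
    intro h hint
    have hu := setIntegral_union (disjoint_sdiff_self_right)
      (measurableSet_Icc.diff measurableSet_Ioo)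
      (hint.mono_set hIoosub) (hint.mono_set diff_subset)
    rwa [union_diff_cancel hIoosub] at hu
  have hrest : ∫ t in Icc a b \ Ioo c dd, h₁ t = ∫ t in Icc a b \ Ioo c dd, h₂ t := by
    refine setIntegral_congr_ae (measurableSet_Icc.diff measurableSet_Ioo) ?_
    have hae2 : ∀ᵐ t : ℝ, t ≠ c ∧ t ≠ dd := by
      rw [ae_iff]
      refine measure_mono_null (fun t ht => ?_)
        ((((Set.countable_singleton dd).insert c)).measure_zero volume)
      simp only [Set.mem_setOf_eq, not_and_or, not_not] at ht
      rcases ht with h | h <;> simp [h]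
    filter_upwards [hae2] with t ht htmem
    have h' : t < c ∨ dd < t := by
      have h'' := htmem.2
      rw [mem_Ioo, not_and_or, not_lt, not_lt] at h''
      rcases h'' with h'' | h''
      · exact Or.inl (lt_of_le_of_ne h'' ht.1)
      · exact Or.inr (lt_of_le_of_ne h'' (Ne.symm ht.2))
    simp only [hh₁, hh₂]
    rw [xe_eq_g hg hcI hdI hcd htmem.1 (h'.imp le_of_lt le_of_lt),
      xe_derivWithin_outside hg hab hcI hdI hcd htmem.1 h']
  have hmidineq : (∫ t in Ioo c dd, h₁ t) ≤ ∫ t in Ioo c dd, h₂ t := by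
    rw [hsplit h₁ hInt₁, hsplit h₂ hInt₂] at hI
    linarith [hrest]
  -- pointwise description of h₂ inside
  have h₂inside : ∀ t ∈ Ioo c dd, h₂ t = f (t, chord g c dd t, m) := by
    intro t ht
    simp only [hh₂]
    rw [xe_eq_chord hg hcI hdI hcd (Ioo_subset_Icc_self ht),
      xe_derivWithin_inside hg hab hcIoo hdIoo hcd hτcd hτ hpq ht]
  -- upper bound for the middle integral of h₂
  have hub : ∀ t ∈ Ioo c dd, h₂ t ≤ F m₀ + δ := by
    intro t ht
    rw [h₂inside t ht]
    have htI : t ∈ Icc a b := hIoosub ht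
    have ht1 : c < t := ht.1
    have ht2 : t < dd := ht.2
    rw [hc] at ht1; rw [hdd] at ht2
    have htτ : |t - τ| < ε := by rw [abs_lt]; constructor <;> linarith
    have hgy : |chord g c dd t - y| ≤ r' := by
      have hcy : |g c - y| < r' := hη₅ c hcI (by rw [hc]; rw [abs_of_neg] <;> linarith)
      have hdy : |g dd - y| < r' := hη₅ dd hdI (by rw [hdd]; rw [abs_of_pos] <;> linarith)
      have hch := chord_mem_Icc (g := g) hcd (Ioo_subset_Icc_self ht)
      rw [abs_lt] at hcy hdy
      rw [abs_le]
      rcases le_total (g c) (g dd) with hcase | hcase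
      · rw [min_eq_left hcase, max_eq_right hcase] at hch
        exact ⟨by linarith [hch.1], by linarith [hch.2]⟩
      · rw [min_eq_right hcase, max_eq_left hcase] at hch
        exact ⟨by linarith [hch.1], by linarith [hch.2]⟩
    have hdistm : dist ((t, chord g c dd t, m) : ℝ × ℝ × ℝ) ((τ, y, m₀) : ℝ × ℝ × ℝ) < δm := by
      rw [Prod.dist_eq, Prod.dist_eq]
      refine max_lt ?_ (max_lt ?_ ?_) <;> rw [Real.dist_eq]
      · linarith [htτ]
      · linarith [hgy]
      · linarith [hmm₀]
    have habs := hballm _ hdistm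
    rw [abs_lt] at habs
    linarith [habs.1, habs.2]
  have hvolIoo : (volume (Ioo c dd)).toReal = 2 * ε := by
    rw [Real.volume_Ioo, ENNReal.toReal_ofReal (by rw [hc, hdd]; linarith)]
    rw [hc, hdd]; ring
  have hI2 : (∫ t in Ioo c dd, h₂ t) ≤ 2 * ε * (F m₀ + δ) := by
    have hle := setIntegral_mono_on (hInt₂.mono_set hIoosub)
      ((integrableOn_const measure_Ioo_lt_top.ne) :
        IntegrableOn (fun _ => F m₀ + δ) (Ioo c dd) volume)
      measurableSet_Ioo hub
    rwa [setIntegral_const, measureReal_def, hvolIoo, smul_eq_mul] at hle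
  -- lower bounds for the two halves
  have hsubL : Ioo c τ ⊆ Icc a b := fun x hx => ⟨hcI.1.trans hx.1.le, hx.2.le.trans hτ.2.le⟩
  have hsubR : Ico τ dd ⊆ Icc a b := fun x hx => ⟨hτ.1.le.trans hx.1, hx.2.le.trans hdI.2⟩
  have hlb1 : ε * (F p - δ) ≤ ∫ t in Ioo c τ, h₁ t := by
    have hmono := setIntegral_mono_ae_restrict (μ := volume) (s := Ioo c τ)
      ((integrableOn_const measure_Ioo_lt_top.ne) :
        IntegrableOn (fun _ => F p - δ) (Ioo c τ) volume)
      (hInt₁.mono_set hsubL) ?_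
    · rw [setIntegral_const, measureReal_def, Real.volume_Ioo,
        ENNReal.toReal_ofReal (by rw [hc]; linarith), smul_eq_mul] at hmono
      have he : τ - c = ε := by rw [hc]; ring
      rwa [he] at hmono
    · filter_upwards [ae_restrict_of_ae_restrict_of_subset hsubL (ae_bound_derivWithin hg hab),
        ae_restrict_mem measurableSet_Ioo] with t ht htm
      obtain ⟨hDt, hLR, htab⟩ := ht
      have htm1 : c < t := htm.1
      have htm2 : t < τ := htm.2
      rw [hc] at htm1
      have hRd : p - r' < Rd g b t ∧ Rd g b t ≤ p := by
        have h5 := hη₂ t ⟨by linarith, htm2⟩ htab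
        exact ⟨by rw [← hLR]; exact h5.1, h5.2⟩
      have hgy : |g t - y| < r' := hη₅ t (hsubL htm) (by rw [abs_of_neg] <;> linarith)
      have hdist : dist ((t, g t, Rd g b t) : ℝ × ℝ × ℝ) ((τ, y, p) : ℝ × ℝ × ℝ) < δp := by
        rw [Prod.dist_eq, Prod.dist_eq]
        refine max_lt ?_ (max_lt ?_ ?_) <;> rw [Real.dist_eq]
        · rw [abs_of_neg] <;> linarith
        · linarith [hgy]
        · rw [abs_lt]
          constructor <;> linarith [hRd.1, hRd.2]
      have habs := hballp _ hdist
      rw [abs_lt] at habs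
      simp only [hh₁]
      rw [hDt]
      linarith [habs.1]
  have hlb2 : ε * (F q - δ) ≤ ∫ t in Ico τ dd, h₁ t := by
    have hmono := setIntegral_mono_ae_restrict (μ := volume) (s := Ico τ dd)
      ((integrableOn_const measure_Ico_lt_top.ne) :
        IntegrableOn (fun _ => F q - δ) (Ico τ dd) volume)
      (hInt₁.mono_set hsubR) ?_
    · rw [setIntegral_const, measureReal_def, Real.volume_Ico,
        ENNReal.toReal_ofReal (by rw [hdd]; linarith), smul_eq_mul] at hmono
      have he : dd - τ = ε := by rw [hdd]; ring
      rwa [he] at hmono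
    · filter_upwards [ae_restrict_of_ae_restrict_of_subset hsubR (ae_bound_derivWithin hg hab),
        ae_restrict_mem measurableSet_Ico] with t ht htm
      obtain ⟨hDt, hLR, htab⟩ := ht
      have htne : τ ≠ t := by
        intro hcontra
        rw [← hcontra] at hLR
        exact hne hLR
      have htm1 : τ < t := lt_of_le_of_ne htm.1 htne
      have htm2 : t < dd := htm.2
      rw [hdd] at htm2
      have hRd : q ≤ Rd g b t ∧ Rd g b t < q + r' := by
        have h5 := hη₁ t ⟨htm1, by linarith⟩ htab
        exact ⟨h5.1.trans (Ld_le_Rd hg htab), h5.2⟩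
      have hgy : |g t - y| < r' := hη₅ t (hsubR htm) (by rw [abs_of_pos] <;> linarith)
      have hdist : dist ((t, g t, Rd g b t) : ℝ × ℝ × ℝ) ((τ, y, q) : ℝ × ℝ × ℝ) < δq := by
        rw [Prod.dist_eq, Prod.dist_eq]
        refine max_lt ?_ (max_lt ?_ ?_) <;> rw [Real.dist_eq]
        · rw [abs_of_pos] <;> linarith
        · linarith [hgy]
        · rw [abs_lt]
          constructor <;> linarith [hRd.1, hRd.2]
      have habs := hballq _ hdist
      rw [abs_lt] at habs
      simp only [hh₁]
      rw [hDt]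
      linarith [habs.1]
  have hmidsplit : (∫ t in Ioo c dd, h₁ t) = (∫ t in Ioo c τ, h₁ t) + ∫ t in Ico τ dd, h₁ t := by
    have hun : Ioo c τ ∪ Ico τ dd = Ioo c dd := Ioo_union_Ico_eq_Ioo hτcd.1 hτcd.2.le
    have hdisj : Disjoint (Ioo c τ) (Ico τ dd) := by
      rw [Set.disjoint_left]
      intro x hx hx'
      exact absurd hx.2 (not_lt.2 hx'.1)
    have hu := setIntegral_union hdisj measurableSet_Ico
      (hInt₁.mono_set hsubL) (hInt₁.mono_set hsubR)
    rwa [hun] at hu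
  have hfinal : ε * (F p - δ) + ε * (F q - δ) ≤ 2 * ε * (F m₀ + δ) := by
    linarith [hlb1, hlb2, hmidineq, hI2, hmidsplit]
  have hdiv : F p + F q - 2 * δ ≤ 2 * F m₀ + 2 * δ := by
    have h6 : ε * (F p + F q - 2 * δ) ≤ ε * (2 * F m₀ + 2 * δ) := by linarith [hfinal]
    exact le_of_mul_le_mul_left h6 hεpos
  have : 2 * gap ≤ 4 * δ := by rw [hgap]; linarith [hdiv]
  rw [hδdef] at this
  linarith [hgappos]

end NoCorner


section Final

set_option maxHeartbeats 1000000 in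
lemma reg_main
    (U : Set (ℝ × ℝ)) (hUconv : Convex ℝ U)
    {f : ℝ × ℝ × ℝ → ℝ} (hf : ContDiff ℝ 2 f)
    (hg : ConvexOn ℝ (Icc a b) g) (hab : a < b)
    (hgr : ∀ t ∈ Icc a b, (t, g t) ∈ U)
    {s₀ s₁ d₀ d₁ : ℝ}
    (hd₀ : s₀ ≤ d₀) (h0 : HasDerivWithinAt g d₀ (Icc a b) a)
    (hd₁ : d₁ ≤ s₁) (h1 : HasDerivWithinAt g d₁ (Icc a b) b)
    (hLeg : ∀ t ∈ Icc a b, ∀ d : ℝ, (∀ s ∈ Icc a b, g t + d * (s - t) ≤ g s) →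
      0 < iteratedDeriv 2 (fun w => f (t, g t, w)) d)
    (hopt : ∀ x : ℝ → ℝ,
      (ConvexOn ℝ (Icc a b) x ∧ (∀ t ∈ Icc a b, (t, x t) ∈ U) ∧
        x a = g a ∧ x b = g b ∧
        (∃ d, s₀ ≤ d ∧ HasDerivWithinAt x d (Icc a b) a) ∧
        (∃ d, d ≤ s₁ ∧ HasDerivWithinAt x d (Icc a b) b)) →
      (∫ t in Icc a b, f (t, g t, derivWithin g (Icc a b) t)) ≤
        ∫ t in Icc a b, f (t, x t, derivWithin x (Icc a b) t)) :
    ContDiffOn ℝ 1 g (Icc a b) := by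
  have hnc : ∀ τ ∈ Ioo a b, Ld g a τ = Rd g b τ := fun τ hτ =>
    no_corner U hUconv hf hg hab hgr hd₀ h0 hd₁ h1 hLeg hopt hτ
  have hamem : a ∈ Icc a b := left_mem_Icc.2 hab.le
  have hbmem : b ∈ Icc a b := right_mem_Icc.2 hab.le
  have hdiff : DifferentiableOn ℝ g (Icc a b) := by
    intro t ht
    rcases eq_or_lt_of_le ht.1 with h | h
    · subst h; exact h0.differentiableWithinAt
    rcases eq_or_lt_of_le ht.2 with h' | h'
    · subst h'; exact h1.differentiableWithinAt
    · exact (hasDerivWithinAt_of_eq hg ⟨h, h'⟩ (hnc t ⟨h, h'⟩)).differentiableWithinAt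
  have hDWa : derivWithin g (Icc a b) a = d₀ := h0.derivWithin (uniqueDiffOn_Icc hab a hamem)
  have hDWb : derivWithin g (Icc a b) b = d₁ := h1.derivWithin (uniqueDiffOn_Icc hab b hbmem)
  have hDWt : ∀ t ∈ Ioo a b, derivWithin g (Icc a b) t = Rd g b t := fun t ht =>
    derivWithin_eq_Rd hg hab ht (hnc t ht)
  have hcont : ContinuousOn (derivWithin g (Icc a b)) (Icc a b) := by
    intro t ht
    rw [Metric.continuousWithinAt_iff]
    intro δ hδ
    rcases eq_or_lt_of_le ht.1 with h | h
    · -- t = a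
      subst h
      obtain ⟨η, hηpos, hη⟩ : ∃ η > 0, ∀ s ∈ Ioo a (a + η), s ∈ Ioo a b →
          d₀ ≤ Ld g a s ∧ Rd g b s < d₀ + δ := by
        refine right_lim hg hab ⟨le_refl a, hab⟩ (fun u hu => d0_le_slope hg hab h0 hu) ?_
          h0.continuousWithinAt hδ
        intro δ'' hδ''
        have hev := (tendsto_slope_a hab h0).eventually
          (gt_mem_nhds (lt_add_of_pos_right d₀ hδ''))
        obtain ⟨u, hu1, hu2⟩ := (hev.and (Ioo_mem_nhdsGT_of_mem ⟨le_refl a, hab⟩)).exists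
        exact ⟨u, hu2, hu1⟩
      refine ⟨min η (b - a), lt_min hηpos (by linarith), fun s hs hdist => ?_⟩
      rcases eq_or_lt_of_le hs.1 with hsa | hsa
      · rw [← hsa]; simp [hδ]
      · have hsb : s < b := by
          have h2 := lt_of_lt_of_le hdist (min_le_right _ _)
          rw [Real.dist_eq, abs_of_pos (by linarith)] at h2
          linarith
        have h3 := hη s ⟨hsa, by
          have h4 := lt_of_lt_of_le hdist (min_le_left _ _)
          rw [Real.dist_eq, abs_of_pos (by linarith)] at h4
          linarith⟩ ⟨hsa, hsb⟩
        rw [hDWt s ⟨hsa, hsb⟩, hDWa, Real.dist_eq, abs_lt]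
        have h5 : d₀ ≤ Rd g b s := h3.1.trans (Ld_le_Rd hg ⟨hsa, hsb⟩)
        exact ⟨by linarith [h3.2], by linarith [h5]⟩
    rcases eq_or_lt_of_le ht.2 with h' | h'
    · -- t = b
      rw [h']
      obtain ⟨η, hηpos, hη⟩ : ∃ η > 0, ∀ s ∈ Ioo (b - η) b, s ∈ Ioo a b →
          d₁ - δ < Ld g a s ∧ Rd g b s ≤ d₁ := by
        refine left_lim hg hab ⟨hab, le_refl b⟩ (fun u hu => slope_le_d1 hg hab h1 hu) ?_
          h1.continuousWithinAt hδ
        intro δ'' hδ''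
        have hev := (tendsto_slope_b hab h1).eventually
          (lt_mem_nhds (by linarith : d₁ - δ'' < d₁))
        obtain ⟨u, hu1, hu2⟩ := (hev.and (Ioo_mem_nhdsLT_of_mem ⟨hab, le_refl b⟩)).exists
        exact ⟨u, hu2, hu1⟩
      refine ⟨min η (b - a), lt_min hηpos (by linarith), fun s hs hdist => ?_⟩
      rcases eq_or_lt_of_le hs.2 with hsb | hsb
      · rw [hsb]; simp [hδ]
      · have hsa : a < s := by
          have h2 := lt_of_lt_of_le hdist (min_le_right _ _)
          rw [Real.dist_eq, abs_of_neg (by linarith)] at h2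
          linarith
        have h3 := hη s ⟨by
          have h4 := lt_of_lt_of_le hdist (min_le_left _ _)
          rw [Real.dist_eq, abs_of_neg (by linarith)] at h4
          linarith, hsb⟩ ⟨hsa, hsb⟩
        rw [hDWt s ⟨hsa, hsb⟩, hDWb, Real.dist_eq, abs_lt]
        have h5 : Ld g a s ≤ Rd g b s := Ld_le_Rd hg ⟨hsa, hsb⟩
        exact ⟨by linarith [h3.1, h5], by linarith [h3.2]⟩
    · -- interior
      have htIoo : t ∈ Ioo a b := ⟨h, h'⟩
      have hLR := hnc t htIoo
      set v := Rd g b t with hv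
      obtain ⟨ηR, hηRpos, hηR⟩ : ∃ η > 0, ∀ s ∈ Ioo t (t + η), s ∈ Ioo a b →
          v ≤ Ld g a s ∧ Rd g b s < v + δ := by
        refine right_lim hg hab ⟨htIoo.1.le, htIoo.2⟩ (fun u hu => Rd_le_slope hg htIoo hu) ?_
          (continuousWithinAt_interior hg htIoo) hδ
        intro δ'' hδ''
        have hlt : Rd g b t < Rd g b t + δ'' := lt_add_of_pos_right _ hδ''
        obtain ⟨z, hz, hzlt⟩ := exists_lt_of_csInf_lt ((nonempty_Ioo.2 htIoo.2).image _) hlt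
        obtain ⟨u, hu, rfl⟩ := hz
        exact ⟨u, hu, hzlt⟩
      obtain ⟨ηL, hηLpos, hηL⟩ : ∃ η > 0, ∀ s ∈ Ioo (t - η) t, s ∈ Ioo a b →
          Ld g a t - δ < Ld g a s ∧ Rd g b s ≤ Ld g a t := by
        refine left_lim hg hab ⟨htIoo.1, htIoo.2.le⟩ (fun u hu => slope_le_Ld hg htIoo hu) ?_
          (continuousWithinAt_interior hg htIoo) hδ
        intro δ'' hδ''
        have hlt : Ld g a t - δ'' < Ld g a t := by linarith
        obtain ⟨z, hz, hzlt⟩ := exists_lt_of_lt_csSup ((nonempty_Ioo.2 htIoo.1).image _) hlt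
        obtain ⟨u, hu, rfl⟩ := hz
        exact ⟨u, hu, hzlt⟩
      refine ⟨min ηL (min ηR (min (t - a) (b - t))),
        lt_min hηLpos (lt_min hηRpos (lt_min (by linarith) (by linarith))), fun s hs hdist => ?_⟩
      have hd1 := lt_of_lt_of_le hdist (min_le_left _ _)
      have hd2 := lt_of_lt_of_le hdist ((min_le_right _ _).trans (min_le_left _ _))
      have hd3 := lt_of_lt_of_le hdist ((min_le_right _ _).trans ((min_le_right _ _).trans (min_le_left _ _)))
      have hd4 := lt_of_lt_of_le hdist ((min_le_right _ _).trans ((min_le_right _ _).trans (min_le_right _ _)))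
      rw [Real.dist_eq, abs_lt] at hd3 hd4
      have hsIoo : s ∈ Ioo a b := ⟨by linarith [hd3.1], by linarith [hd4.2]⟩
      rcases lt_trichotomy s t with hst | hst | hst
      · have h3 := hηL s ⟨by
          rw [Real.dist_eq, abs_of_neg (by linarith)] at hd1
          linarith, hst⟩ hsIoo
        rw [hDWt s hsIoo, hDWt t htIoo, Real.dist_eq, abs_lt]
        have h5 : Ld g a s ≤ Rd g b s := Ld_le_Rd hg hsIoo
        rw [← hv, ← hLR]
        exact ⟨by linarith [h3.1, h5], by linarith [h3.2, hLR]⟩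
      · subst hst; simp [hδ]
      · have h3 := hηR s ⟨hst, by
          rw [Real.dist_eq, abs_of_pos (by linarith)] at hd2
          linarith⟩ hsIoo
        rw [hDWt s hsIoo, hDWt t htIoo, Real.dist_eq, abs_lt]
        have h5 : v ≤ Rd g b s := h3.1.trans (Ld_le_Rd hg hsIoo)
        exact ⟨by linarith [h3.2], by linarith [h5]⟩
  have h11 : (1 : WithTop ℕ∞) = (0 : ℕ) + 1 := by norm_num
  rw [h11, contDiffOn_succ_iff_derivWithin (uniqueDiffOn_Icc hab)]
  exact ⟨hdiff, by simp, contDiffOn_zero.2 hcont⟩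

end Final

end CM1

/-- (C¹-smoothness of optimal convex solutions.) If `x̂` minimizes
`I(x) = ∫_{t₀}^{t₁} f(t, x, ẋ) dt` over convex functions on `[t₀, t₁]` with graph in `U`,
fixed endpoint values and endpoint derivative constraints, if the graph of `x̂` lies in the
interior of `U` on `(t₀, t₁)`, and if the strong Legendre condition `f_{ẋẋ} > 0` holds on
`Γ = {(t, x̂(t), d) : d ∈ ∂x̂(t)}`, then `x̂ ∈ C¹[t₀, t₁]`. -/
theorem convex_minimizer_C1
    (U : Set (ℝ × ℝ)) (hUconv : Convex ℝ U) (hUint : (interior U).Nonempty)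
    (t₀ t₁ s₀ s₁ x₀ x₁ : ℝ) (ht : t₀ < t₁) (hs : s₀ < s₁)
    (f : ℝ × ℝ × ℝ → ℝ) (hf : ContDiff ℝ 2 f)
    (xhat : ℝ → ℝ)
    (hadm : ConvexOn ℝ (Set.Icc t₀ t₁) xhat ∧
      (∀ t ∈ Set.Icc t₀ t₁, (t, xhat t) ∈ U) ∧
      xhat t₀ = x₀ ∧ xhat t₁ = x₁ ∧
      (∃ d, s₀ ≤ d ∧ HasDerivWithinAt xhat d (Set.Icc t₀ t₁) t₀) ∧
      (∃ d, d ≤ s₁ ∧ HasDerivWithinAt xhat d (Set.Icc t₀ t₁) t₁))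
    (hgraph : ∀ t ∈ Set.Ioo t₀ t₁, (t, xhat t) ∈ interior U)
    (hLegendre : ∀ t ∈ Set.Icc t₀ t₁, ∀ d : ℝ,
      (∀ s ∈ Set.Icc t₀ t₁, xhat t + d * (s - t) ≤ xhat s) →
      0 < iteratedDeriv 2 (fun w => f (t, xhat t, w)) d)
    (hopt : ∀ x : ℝ → ℝ,
      (ConvexOn ℝ (Set.Icc t₀ t₁) x ∧
        (∀ t ∈ Set.Icc t₀ t₁, (t, x t) ∈ U) ∧
        x t₀ = x₀ ∧ x t₁ = x₁ ∧
        (∃ d, s₀ ≤ d ∧ HasDerivWithinAt x d (Set.Icc t₀ t₁) t₀) ∧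
        (∃ d, d ≤ s₁ ∧ HasDerivWithinAt x d (Set.Icc t₀ t₁) t₁)) →
      (∫ t in Set.Icc t₀ t₁, f (t, xhat t, derivWithin xhat (Set.Icc t₀ t₁) t)) ≤
        ∫ t in Set.Icc t₀ t₁, f (t, x t, derivWithin x (Set.Icc t₀ t₁) t)) :
    ContDiffOn ℝ 1 xhat (Set.Icc t₀ t₁) := by
  obtain ⟨hconv, hgr, he0, he1, ⟨d₀, hd₀, h0⟩, ⟨d₁, hd₁, h1⟩⟩ := hadm
  refine CM1.reg_main U hUconv hf hconv ht hgr hd₀ h0 hd₁ h1 hLegendre ?_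
  intro x hx
  exact hopt x ⟨hx.1, hx.2.1, hx.2.2.1.trans he0, hx.2.2.2.1.trans he1,
    hx.2.2.2.2.1, hx.2.2.2.2.2⟩
end

section
/- Let τ > 0 and let x, y ∈ C²([−τ, τ], ℝ) satisfy x(0) = y(0) = ẋ(0) = ẏ(0) = 0. Assume ẍ(t) ≠ 0 and ÿ(t) ≠ 0 for all |t| ≤ τ. Then for every t with 0 < |t| ≤ τ one has x(t) ≠ 0, y(t) ≠ 0, and |ẋ(t)²/x(t) − ẏ(t)²/y(t)| ≤ (8/3) · ‖ẍ‖ ‖ÿ‖ ‖ẍ − ÿ‖ / ( inf_{|s| ≤ τ} |ẍ(s)| · inf_{|s| ≤ τ} |ÿ(s)| ). -/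
open Set

lemma auxMono {a b : ℝ} {f f' : ℝ → ℝ}
    (hd : ∀ t ∈ Icc a b, HasDerivWithinAt f (f' t) (Icc a b) t)
    (h0 : ∀ t ∈ Icc a b, 0 ≤ f' t) : MonotoneOn f (Icc a b) := by
  apply monotoneOn_of_deriv_nonneg (convex_Icc a b)
  · exact fun t ht => (hd t ht).continuousWithinAt
  · intro t ht
    rw [interior_Icc] at ht
    exact (((hd t (Ioo_subset_Icc_self ht)).hasDerivAt
      (Icc_mem_nhds ht.1 ht.2)).differentiableAt).differentiableWithinAt
  · intro t ht
    rw [interior_Icc] at ht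
    rw [((hd t (Ioo_subset_Icc_self ht)).hasDerivAt (Icc_mem_nhds ht.1 ht.2)).deriv]
    exact h0 t (Ioo_subset_Icc_self ht)

lemma auxSigned {τ : ℝ} (hτ : 0 ≤ τ) {f f' : ℝ → ℝ}
    (hd : ∀ t ∈ Icc (-τ) τ, HasDerivWithinAt f (f' t) (Icc (-τ) τ) t)
    (hf0 : f 0 = 0)
    (h0 : ∀ t ∈ Icc (-τ) τ, 0 ≤ f' t) :
    ∀ t ∈ Icc (-τ) τ, (0 ≤ t → 0 ≤ f t) ∧ (t ≤ 0 → f t ≤ 0) := by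
  have hmono := auxMono hd h0
  have h0mem : (0:ℝ) ∈ Icc (-τ) τ := ⟨neg_nonpos.2 hτ, hτ⟩
  intro t ht
  constructor
  · intro h; rw [← hf0]; exact hmono h0mem ht h
  · intro h; rw [← hf0]; exact hmono ht h0mem h

lemma auxNonneg {τ : ℝ} (hτ : 0 ≤ τ) {f f' : ℝ → ℝ}
    (hd : ∀ t ∈ Icc (-τ) τ, HasDerivWithinAt f (f' t) (Icc (-τ) τ) t)
    (hf0 : f 0 = 0)
    (hpos : ∀ t ∈ Icc (-τ) τ, 0 ≤ t → 0 ≤ f' t)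
    (hneg : ∀ t ∈ Icc (-τ) τ, t ≤ 0 → f' t ≤ 0) :
    ∀ t ∈ Icc (-τ) τ, 0 ≤ f t := by
  have hsub1 : Icc (0:ℝ) τ ⊆ Icc (-τ) τ := Icc_subset_Icc (by linarith) le_rfl
  have hsub2 : Icc (-τ) (0:ℝ) ⊆ Icc (-τ) τ := Icc_subset_Icc le_rfl hτ
  intro t ht
  rcases le_total 0 t with h | h
  · have hmono : MonotoneOn f (Icc (0:ℝ) τ) :=
      auxMono (fun s hs => (hd s (hsub1 hs)).mono hsub1)
        (fun s hs => hpos s (hsub1 hs) hs.1)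
    have := hmono (left_mem_Icc.2 hτ) ⟨h, ht.2⟩ h
    rwa [hf0] at this
  · have hmono : MonotoneOn (fun s => -f s) (Icc (-τ) (0:ℝ)) :=
      auxMono (fun s hs => ((hd s (hsub2 hs)).mono hsub2).neg)
        (fun s hs => neg_nonneg.2 (hneg s (hsub2 hs) hs.2))
    have := hmono ⟨ht.1, h⟩ (right_mem_Icc.2 (by linarith)) h
    simp only [neg_le_neg_iff] at this
    rw [← hf0]; simpa using this

set_option maxHeartbeats 2000000 in
/-- (Key estimate, Lemma on `ẋ²/x − ẏ²/y`.) For `x, y ∈ C²[−τ, τ]` with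
`x(0) = y(0) = ẋ(0) = ẏ(0) = 0` and nonvanishing second derivatives, one has `x(t) ≠ 0`,
`y(t) ≠ 0` for `0 < |t| ≤ τ` and
`|ẋ²/x − ẏ²/y| ≤ (8/3)‖ẍ‖‖ÿ‖‖ẍ−ÿ‖/(inf|ẍ| · inf|ÿ|)`. -/
theorem key_estimate_quotient
    (τ : ℝ) (hτ : 0 < τ)
    (x y x' y' x'' y'' : ℝ → ℝ)
    (hx1 : ∀ t ∈ Set.Icc (-τ) τ, HasDerivWithinAt x (x' t) (Set.Icc (-τ) τ) t)
    (hx2 : ∀ t ∈ Set.Icc (-τ) τ, HasDerivWithinAt x' (x'' t) (Set.Icc (-τ) τ) t)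
    (hy1 : ∀ t ∈ Set.Icc (-τ) τ, HasDerivWithinAt y (y' t) (Set.Icc (-τ) τ) t)
    (hy2 : ∀ t ∈ Set.Icc (-τ) τ, HasDerivWithinAt y' (y'' t) (Set.Icc (-τ) τ) t)
    (hcx : ContinuousOn x'' (Set.Icc (-τ) τ))
    (hcy : ContinuousOn y'' (Set.Icc (-τ) τ))
    (hx0 : x 0 = 0) (hy0 : y 0 = 0) (hx'0 : x' 0 = 0) (hy'0 : y' 0 = 0)
    (hxne : ∀ t ∈ Set.Icc (-τ) τ, x'' t ≠ 0)
    (hyne : ∀ t ∈ Set.Icc (-τ) τ, y'' t ≠ 0) :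
    ∀ t ∈ Set.Icc (-τ) τ, t ≠ 0 →
      x t ≠ 0 ∧ y t ≠ 0 ∧
      |x' t ^ 2 / x t - y' t ^ 2 / y t| ≤
        (8 / 3) * (sSup ((fun s => |x'' s|) '' Set.Icc (-τ) τ) *
            sSup ((fun s => |y'' s|) '' Set.Icc (-τ) τ) *
            sSup ((fun s => |x'' s - y'' s|) '' Set.Icc (-τ) τ)) /
          (sInf ((fun s => |x'' s|) '' Set.Icc (-τ) τ) *
            sInf ((fun s => |y'' s|) '' Set.Icc (-τ) τ)) := by
  have hτ0 : (0:ℝ) ≤ τ := hτ.le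
  have h0S : (0:ℝ) ∈ Icc (-τ) τ := ⟨by linarith, hτ0⟩
  set S := Icc (-τ) τ with hSdef
  set A := sSup ((fun s => |x'' s|) '' S) with hA
  set B := sSup ((fun s => |y'' s|) '' S) with hB
  set D := sSup ((fun s => |x'' s - y'' s|) '' S) with hD
  set a0 := sInf ((fun s => |x'' s|) '' S) with ha0
  set b0 := sInf ((fun s => |y'' s|) '' S) with hb0
  have hScomp : IsCompact S := isCompact_Icc
  have hconv : Convex ℝ S := convex_Icc _ _
  -- compact images
  have hIX : IsCompact ((fun s => |x'' s|) '' S) := hScomp.image_of_continuousOn hcx.abs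
  have hIY : IsCompact ((fun s => |y'' s|) '' S) := hScomp.image_of_continuousOn hcy.abs
  have hID : IsCompact ((fun s => |x'' s - y'' s|) '' S) :=
    hScomp.image_of_continuousOn (hcx.sub hcy).abs
  -- pointwise bounds by sup / inf
  have hA_ub : ∀ s ∈ S, |x'' s| ≤ A := fun s hs =>
    le_csSup hIX.bddAbove (mem_image_of_mem _ hs)
  have hB_ub : ∀ s ∈ S, |y'' s| ≤ B := fun s hs =>
    le_csSup hIY.bddAbove (mem_image_of_mem _ hs)
  have hD_ub : ∀ s ∈ S, |x'' s - y'' s| ≤ D := fun s hs =>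
    le_csSup hID.bddAbove (mem_image_of_mem _ hs)
  have ha_lb : ∀ s ∈ S, a0 ≤ |x'' s| := fun s hs =>
    csInf_le hIX.bddBelow (mem_image_of_mem _ hs)
  have hb_lb : ∀ s ∈ S, b0 ≤ |y'' s| := fun s hs =>
    csInf_le hIY.bddBelow (mem_image_of_mem _ hs)
  have ha_pos : 0 < a0 := by
    obtain ⟨s0, hs0, hval⟩ := hIX.sInf_mem ⟨_, mem_image_of_mem _ h0S⟩
    rw [ha0, ← hval]
    exact abs_pos.2 (hxne s0 hs0)
  have hb_pos : 0 < b0 := by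
    obtain ⟨s0, hs0, hval⟩ := hIY.sInf_mem ⟨_, mem_image_of_mem _ h0S⟩
    rw [hb0, ← hval]
    exact abs_pos.2 (hyne s0 hs0)
  have hA_pos : 0 < A := lt_of_lt_of_le ha_pos ((ha_lb 0 h0S).trans (hA_ub 0 h0S))
  have hB_pos : 0 < B := lt_of_lt_of_le hb_pos ((hb_lb 0 h0S).trans (hB_ub 0 h0S))
  have hD_nn : 0 ≤ D := le_trans (abs_nonneg _) (hD_ub 0 h0S)
  clear_value A B D a0 b0
  -- sign constancy of x'' and y''
  have hsign : ∀ (g : ℝ → ℝ), ContinuousOn g S → (∀ s ∈ S, g s ≠ 0) →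
      ∀ s ∈ S, 0 < g 0 * g s := by
    intro g hg hgne s hs
    by_contra hc
    push_neg at hc
    have hne0 : g 0 * g s ≠ 0 := mul_ne_zero (hgne 0 h0S) (hgne s hs)
    have hlt : g 0 * g s < 0 := lt_of_le_of_ne hc hne0
    have husub : uIcc (0:ℝ) s ⊆ S := hconv.ordConnected.uIcc_subset h0S hs
    have h0mem : (0:ℝ) ∈ uIcc (g 0) (g s) := by
      rcases mul_neg_iff.1 hlt with ⟨h1, h2⟩ | ⟨h1, h2⟩
      · exact Set.mem_uIcc.2 (Or.inr ⟨h2.le, h1.le⟩)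
      · exact Set.mem_uIcc.2 (Or.inl ⟨h1.le, h2.le⟩)
    obtain ⟨u, hu, hu0⟩ := intermediate_value_uIcc (hg.mono husub) h0mem
    exact hgne u (husub hu) hu0
  -- signs
  set σ : ℝ := if 0 < x'' 0 then 1 else -1 with hσdef
  set ρ : ℝ := if 0 < y'' 0 then 1 else -1 with hρdef
  have hσ1 : σ = 1 ∨ σ = -1 := by rw [hσdef]; split <;> simp
  have hρ1 : ρ = 1 ∨ ρ = -1 := by rw [hρdef]; split <;> simp
  have hσx : ∀ s ∈ S, σ * x'' s = |x'' s| := by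
    intro s hs
    have hp := hsign x'' hcx hxne s hs
    rw [hσdef]
    split
    · next h =>
      have hpos : 0 < x'' s := by nlinarith
      rw [abs_of_pos hpos]; ring
    · next h =>
      have h0' : x'' 0 < 0 := (hxne 0 h0S).lt_of_le (not_lt.1 h)
      have hneg : x'' s < 0 := by nlinarith
      rw [abs_of_neg hneg]; ring
  have hρy : ∀ s ∈ S, ρ * y'' s = |y'' s| := by
    intro s hs
    have hp := hsign y'' hcy hyne s hs
    rw [hρdef]
    split
    · next h =>
      have hpos : 0 < y'' s := by nlinarith
      rw [abs_of_pos hpos]; ring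
    · next h =>
      have h0' : y'' 0 < 0 := (hyne 0 h0S).lt_of_le (not_lt.1 h)
      have hneg : y'' s < 0 := by nlinarith
      rw [abs_of_neg hneg]; ring
  have hσabs : ∀ r : ℝ, σ * r ≤ |r| := by
    intro r; rcases hσ1 with h | h <;> rw [h] <;> simp [le_abs_self, neg_le_abs]
  have hρabs : ∀ r : ℝ, ρ * r ≤ |r| := by
    intro r; rcases hρ1 with h | h <;> rw [h] <;> simp [le_abs_self, neg_le_abs]
  -- first order absolute bounds (mean value inequality)
  have hX' : ∀ s ∈ S, |x' s| ≤ A * |s| := by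
    intro s hs
    have := hconv.norm_image_sub_le_of_norm_hasDerivWithin_le hx2
      (fun u hu => by simpa [Real.norm_eq_abs] using hA_ub u hu) h0S hs
    simpa [Real.norm_eq_abs, hx'0] using this
  have hY' : ∀ s ∈ S, |y' s| ≤ B * |s| := by
    intro s hs
    have := hconv.norm_image_sub_le_of_norm_hasDerivWithin_le hy2
      (fun u hu => by simpa [Real.norm_eq_abs] using hB_ub u hu) h0S hs
    simpa [Real.norm_eq_abs, hy'0] using this
  have hD' : ∀ s ∈ S, |x' s - y' s| ≤ D * |s| := by
    intro s hs
    have := hconv.norm_image_sub_le_of_norm_hasDerivWithin_le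
      (f := fun u => x' u - y' u) (f' := fun u => x'' u - y'' u)
      (fun u hu => (hx2 u hu).sub (hy2 u hu))
      (fun u hu => by simpa [Real.norm_eq_abs] using hD_ub u hu) h0S hs
    simpa [Real.norm_eq_abs, hx'0, hy'0] using this
  -- second order upper bounds
  have hsecond : ∀ (f f' : ℝ → ℝ) (C : ℝ), 0 ≤ C →
      (∀ s ∈ S, HasDerivWithinAt f (f' s) S s) → f 0 = 0 →
      (∀ s ∈ S, |f' s| ≤ C * |s|) →
      ∀ s ∈ S, |f s| ≤ C * s ^ 2 / 2 := by
    intro f f' C hC hder hf0 hbd s hs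
    have hq : ∀ s ∈ S, HasDerivWithinAt (fun u => C * u ^ 2 / 2) (C * s) S s := by
      intro s hs
      have := (((hasDerivAt_pow 2 s).const_mul C).div_const 2).hasDerivWithinAt (s := S)
      convert this using 1
      any_goals rfl
      ring
    have h1 : ∀ s ∈ S, 0 ≤ C * s ^ 2 / 2 - f s := by
      apply auxNonneg hτ0 (f' := fun s => C * s - f' s)
      · exact fun s hs => (hq s hs).sub (hder s hs)
      · simp [hf0]
      · intro s hs h
        have := hbd s hs
        rw [abs_of_nonneg h] at this
        have := abs_le.1 this
        linarith [this.2]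
      · intro s hs h
        have := hbd s hs
        rw [abs_of_nonpos h] at this
        have := abs_le.1 this
        linarith [this.1]
    have h2 : ∀ s ∈ S, 0 ≤ C * s ^ 2 / 2 + f s := by
      apply auxNonneg hτ0 (f' := fun s => C * s + f' s)
      · exact fun s hs => (hq s hs).add (hder s hs)
      · simp [hf0]
      · intro s hs h
        have := hbd s hs
        rw [abs_of_nonneg h] at this
        have := abs_le.1 this
        linarith [this.1]
      · intro s hs h
        have := hbd s hs
        rw [abs_of_nonpos h] at this
        have := abs_le.1 this
        linarith [this.2]
    have := h1 s hs
    have := h2 s hs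
    rw [abs_le]
    constructor <;> linarith
  have hX : ∀ s ∈ S, |x s| ≤ A * s ^ 2 / 2 :=
    hsecond x x' A hA_pos.le hx1 hx0 hX'
  have hY : ∀ s ∈ S, |y s| ≤ B * s ^ 2 / 2 :=
    hsecond y y' B hB_pos.le hy1 hy0 hY'
  have hXY : ∀ s ∈ S, |x s - y s| ≤ D * s ^ 2 / 2 :=
    hsecond (fun u => x u - y u) (fun u => x' u - y' u) D hD_nn
      (fun s hs => (hx1 s hs).sub (hy1 s hs)) (by simp [hx0, hy0]) hD'
  -- lower bounds
  have hE1 : ∀ s ∈ S, (0 ≤ s → a0 * s ≤ σ * x' s) ∧ (s ≤ 0 → σ * x' s ≤ a0 * s) := by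
    have := auxSigned hτ0 (f := fun u => σ * x' u - a0 * u)
      (f' := fun u => σ * x'' u - a0)
      (fun s hs => (((hx2 s hs).const_mul σ)).sub
        (by simpa using ((hasDerivAt_id s).const_mul a0).hasDerivWithinAt (s := S)))
      (by simp [hx'0])
      (fun s hs => by rw [sub_nonneg, hσx s hs]; exact ha_lb s hs)
    intro s hs
    refine ⟨fun h => ?_, fun h => ?_⟩
    · linarith [show (0:ℝ) ≤ σ * x' s - a0 * s from (this s hs).1 h]
    · linarith [show σ * x' s - a0 * s ≤ (0:ℝ) from (this s hs).2 h]
  have hF1 : ∀ s ∈ S, (0 ≤ s → b0 * s ≤ ρ * y' s) ∧ (s ≤ 0 → ρ * y' s ≤ b0 * s) := by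
    have := auxSigned hτ0 (f := fun u => ρ * y' u - b0 * u)
      (f' := fun u => ρ * y'' u - b0)
      (fun s hs => (((hy2 s hs).const_mul ρ)).sub
        (by simpa using ((hasDerivAt_id s).const_mul b0).hasDerivWithinAt (s := S)))
      (by simp [hy'0])
      (fun s hs => by rw [sub_nonneg, hρy s hs]; exact hb_lb s hs)
    intro s hs
    refine ⟨fun h => ?_, fun h => ?_⟩
    · linarith [show (0:ℝ) ≤ ρ * y' s - b0 * s from (this s hs).1 h]
    · linarith [show ρ * y' s - b0 * s ≤ (0:ℝ) from (this s hs).2 h]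
  have hXlow : ∀ s ∈ S, a0 * s ^ 2 / 2 ≤ |x s| := by
    have hnn := auxNonneg hτ0 (f := fun u => σ * x u - a0 * u ^ 2 / 2)
      (f' := fun u => σ * x' u - a0 * u)
      (fun s hs => ((hx1 s hs).const_mul σ).sub
        (by
          have := (((hasDerivAt_pow 2 s).const_mul a0).div_const 2).hasDerivWithinAt (s := S)
          convert this using 1; ring))
      (by simp [hx0])
      (fun s hs h => by
        show (0:ℝ) ≤ σ * x' s - a0 * s
        linarith [(hE1 s hs).1 h])
      (fun s hs h => by
        show σ * x' s - a0 * s ≤ (0:ℝ)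
        linarith [(hE1 s hs).2 h])
    intro s hs
    have h1 : (0:ℝ) ≤ σ * x s - a0 * s ^ 2 / 2 := hnn s hs
    have h2 := hσabs (x s)
    linarith
  have hYlow : ∀ s ∈ S, b0 * s ^ 2 / 2 ≤ |y s| := by
    have hnn := auxNonneg hτ0 (f := fun u => ρ * y u - b0 * u ^ 2 / 2)
      (f' := fun u => ρ * y' u - b0 * u)
      (fun s hs => ((hy1 s hs).const_mul ρ).sub
        (by
          have := (((hasDerivAt_pow 2 s).const_mul b0).div_const 2).hasDerivWithinAt (s := S)
          convert this using 1; ring))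
      (by simp [hy0])
      (fun s hs h => by
        show (0:ℝ) ≤ ρ * y' s - b0 * s
        linarith [(hF1 s hs).1 h])
      (fun s hs h => by
        show ρ * y' s - b0 * s ≤ (0:ℝ)
        linarith [(hF1 s hs).2 h])
    intro s hs
    have h1 : (0:ℝ) ≤ ρ * y s - b0 * s ^ 2 / 2 := hnn s hs
    have h2 := hρabs (y s)
    linarith
  -- Wronskian-type function
  set w : ℝ → ℝ := fun u => x' u * y u - y' u * x u with hwdef
  have hwder : ∀ s ∈ S, HasDerivWithinAt w (x'' s * y s - y'' s * x s) S s := by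
    intro s hs
    have h1 := ((hx2 s hs).mul (hy1 s hs)).sub ((hy2 s hs).mul (hx1 s hs))
    convert h1 using 1
    any_goals rfl
    ring
  have hw'bd : ∀ s ∈ S, |x'' s * y s - y'' s * x s| ≤ B * D * s ^ 2 := by
    intro s hs
    have hEq : x'' s * y s - y'' s * x s
        = (x'' s - y'' s) * y s + y'' s * (y s - x s) := by ring
    rw [hEq]
    have h1 : |(x'' s - y'' s) * y s| ≤ D * (B * s ^ 2 / 2) := by
      rw [abs_mul]
      exact mul_le_mul (hD_ub s hs) (hY s hs) (abs_nonneg _) hD_nn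
    have h2 : |y'' s * (y s - x s)| ≤ B * (D * s ^ 2 / 2) := by
      rw [abs_mul, abs_sub_comm]
      exact mul_le_mul (hB_ub s hs) (hXY s hs) (abs_nonneg _) hB_pos.le
    calc |(x'' s - y'' s) * y s + y'' s * (y s - x s)|
        ≤ |(x'' s - y'' s) * y s| + |y'' s * (y s - x s)| := abs_add_le _ _
      _ ≤ D * (B * s ^ 2 / 2) + B * (D * s ^ 2 / 2) := add_le_add h1 h2
      _ = B * D * s ^ 2 := by ring
  have hcube : ∀ s ∈ S, HasDerivWithinAt (fun u => B * D * u ^ 3 / 3)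
      (B * D * s ^ 2) S s := by
    intro s hs
    have := (((hasDerivAt_pow 3 s).const_mul (B * D)).div_const 3).hasDerivWithinAt (s := S)
    convert this using 1
    any_goals rfl
    ring
  have hwsigned₁ := auxSigned hτ0 (f := fun u => B * D * u ^ 3 / 3 - w u)
    (f' := fun u => B * D * u ^ 2 - (x'' u * y u - y'' u * x u))
    (fun s hs => (hcube s hs).sub (hwder s hs))
    (by simp [hwdef, hx0, hy0, hx'0, hy'0])
    (fun s hs => by
      have := (abs_le.1 (hw'bd s hs)).2
      show (0:ℝ) ≤ B * D * s ^ 2 - (x'' s * y s - y'' s * x s)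
      linarith)
  have hwsigned₂ := auxSigned hτ0 (f := fun u => B * D * u ^ 3 / 3 + w u)
    (f' := fun u => B * D * u ^ 2 + (x'' u * y u - y'' u * x u))
    (fun s hs => (hcube s hs).add (hwder s hs))
    (by simp [hwdef, hx0, hy0, hx'0, hy'0])
    (fun s hs => by
      have := (abs_le.1 (hw'bd s hs)).1
      show (0:ℝ) ≤ B * D * s ^ 2 + (x'' s * y s - y'' s * x s)
      linarith)
  have hwbd : ∀ s ∈ S, |w s| ≤ B * D * s ^ 2 * |s| / 3 := by
    intro s hs
    rcases le_total 0 s with h | h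
    · have c1 : (0:ℝ) ≤ B * D * s ^ 3 / 3 - w s := (hwsigned₁ s hs).1 h
      have c2 : (0:ℝ) ≤ B * D * s ^ 3 / 3 + w s := (hwsigned₂ s hs).1 h
      rw [abs_of_nonneg h, abs_le]
      constructor <;> nlinarith
    · have c1 : B * D * s ^ 3 / 3 - w s ≤ (0:ℝ) := (hwsigned₁ s hs).2 h
      have c2 : B * D * s ^ 3 / 3 + w s ≤ (0:ℝ) := (hwsigned₂ s hs).2 h
      rw [abs_of_nonpos h, abs_le]
      constructor <;> nlinarith
  -- the main numerator
  set n : ℝ → ℝ := fun u => x' u ^ 2 * y u - y' u ^ 2 * x u with hndef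
  set n' : ℝ → ℝ := fun u =>
    2 * (x'' u * w u + y' u * x u * (x'' u - y'' u)) + x' u * y' u * (x' u - y' u)
    with hn'def
  have hnder : ∀ s ∈ S, HasDerivWithinAt n (n' s) S s := by
    intro s hs
    have h1 := (((hx2 s hs).pow 2).mul (hy1 s hs)).sub
      (((hy2 s hs).pow 2).mul (hx1 s hs))
    convert h1 using 1
    any_goals rfl
    simp only [hn'def, hwdef, Pi.pow_apply]
    push_cast
    ring
  have hn'bd : ∀ s ∈ S, |n' s| ≤ 8 / 3 * (A * B * D) * (s ^ 2 * |s|) := by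
    intro s hs
    have e1 : |x'' s * w s| ≤ A * (B * D * s ^ 2 * |s| / 3) := by
      rw [abs_mul]
      exact mul_le_mul (hA_ub s hs) (hwbd s hs) (abs_nonneg _) hA_pos.le
    have hsnn : (0:ℝ) ≤ |s| := abs_nonneg s
    have hs2nn : (0:ℝ) ≤ s ^ 2 := sq_nonneg s
    have hAs : (0:ℝ) ≤ A * |s| := mul_nonneg hA_pos.le hsnn
    have hBs : (0:ℝ) ≤ B * |s| := mul_nonneg hB_pos.le hsnn
    have hAs2 : (0:ℝ) ≤ A * s ^ 2 / 2 :=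
      div_nonneg (mul_nonneg hA_pos.le hs2nn) (by norm_num)
    have e2 : |y' s * x s * (x'' s - y'' s)| ≤ B * |s| * (A * s ^ 2 / 2) * D := by
      rw [abs_mul, abs_mul]
      exact mul_le_mul
        (mul_le_mul (hY' s hs) (hX s hs) (abs_nonneg _) hBs)
        (hD_ub s hs) (abs_nonneg _) (mul_nonneg hBs hAs2)
    have e3 : |x' s * y' s * (x' s - y' s)| ≤ A * |s| * (B * |s|) * (D * |s|) := by
      rw [abs_mul, abs_mul]
      exact mul_le_mul
        (mul_le_mul (hX' s hs) (hY' s hs) (abs_nonneg _) hAs)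
        (hD' s hs) (abs_nonneg _) (mul_nonneg hAs hBs)
    have habs : |s| * |s| = s ^ 2 := by
      rw [abs_mul_abs_self]; ring
    have hstep : |n' s| ≤ 2 * (|x'' s * w s| + |y' s * x s * (x'' s - y'' s)|)
        + |x' s * y' s * (x' s - y' s)| := by
      have : n' s = 2 * (x'' s * w s + y' s * x s * (x'' s - y'' s))
          + x' s * y' s * (x' s - y' s) := by rw [hn'def]
      rw [this]
      calc |2 * (x'' s * w s + y' s * x s * (x'' s - y'' s))
            + x' s * y' s * (x' s - y' s)|
          ≤ |2 * (x'' s * w s + y' s * x s * (x'' s - y'' s))|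
            + |x' s * y' s * (x' s - y' s)| := abs_add_le _ _
        _ ≤ 2 * (|x'' s * w s| + |y' s * x s * (x'' s - y'' s)|)
            + |x' s * y' s * (x' s - y' s)| := by
            rw [abs_mul]
            have h2 : |(2:ℝ)| = 2 := by norm_num
            rw [h2]
            have := abs_add_le (x'' s * w s) (y' s * x s * (x'' s - y'' s))
            nlinarith [abs_nonneg (x'' s * w s + y' s * x s * (x'' s - y'' s))]
    have hfin : 2 * (A * (B * D * s ^ 2 * |s| / 3) + B * |s| * (A * s ^ 2 / 2) * D)
        + A * |s| * (B * |s|) * (D * |s|) = 8 / 3 * (A * B * D) * (s ^ 2 * |s|) := by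
      rw [← habs]; ring
    linarith [hstep, e1, e2, e3, hfin]
  have hquartic : ∀ s ∈ S, HasDerivWithinAt (fun u => 2 / 3 * (A * B * D) * u ^ 4)
      (8 / 3 * (A * B * D) * s ^ 3) S s := by
    intro s hs
    have := ((hasDerivAt_pow 4 s).const_mul (2 / 3 * (A * B * D))).hasDerivWithinAt (s := S)
    convert this using 1
    any_goals rfl
    push_cast
    ring
  have hn1 := auxNonneg hτ0 (f := fun u => 2 / 3 * (A * B * D) * u ^ 4 - n u)
    (f' := fun u => 8 / 3 * (A * B * D) * u ^ 3 - n' u)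
    (fun s hs => (hquartic s hs).sub (hnder s hs))
    (by simp [hndef, hx0, hy0, hx'0, hy'0])
    (fun s hs h => by
      show (0:ℝ) ≤ 8 / 3 * (A * B * D) * s ^ 3 - n' s
      have hb := hn'bd s hs
      rw [abs_of_nonneg h] at hb
      have := (abs_le.1 hb).2
      nlinarith)
    (fun s hs h => by
      show 8 / 3 * (A * B * D) * s ^ 3 - n' s ≤ (0:ℝ)
      have hb := hn'bd s hs
      rw [abs_of_nonpos h] at hb
      have := (abs_le.1 hb).1
      nlinarith)
  have hn2 := auxNonneg hτ0 (f := fun u => 2 / 3 * (A * B * D) * u ^ 4 + n u)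
    (f' := fun u => 8 / 3 * (A * B * D) * u ^ 3 + n' u)
    (fun s hs => (hquartic s hs).add (hnder s hs))
    (by simp [hndef, hx0, hy0, hx'0, hy'0])
    (fun s hs h => by
      show (0:ℝ) ≤ 8 / 3 * (A * B * D) * s ^ 3 + n' s
      have hb := hn'bd s hs
      rw [abs_of_nonneg h] at hb
      have := (abs_le.1 hb).1
      nlinarith)
    (fun s hs h => by
      show 8 / 3 * (A * B * D) * s ^ 3 + n' s ≤ (0:ℝ)
      have hb := hn'bd s hs
      rw [abs_of_nonpos h] at hb
      have := (abs_le.1 hb).2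
      nlinarith)
  have hnbd : ∀ s ∈ S, |n s| ≤ 2 / 3 * (A * B * D) * s ^ 4 := by
    intro s hs
    have c1 : (0:ℝ) ≤ 2 / 3 * (A * B * D) * s ^ 4 - n s := hn1 s hs
    have c2 : (0:ℝ) ≤ 2 / 3 * (A * B * D) * s ^ 4 + n s := hn2 s hs
    rw [abs_le]
    constructor <;> linarith
  -- final assembly
  intro t ht htne
  have ht2 : 0 < t ^ 2 := by positivity
  have hxt : a0 * t ^ 2 / 2 ≤ |x t| := hXlow t ht
  have hyt : b0 * t ^ 2 / 2 ≤ |y t| := hYlow t ht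
  have ht4 : (0:ℝ) < t ^ 4 := by nlinarith [ht2]
  have hxtpos : 0 < |x t| :=
    lt_of_lt_of_le (div_pos (mul_pos ha_pos ht2) (by norm_num)) hxt
  have hytpos : 0 < |y t| :=
    lt_of_lt_of_le (div_pos (mul_pos hb_pos ht2) (by norm_num)) hyt
  have hxne' : x t ≠ 0 := abs_pos.1 hxtpos
  have hyne' : y t ≠ 0 := abs_pos.1 hytpos
  refine ⟨hxne', hyne', ?_⟩
  have hnt : n t = x' t ^ 2 * y t - y' t ^ 2 * x t := by rw [hndef]
  have hkey : x' t ^ 2 / x t - y' t ^ 2 / y t = n t / (x t * y t) := by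
    rw [hnt]
    field_simp
  rw [hkey, abs_div, abs_mul]
  have hdenom : a0 * b0 * t ^ 4 / 4 ≤ |x t| * |y t| := by
    have := mul_le_mul hxt hyt (by positivity) (abs_nonneg (x t))
    nlinarith
  have hABD : (0:ℝ) ≤ 2 / 3 * (A * B * D) * t ^ 4 :=
    mul_nonneg (mul_nonneg (by norm_num)
      (mul_nonneg (mul_nonneg hA_pos.le hB_pos.le) hD_nn)) ht4.le
  have hdpos : (0:ℝ) < a0 * b0 * t ^ 4 / 4 :=
    div_pos (mul_pos (mul_pos ha_pos hb_pos) ht4) (by norm_num)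
  have hstep : |n t| / (|x t| * |y t|) ≤ (2 / 3 * (A * B * D) * t ^ 4) / (a0 * b0 * t ^ 4 / 4) :=
    div_le_div₀ hABD (hnbd t ht) hdpos hdenom
  have hfinal : (2 / 3 * (A * B * D) * t ^ 4) / (a0 * b0 * t ^ 4 / 4)
      = 8 / 3 * (A * B * D) / (a0 * b0) := by
    rw [div_eq_div_iff hdpos.ne' (mul_pos ha_pos hb_pos).ne']
    ring
  calc |n t| / (|x t| * |y t|)
      ≤ (2 / 3 * (A * B * D) * t ^ 4) / (a0 * b0 * t ^ 4 / 4) := hstep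
    _ = 8 / 3 * (A * B * D) / (a0 * b0) := hfinal
end

section
/- Let τ > 0 and let x, y ∈ C²([−τ, τ], ℝ) satisfy x(0) = y(0) = ẋ(0) = ẏ(0) = 0. Then for all |t| ≤ τ one has |ẋ(t)² y(t) − x(t) ẏ(t)²| ≤ (2/3) ‖ẍ‖ ‖ÿ‖ ‖ẍ − ÿ‖ t⁴. -/
open Set intervalIntegral MeasureTheory

private lemma abs_mul_le' {a b P Q : ℝ} (h1 : |a| ≤ P) (h2 : |b| ≤ Q) : |a * b| ≤ P * Q := by
  rw [abs_mul]
  exact mul_le_mul h1 h2 (abs_nonneg _) (le_trans (abs_nonneg _) h1)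

private lemma poly_bound (τ : ℝ) (hτ : 0 < τ) (g g' : ℝ → ℝ) (K : ℝ) (n : ℕ)
    (hg : ∀ s ∈ Icc (-τ) τ, HasDerivWithinAt g (g' s) (Icc (-τ) τ) s)
    (hc : ContinuousOn g' (Icc (-τ) τ))
    (h0 : g 0 = 0)
    (hb : ∀ s ∈ Icc (-τ) τ, |g' s| ≤ K * |s| ^ n)
    (t : ℝ) (ht : t ∈ Icc (-τ) τ) :
    |g t| ≤ K * |t| ^ (n + 1) / (n + 1) := by
  obtain ⟨ht1, ht2⟩ := ht
  have hτ0 : -τ ≤ 0 := by linarith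
  rcases le_or_gt 0 t with h0t | h0t
  · have hsub : Icc 0 t ⊆ Icc (-τ) τ := Icc_subset_Icc hτ0 ht2
    have hcont : ContinuousOn g (Icc 0 t) :=
      fun s hs => ((hg s (hsub hs)).continuousWithinAt).mono hsub
    have hderiv : ∀ s ∈ Ioo 0 t, HasDerivWithinAt g (g' s) (Ioi s) s := by
      intro s hs
      have hmem : Icc (-τ) τ ∈ nhds s :=
        Icc_mem_nhds (by linarith [hs.1]) (by linarith [hs.2])
      exact ((hg s (hsub (Ioo_subset_Icc_self hs))).hasDerivAt hmem).hasDerivWithinAt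
    have hint : IntervalIntegrable g' volume 0 t :=
      (hc.mono (by rw [uIcc_of_le h0t]; exact hsub)).intervalIntegrable
    have heq := integral_eq_sub_of_hasDeriv_right_of_le h0t hcont hderiv hint
    have habs : |g t| ≤ ∫ s in (0:ℝ)..t, |g' s| := by
      rw [h0, sub_zero] at heq
      rw [← heq]
      exact abs_integral_le_integral_abs h0t
    have hmono : (∫ s in (0:ℝ)..t, |g' s|) ≤ ∫ s in (0:ℝ)..t, K * s ^ n := by
      apply integral_mono_on h0t
      · exact ((hc.mono (by rw [uIcc_of_le h0t]; exact hsub)).abs).intervalIntegrable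
      · exact (Continuous.continuousOn (by continuity)).intervalIntegrable
      · intro s hs
        have := hb s (hsub hs)
        rwa [abs_of_nonneg hs.1] at this
    have hval : (∫ s in (0:ℝ)..t, K * s ^ n) = K * t ^ (n + 1) / (n + 1) := by
      rw [intervalIntegral.integral_const_mul, integral_pow]
      ring
    rw [abs_of_nonneg h0t]
    calc |g t| ≤ _ := habs
      _ ≤ _ := hmono
      _ = _ := hval
  · have h0t' : t ≤ 0 := h0t.le
    have hsub : Icc t 0 ⊆ Icc (-τ) τ := Icc_subset_Icc ht1 (by linarith)
    have hcont : ContinuousOn g (Icc t 0) :=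
      fun s hs => ((hg s (hsub hs)).continuousWithinAt).mono hsub
    have hderiv : ∀ s ∈ Ioo t 0, HasDerivWithinAt g (g' s) (Ioi s) s := by
      intro s hs
      have hmem : Icc (-τ) τ ∈ nhds s :=
        Icc_mem_nhds (by linarith [hs.1]) (by linarith [hs.2])
      exact ((hg s (hsub (Ioo_subset_Icc_self hs))).hasDerivAt hmem).hasDerivWithinAt
    have hint : IntervalIntegrable g' volume t 0 :=
      (hc.mono (by rw [uIcc_of_le h0t']; exact hsub)).intervalIntegrable
    have heq := integral_eq_sub_of_hasDeriv_right_of_le h0t' hcont hderiv hint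
    have habs : |g t| ≤ ∫ s in t..(0:ℝ), |g' s| := by
      rw [h0, zero_sub] at heq
      calc |g t| = |∫ s in t..(0:ℝ), g' s| := by rw [heq, abs_neg]
        _ ≤ _ := abs_integral_le_integral_abs h0t'
    have hmono : (∫ s in t..(0:ℝ), |g' s|) ≤ ∫ s in t..(0:ℝ), K * (-s) ^ n := by
      apply integral_mono_on h0t'
      · exact ((hc.mono (by rw [uIcc_of_le h0t']; exact hsub)).abs).intervalIntegrable
      · exact (Continuous.continuousOn (by continuity)).intervalIntegrable
      · intro s hs
        have := hb s (hsub hs)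
        rwa [abs_of_nonpos hs.2] at this
    have hval : (∫ s in t..(0:ℝ), K * (-s) ^ n) = K * (-t) ^ (n + 1) / (n + 1) := by
      have h1 : (∫ s in t..(0:ℝ), K * (-s) ^ n) = ∫ s in (0:ℝ)..(-t), K * s ^ n := by
        rw [intervalIntegral.integral_comp_neg (fun s => K * s ^ n)]
        norm_num
      rw [h1, intervalIntegral.integral_const_mul, integral_pow]
      ring
    rw [abs_of_neg h0t]
    calc |g t| ≤ _ := habs
      _ ≤ _ := hmono
      _ = _ := hval

/-- For `x, y ∈ C²[−τ, τ]` with `x(0) = y(0) = ẋ(0) = ẏ(0) = 0`, one has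
`|ẋ(t)² y(t) − x(t) ẏ(t)²| ≤ (2/3) ‖ẍ‖ ‖ÿ‖ ‖ẍ − ÿ‖ t⁴` for all `|t| ≤ τ`. -/
theorem key_estimate_numerator
    (τ : ℝ) (hτ : 0 < τ)
    (x y x' y' x'' y'' : ℝ → ℝ)
    (hx1 : ∀ t ∈ Set.Icc (-τ) τ, HasDerivWithinAt x (x' t) (Set.Icc (-τ) τ) t)
    (hx2 : ∀ t ∈ Set.Icc (-τ) τ, HasDerivWithinAt x' (x'' t) (Set.Icc (-τ) τ) t)
    (hy1 : ∀ t ∈ Set.Icc (-τ) τ, HasDerivWithinAt y (y' t) (Set.Icc (-τ) τ) t)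
    (hy2 : ∀ t ∈ Set.Icc (-τ) τ, HasDerivWithinAt y' (y'' t) (Set.Icc (-τ) τ) t)
    (hcx : ContinuousOn x'' (Set.Icc (-τ) τ))
    (hcy : ContinuousOn y'' (Set.Icc (-τ) τ))
    (hx0 : x 0 = 0) (hy0 : y 0 = 0) (hx'0 : x' 0 = 0) (hy'0 : y' 0 = 0) :
    ∀ t ∈ Set.Icc (-τ) τ,
      |x' t ^ 2 * y t - x t * y' t ^ 2| ≤
        (2 / 3) * sSup ((fun s => |x'' s|) '' Set.Icc (-τ) τ) *
          sSup ((fun s => |y'' s|) '' Set.Icc (-τ) τ) *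
          sSup ((fun s => |x'' s - y'' s|) '' Set.Icc (-τ) τ) * t ^ 4 := by
  set A := sSup ((fun s => |x'' s|) '' Set.Icc (-τ) τ) with hAdef
  set B := sSup ((fun s => |y'' s|) '' Set.Icc (-τ) τ) with hBdef
  set C := sSup ((fun s => |x'' s - y'' s|) '' Set.Icc (-τ) τ) with hCdef
  have h0mem : (0:ℝ) ∈ Icc (-τ) τ := ⟨by linarith, by linarith⟩
  -- continuity of lower derivatives
  have hcx' : ContinuousOn x' (Icc (-τ) τ) := fun s hs => (hx2 s hs).continuousWithinAt
  have hcy' : ContinuousOn y' (Icc (-τ) τ) := fun s hs => (hy2 s hs).continuousWithinAt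
  have hcx0 : ContinuousOn x (Icc (-τ) τ) := fun s hs => (hx1 s hs).continuousWithinAt
  have hcy0 : ContinuousOn y (Icc (-τ) τ) := fun s hs => (hy1 s hs).continuousWithinAt
  -- sup bounds
  have hAs : ∀ s ∈ Icc (-τ) τ, |x'' s| ≤ A := fun s hs =>
    le_csSup (isCompact_Icc.bddAbove_image hcx.abs) ⟨s, hs, rfl⟩
  have hBs : ∀ s ∈ Icc (-τ) τ, |y'' s| ≤ B := fun s hs =>
    le_csSup (isCompact_Icc.bddAbove_image hcy.abs) ⟨s, hs, rfl⟩
  have hCs : ∀ s ∈ Icc (-τ) τ, |x'' s - y'' s| ≤ C := fun s hs =>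
    le_csSup (isCompact_Icc.bddAbove_image (hcx.sub hcy).abs) ⟨s, hs, rfl⟩
  have hA0 : 0 ≤ A := le_trans (abs_nonneg _) (hAs 0 h0mem)
  have hB0 : 0 ≤ B := le_trans (abs_nonneg _) (hBs 0 h0mem)
  have hC0 : 0 ≤ C := le_trans (abs_nonneg _) (hCs 0 h0mem)
  -- first-order bounds
  have hx'b : ∀ s ∈ Icc (-τ) τ, |x' s| ≤ A * |s| := by
    intro s hs
    have := poly_bound τ hτ x' x'' A 0 hx2 hcx hx'0
      (fun u hu => by simpa using hAs u hu) s hs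
    simpa using this
  have hy'b : ∀ s ∈ Icc (-τ) τ, |y' s| ≤ B * |s| := by
    intro s hs
    have := poly_bound τ hτ y' y'' B 0 hy2 hcy hy'0
      (fun u hu => by simpa using hBs u hu) s hs
    simpa using this
  have hd'b : ∀ s ∈ Icc (-τ) τ, |x' s - y' s| ≤ C * |s| := by
    intro s hs
    have := poly_bound τ hτ (fun u => x' u - y' u) (fun u => x'' u - y'' u) C 0
      (fun u hu => (hx2 u hu).sub (hy2 u hu)) (hcx.sub hcy)
      (by simp [hx'0, hy'0])
      (fun u hu => by simpa using hCs u hu) s hs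
    simpa using this
  -- second-order bounds
  have hxb : ∀ s ∈ Icc (-τ) τ, |x s| ≤ A * |s| ^ 2 / 2 := by
    intro s hs
    have := poly_bound τ hτ x x' A 1 hx1 hcx' hx0
      (fun u hu => by simpa [pow_one] using hx'b u hu) s hs
    norm_num at this
    rw [sq_abs]
    linarith
  have hyb : ∀ s ∈ Icc (-τ) τ, |y s| ≤ B * |s| ^ 2 / 2 := by
    intro s hs
    have := poly_bound τ hτ y y' B 1 hy1 hcy' hy0
      (fun u hu => by simpa [pow_one] using hy'b u hu) s hs
    norm_num at this
    rw [sq_abs]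
    linarith
  have hdb : ∀ s ∈ Icc (-τ) τ, |x s - y s| ≤ C * |s| ^ 2 / 2 := by
    intro s hs
    have := poly_bound τ hτ (fun u => x u - y u) (fun u => x' u - y' u) C 1
      (fun u hu => (hx1 u hu).sub (hy1 u hu)) (hcx'.sub hcy')
      (by simp [hx0, hy0])
      (fun u hu => by simpa [pow_one] using hd'b u hu) s hs
    norm_num at this
    rw [sq_abs]
    linarith
  -- Wronskian W = x' y - x y'
  have hWd : ∀ s ∈ Icc (-τ) τ,
      HasDerivWithinAt (fun u => x' u * y u - x u * y' u)
        (x'' s * y s - x s * y'' s) (Icc (-τ) τ) s := by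
    intro s hs
    have h := ((hx2 s hs).mul (hy1 s hs)).sub ((hx1 s hs).mul (hy2 s hs))
    exact h.congr_deriv (by ring)
  have hW'c : ContinuousOn (fun s => x'' s * y s - x s * y'' s) (Icc (-τ) τ) :=
    (hcx.mul hcy0).sub (hcx0.mul hcy)
  have hW'b : ∀ s ∈ Icc (-τ) τ, |x'' s * y s - x s * y'' s| ≤ B * C * |s| ^ 2 := by
    intro s hs
    have key : x'' s * y s - x s * y'' s
        = y s * (x'' s - y'' s) + y'' s * (y s - x s) := by ring
    have h1 : |y s * (x'' s - y'' s)| ≤ (B * |s| ^ 2 / 2) * C :=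
      abs_mul_le' (hyb s hs) (hCs s hs)
    have h2 : |y'' s * (y s - x s)| ≤ B * (C * |s| ^ 2 / 2) := by
      have := hdb s hs
      rw [abs_sub_comm] at this
      exact abs_mul_le' (hBs s hs) this
    calc |x'' s * y s - x s * y'' s|
        ≤ |y s * (x'' s - y'' s)| + |y'' s * (y s - x s)| := by rw [key]; exact abs_add_le _ _
      _ ≤ (B * |s| ^ 2 / 2) * C + B * (C * |s| ^ 2 / 2) := add_le_add h1 h2
      _ = B * C * |s| ^ 2 := by ring
  have hWb : ∀ s ∈ Icc (-τ) τ, |x' s * y s - x s * y' s| ≤ B * C * |s| ^ 3 / 3 := by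
    intro s hs
    have := poly_bound τ hτ (fun u => x' u * y u - x u * y' u)
      (fun u => x'' u * y u - x u * y'' u) (B * C) 2 hWd hW'c
      (by simp [hx0, hy0, hx'0, hy'0]) hW'b s hs
    norm_num at this
    linarith
  -- the main function F = x'^2 y - x y'^2
  have hFd : ∀ s ∈ Icc (-τ) τ,
      HasDerivWithinAt (fun u => x' u ^ 2 * y u - x u * y' u ^ 2)
        (2 * x' s * x'' s * y s + x' s ^ 2 * y' s
          - (x' s * y' s ^ 2 + 2 * x s * y' s * y'' s)) (Icc (-τ) τ) s := by
    intro s hs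
    have h := (((hx2 s hs).pow 2).mul (hy1 s hs)).sub
      ((hx1 s hs).mul ((hy2 s hs).pow 2))
    exact h.congr_deriv (by simp only [Pi.pow_apply]; ring)
  have hF'c : ContinuousOn (fun s => 2 * x' s * x'' s * y s + x' s ^ 2 * y' s
      - (x' s * y' s ^ 2 + 2 * x s * y' s * y'' s)) (Icc (-τ) τ) := by
    apply ContinuousOn.sub
    · exact (((continuousOn_const.mul hcx').mul hcx).mul hcy0).add ((hcx'.pow 2).mul hcy')
    · exact (hcx'.mul (hcy'.pow 2)).add (((continuousOn_const.mul hcx0).mul hcy').mul hcy)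
  have hF'b : ∀ s ∈ Icc (-τ) τ,
      |2 * x' s * x'' s * y s + x' s ^ 2 * y' s
        - (x' s * y' s ^ 2 + 2 * x s * y' s * y'' s)|
      ≤ (8 / 3 * (A * B * C)) * |s| ^ 3 := by
    intro s hs
    have key : 2 * x' s * x'' s * y s + x' s ^ 2 * y' s
        - (x' s * y' s ^ 2 + 2 * x s * y' s * y'' s)
        = 2 * (x'' s * (x' s * y s - x s * y' s))
          + 2 * (x s * (y' s * (x'' s - y'' s)))
          + x' s * (y' s * (x' s - y' s)) := by ring
    have h1 : |x'' s * (x' s * y s - x s * y' s)| ≤ A * (B * C * |s| ^ 3 / 3) :=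
      abs_mul_le' (hAs s hs) (hWb s hs)
    have h2 : |x s * (y' s * (x'' s - y'' s))| ≤ (A * |s| ^ 2 / 2) * (B * |s| * C) :=
      abs_mul_le' (hxb s hs) (abs_mul_le' (hy'b s hs) (hCs s hs))
    have h3 : |x' s * (y' s * (x' s - y' s))| ≤ (A * |s|) * ((B * |s|) * (C * |s|)) :=
      abs_mul_le' (hx'b s hs) (abs_mul_le' (hy'b s hs) (hd'b s hs))
    calc |2 * x' s * x'' s * y s + x' s ^ 2 * y' s
        - (x' s * y' s ^ 2 + 2 * x s * y' s * y'' s)|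
        = |2 * (x'' s * (x' s * y s - x s * y' s))
          + 2 * (x s * (y' s * (x'' s - y'' s)))
          + x' s * (y' s * (x' s - y' s))| := by rw [key]
      _ ≤ |2 * (x'' s * (x' s * y s - x s * y' s))
          + 2 * (x s * (y' s * (x'' s - y'' s)))|
          + |x' s * (y' s * (x' s - y' s))| := abs_add_le _ _
      _ ≤ (|2 * (x'' s * (x' s * y s - x s * y' s))|
          + |2 * (x s * (y' s * (x'' s - y'' s)))|)
          + |x' s * (y' s * (x' s - y' s))| := by
            gcongr
            exact abs_add_le _ _
      _ ≤ (2 * (A * (B * C * |s| ^ 3 / 3)) + 2 * ((A * |s| ^ 2 / 2) * (B * |s| * C)))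
          + (A * |s|) * ((B * |s|) * (C * |s|)) := by
            have e1 : |2 * (x'' s * (x' s * y s - x s * y' s))|
                ≤ 2 * (A * (B * C * |s| ^ 3 / 3)) := by
              rw [abs_mul, abs_two]; linarith
            have e2 : |2 * (x s * (y' s * (x'' s - y'' s)))|
                ≤ 2 * ((A * |s| ^ 2 / 2) * (B * |s| * C)) := by
              rw [abs_mul, abs_two]; linarith
            exact add_le_add (add_le_add e1 e2) h3
      _ = (8 / 3 * (A * B * C)) * |s| ^ 3 := by ring
  intro t ht
  have hF := poly_bound τ hτ (fun u => x' u ^ 2 * y u - x u * y' u ^ 2)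
    (fun s => 2 * x' s * x'' s * y s + x' s ^ 2 * y' s
      - (x' s * y' s ^ 2 + 2 * x s * y' s * y'' s))
    (8 / 3 * (A * B * C)) 3 hFd hF'c
    (by simp [hx0, hy0, hx'0, hy'0]) hF'b t ht
  have ht4 : |t| ^ 4 = t ^ 4 := by
    rw [← abs_pow, abs_of_nonneg (by positivity)]
  norm_num [ht4] at hF
  calc |x' t ^ 2 * y t - x t * y' t ^ 2| ≤ 8 / 3 * (A * B * C) * t ^ 4 / 4 := hF
    _ = 2 / 3 * A * B * C * t ^ 4 := by ring
end

section
/- Let τ > 0 and let x, y ∈ C²([−τ, τ], ℝ) satisfy x(0) = y(0) = ẋ(0) = ẏ(0) = 0. Then for all |t| ≤ τ one has |ẋ(t) y(t) − x(t) ẏ(t)| ≤ (1/3) ‖ẍ‖ ‖ẍ − ÿ‖ |t|³. -/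
open Set

private lemma mono_endpoints {a b : ℝ} (hab : a ≤ b) {h h' : ℝ → ℝ}
    (hd : ∀ t ∈ Icc a b, HasDerivWithinAt h (h' t) (Icc a b) t)
    (hpos : ∀ t ∈ Icc a b, 0 ≤ h' t) : h a ≤ h b := by
  have hm : MonotoneOn h (Icc a b) := by
    apply monotoneOn_of_hasDerivWithinAt_nonneg (convex_Icc a b)
      (fun t ht => (hd t ht).continuousWithinAt)
      (f' := h') (fun t ht => ((hd t (interior_subset ht)).mono interior_subset))
      (fun t ht => hpos t (interior_subset ht))
  exact hm (left_mem_Icc.2 hab) (right_mem_Icc.2 hab) hab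

/-- If `f 0 = 0` and `|f'| ≤ C |s|^n` on `[-τ, τ]`, then `|f t| ≤ C/(n+1) |t|^(n+1)`. -/
private lemma poly_bound_s6 {τ C : ℝ} (n : ℕ) {f f' : ℝ → ℝ}
    (hf : ∀ t ∈ Icc (-τ) τ, HasDerivWithinAt f (f' t) (Icc (-τ) τ) t)
    (hf0 : f 0 = 0)
    (hb : ∀ t ∈ Icc (-τ) τ, |f' t| ≤ C * |t| ^ n) :
    ∀ t ∈ Icc (-τ) τ, |f t| ≤ C / (n + 1) * |t| ^ (n + 1) := by
  intro t ht
  have hn1 : ((n : ℝ) + 1) ≠ 0 := by positivity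
  rcases le_or_gt 0 t with htpos | htneg
  · -- work on [0, t]
    have hsub : Icc (0 : ℝ) t ⊆ Icc (-τ) τ := by
      apply Icc_subset_Icc (by linarith [ht.1, ht.2]) ht.2
    have hg : ∀ s : ℝ, HasDerivAt (fun s => C / (n + 1) * s ^ (n + 1)) (C * s ^ n) s := by
      intro s
      have := (hasDerivAt_pow (n + 1) s).const_mul (C / (n + 1))
      refine this.congr_deriv ?_
      push_cast
      field_simp
    have h1 : f t ≤ C / (n + 1) * t ^ (n + 1) := by
      have := mono_endpoints htpos
        (h := fun s => C / (n + 1) * s ^ (n + 1) - f s)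
        (h' := fun s => C * s ^ n - f' s)
        (fun s hs => ((hg s).hasDerivWithinAt).sub ((hf s (hsub hs)).mono hsub))
        (fun s hs => by
          have hb' := hb s (hsub hs)
          rw [abs_of_nonneg hs.1] at hb'
          have := abs_le.1 hb'
          linarith [this.2])
      simp only [hf0] at this
      simp only [zero_pow (by simp : n + 1 ≠ 0), mul_zero, sub_zero] at this
      linarith
    have h2 : -(C / (n + 1) * t ^ (n + 1)) ≤ f t := by
      have := mono_endpoints htpos
        (h := fun s => C / (n + 1) * s ^ (n + 1) + f s)
        (h' := fun s => C * s ^ n + f' s)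
        (fun s hs => ((hg s).hasDerivWithinAt).add ((hf s (hsub hs)).mono hsub))
        (fun s hs => by
          have hb' := hb s (hsub hs)
          rw [abs_of_nonneg hs.1] at hb'
          have := abs_le.1 hb'
          linarith [this.1])
      simp only [hf0] at this
      simp only [zero_pow (by simp : n + 1 ≠ 0), mul_zero, add_zero] at this
      linarith
    rw [abs_of_nonneg htpos]
    exact abs_le.2 ⟨h2, h1⟩
  · -- work on [t, 0]
    have hsub : Icc t (0 : ℝ) ⊆ Icc (-τ) τ := by
      apply Icc_subset_Icc ht.1 (by linarith [ht.1, ht.2])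
    have hg : ∀ s : ℝ, HasDerivAt (fun s => C / (n + 1) * (-s) ^ (n + 1)) (-(C * (-s) ^ n)) s := by
      intro s
      have h0 : HasDerivAt (fun s : ℝ => -s) (-1) s := (hasDerivAt_id s).neg
      have := ((hasDerivAt_pow (n + 1) (-s)).comp s h0).const_mul (C / (n + 1))
      refine this.congr_deriv ?_
      push_cast
      field_simp
    have habs : |t| = -t := abs_of_neg htneg
    have habs' : ∀ s ∈ Icc t (0:ℝ), |s| = -s := fun s hs => abs_of_nonpos hs.2
    have h1 : f t ≤ C / (n + 1) * (-t) ^ (n + 1) := by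
      have := mono_endpoints htneg.le
        (h := fun s => f s - C / (n + 1) * (-s) ^ (n + 1))
        (h' := fun s => f' s + C * (-s) ^ n)
        (fun s hs => by
          have := ((hf s (hsub hs)).mono hsub).sub ((hg s).hasDerivWithinAt)
          have e : f' s + C * (-s) ^ n = f' s - -(C * (-s) ^ n) := by ring
          rw [e]; exact this)
        (fun s hs => by
          have hb' := hb s (hsub hs)
          rw [habs' s hs] at hb'
          have := abs_le.1 hb'
          linarith [this.1])
      simp only [hf0, neg_zero] at this
      simp only [zero_pow (by simp : n + 1 ≠ 0), mul_zero, sub_zero] at this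
      linarith
    have h2 : -(C / (n + 1) * (-t) ^ (n + 1)) ≤ f t := by
      have := mono_endpoints htneg.le
        (h := fun s => -(f s) - C / (n + 1) * (-s) ^ (n + 1))
        (h' := fun s => -(f' s) + C * (-s) ^ n)
        (fun s hs => by
          have := (((hf s (hsub hs)).mono hsub).neg).sub ((hg s).hasDerivWithinAt)
          have e : -(f' s) + C * (-s) ^ n = -(f' s) - -(C * (-s) ^ n) := by ring
          rw [e]; exact this)
        (fun s hs => by
          have hb' := hb s (hsub hs)
          rw [habs' s hs] at hb'
          have := abs_le.1 hb'
          linarith [this.2])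
      simp only [hf0, neg_zero] at this
      simp only [zero_pow (by simp : n + 1 ≠ 0), mul_zero, sub_zero] at this
      linarith
    rw [habs]
    exact abs_le.2 ⟨h2, h1⟩

/-- For `x, y ∈ C²[−τ, τ]` with `x(0) = y(0) = ẋ(0) = ẏ(0) = 0`, one has
`|ẋ(t) y(t) − x(t) ẏ(t)| ≤ (1/3) ‖ẍ‖ ‖ẍ − ÿ‖ |t|³` for all `|t| ≤ τ`. -/
theorem key_estimate_wronskian
    (τ : ℝ) (hτ : 0 < τ)
    (x y x' y' x'' y'' : ℝ → ℝ)
    (hx1 : ∀ t ∈ Set.Icc (-τ) τ, HasDerivWithinAt x (x' t) (Set.Icc (-τ) τ) t)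
    (hx2 : ∀ t ∈ Set.Icc (-τ) τ, HasDerivWithinAt x' (x'' t) (Set.Icc (-τ) τ) t)
    (hy1 : ∀ t ∈ Set.Icc (-τ) τ, HasDerivWithinAt y (y' t) (Set.Icc (-τ) τ) t)
    (hy2 : ∀ t ∈ Set.Icc (-τ) τ, HasDerivWithinAt y' (y'' t) (Set.Icc (-τ) τ) t)
    (hcx : ContinuousOn x'' (Set.Icc (-τ) τ))
    (hcy : ContinuousOn y'' (Set.Icc (-τ) τ))
    (hx0 : x 0 = 0) (hy0 : y 0 = 0) (hx'0 : x' 0 = 0) (hy'0 : y' 0 = 0) :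
    ∀ t ∈ Set.Icc (-τ) τ,
      |x' t * y t - x t * y' t| ≤
        (1 / 3) * sSup ((fun s => |x'' s|) '' Set.Icc (-τ) τ) *
          sSup ((fun s => |x'' s - y'' s|) '' Set.Icc (-τ) τ) * |t| ^ 3 := by
  set M := sSup ((fun s => |x'' s|) '' Set.Icc (-τ) τ) with hM
  set N := sSup ((fun s => |x'' s - y'' s|) '' Set.Icc (-τ) τ) with hN
  have h0mem : (0 : ℝ) ∈ Icc (-τ) τ := by constructor <;> linarith
  have hbdM : BddAbove ((fun s => |x'' s|) '' Icc (-τ) τ) :=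
    (isCompact_Icc.image_of_continuousOn (hcx.abs)).bddAbove
  have hbdN : BddAbove ((fun s => |x'' s - y'' s|) '' Icc (-τ) τ) :=
    (isCompact_Icc.image_of_continuousOn ((hcx.sub hcy).abs)).bddAbove
  have hMle : ∀ s ∈ Icc (-τ) τ, |x'' s| ≤ M := fun s hs =>
    le_csSup hbdM ⟨s, hs, rfl⟩
  have hNle : ∀ s ∈ Icc (-τ) τ, |x'' s - y'' s| ≤ N := fun s hs =>
    le_csSup hbdN ⟨s, hs, rfl⟩
  have hM0 : 0 ≤ M := le_trans (abs_nonneg _) (hMle 0 h0mem)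
  have hN0 : 0 ≤ N := le_trans (abs_nonneg _) (hNle 0 h0mem)
  -- |x'| ≤ M |t|
  have hx'b : ∀ t ∈ Icc (-τ) τ, |x' t| ≤ M * |t| := by
    have := poly_bound_s6 0 hx2 hx'0 (fun t ht => by simpa using hMle t ht)
    intro t ht
    have h := this t ht
    simpa using h
  -- |x| ≤ M/2 t²
  have hxb : ∀ t ∈ Icc (-τ) τ, |x t| ≤ M / 2 * |t| ^ 2 := by
    have := poly_bound_s6 1 hx1 hx0 (fun t ht => by simpa using hx'b t ht)
    intro t ht
    convert this t ht using 2 <;> norm_num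
  -- |y' - x'| ≤ N|t|
  have hd'b : ∀ t ∈ Icc (-τ) τ, |y' t - x' t| ≤ N * |t| := by
    have := poly_bound_s6 0 (f := fun t => y' t - x' t) (f' := fun t => y'' t - x'' t)
      (fun t ht => (hy2 t ht).sub (hx2 t ht)) (by simp [hx'0, hy'0])
      (fun t ht => by
        have := hNle t ht
        rw [abs_sub_comm] at this
        simpa using this)
    intro t ht
    simpa using this t ht
  -- |y - x| ≤ N/2 t²
  have hdb : ∀ t ∈ Icc (-τ) τ, |y t - x t| ≤ N / 2 * |t| ^ 2 := by
    have := poly_bound_s6 1 (f := fun t => y t - x t) (f' := fun t => y' t - x' t)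
      (fun t ht => (hy1 t ht).sub (hx1 t ht)) (by simp [hx0, hy0])
      (fun t ht => by simpa using hd'b t ht)
    intro t ht
    convert this t ht using 2 <;> norm_num
  -- the Wronskian
  have hW : ∀ t ∈ Icc (-τ) τ, HasDerivWithinAt (fun t => x' t * y t - x t * y' t)
      (x'' t * y t - x t * y'' t) (Icc (-τ) τ) t := by
    intro t ht
    have := ((hx2 t ht).mul (hy1 t ht)).sub ((hx1 t ht).mul (hy2 t ht))
    exact this.congr_deriv (by ring)
  have hWb : ∀ t ∈ Icc (-τ) τ, |x'' t * y t - x t * y'' t| ≤ M * N * |t| ^ 2 := by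
    intro t ht
    have key : x'' t * y t - x t * y'' t
        = x'' t * (y t - x t) - x t * (y'' t - x'' t) := by ring
    rw [key]
    calc |x'' t * (y t - x t) - x t * (y'' t - x'' t)|
        ≤ |x'' t * (y t - x t)| + |x t * (y'' t - x'' t)| := abs_sub _ _
      _ = |x'' t| * |y t - x t| + |x t| * |y'' t - x'' t| := by
          rw [abs_mul, abs_mul]
      _ ≤ M * (N / 2 * |t| ^ 2) + (M / 2 * |t| ^ 2) * N := by
          gcongr
          · exact hMle t ht
          · exact hdb t ht
          · exact hxb t ht
          · rw [abs_sub_comm]; exact hNle t ht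
      _ = M * N * |t| ^ 2 := by ring
  intro t ht
  have h := poly_bound_s6 2 hW (by simp [hx0, hy0, hx'0, hy'0]) hWb t ht
  refine le_trans h (le_of_eq ?_)
  push_cast
  ring
end

section
/- Let −1/2 < λ < 0, t₀ > 0, and let α, β, σ, α̃, β̃, σ̃ ∈ C¹([−t₀, t₀], ℝ) with t₀ < min{ (1 − 2|λ|)/(½‖α‖ + ‖β‖), (1 − 2|λ|)/(½‖α̃‖ + ‖β̃‖) }. Let y and ỹ be the C² solutions on [−t₀, t₀] of ÿ = 4λ(tẏ − y)/t² + α(t)y/t + β(t)ẏ + σ(t) and of the analogous equation with coefficients (α̃, β̃, σ̃), respectively, both with y(0) = ỹ(0) = 0 and ẏ(0) = ẏ̃(0) = ẏ₀. Then ‖ÿ − ÿ̃‖ ≤ ( (‖α − α̃‖ + ‖β − β̃‖) ‖ẏ̃‖ + ‖σ − σ̃‖ ) / ( 1 − 2|λ| − (½‖α‖ + ‖β‖) t₀ ). -/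
/-- Sup-norm `sup_{|t| ≤ t₀} |ξ(t)|` of a function on the interval `[−t₀, t₀]`. -/
noncomputable def supAbsOn (t₀ : ℝ) (ξ : ℝ → ℝ) : ℝ :=
  sSup ((fun t => |ξ t|) '' Set.Icc (-t₀) t₀)

/-- `y` (with derivative `y'` and second derivative `y''`, `y ∈ C²[−t₀, t₀]`) solves the
singular variational equation `ÿ = 4λ(tẏ − y)/t² + α(t)y/t + β(t)ẏ + σ(t)` (the equation
being required at `t ≠ 0`) with `y(0) = 0`, `ẏ(0) = ẏ₀`. -/
def IsVarSol (lam t₀ : ℝ) (a b s : ℝ → ℝ) (y0' : ℝ) (y y' y'' : ℝ → ℝ) : Prop :=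
  ContinuousOn y'' (Set.Icc (-t₀) t₀) ∧
  (∀ t ∈ Set.Icc (-t₀) t₀, HasDerivWithinAt y (y' t) (Set.Icc (-t₀) t₀) t) ∧
  (∀ t ∈ Set.Icc (-t₀) t₀, HasDerivWithinAt y' (y'' t) (Set.Icc (-t₀) t₀) t) ∧
  y 0 = 0 ∧ y' 0 = y0' ∧
  (∀ t ∈ Set.Icc (-t₀) t₀, t ≠ 0 →
    y'' t = 4 * lam * (t * y' t - y t) / t ^ 2 + a t * y t / t + b t * y' t + s t)

open Set intervalIntegral

lemma abs_le_supAbsOn {t₀ : ℝ} {f : ℝ → ℝ}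
    (hf : ContinuousOn f (Set.Icc (-t₀) t₀)) {t : ℝ} (ht : t ∈ Set.Icc (-t₀) t₀) :
    |f t| ≤ supAbsOn t₀ f :=
  le_csSup (isCompact_Icc.image_of_continuousOn hf.abs).bddAbove ⟨t, ht, rfl⟩

lemma supAbsOn_le {t₀ : ℝ} (ht₀ : 0 ≤ t₀) {f : ℝ → ℝ} {M : ℝ}
    (h : ∀ t ∈ Set.Icc (-t₀) t₀, |f t| ≤ M) : supAbsOn t₀ f ≤ M :=
  csSup_le ((Set.nonempty_Icc.2 (by linarith)).image _)
    (by rintro x ⟨t, ht, rfl⟩; exact h t ht)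

lemma supAbsOn_nonneg {t₀ : ℝ} (ht₀ : 0 ≤ t₀) {f : ℝ → ℝ}
    (hf : ContinuousOn f (Set.Icc (-t₀) t₀)) : 0 ≤ supAbsOn t₀ f :=
  (abs_nonneg _).trans (abs_le_supAbsOn hf ⟨by linarith, ht₀⟩)

/-- FTC for a function vanishing at `0` with continuous derivative within `[-t₀, t₀]`. -/
lemma ftc_zero {t₀ : ℝ} (ht₀ : 0 < t₀) {g g' : ℝ → ℝ}
    (hg : ∀ x ∈ Set.Icc (-t₀) t₀, HasDerivWithinAt g (g' x) (Set.Icc (-t₀) t₀) x)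
    (hg' : ContinuousOn g' (Set.Icc (-t₀) t₀)) (hg0 : g 0 = 0)
    {t : ℝ} (ht : t ∈ Set.Icc (-t₀) t₀) :
    g t = ∫ x in (0:ℝ)..t, g' x := by
  have hgc : ContinuousOn g (Set.Icc (-t₀) t₀) := fun x hx => (hg x hx).continuousWithinAt
  have hderiv : ∀ x ∈ Set.Ioo (-t₀) t₀, HasDerivAt g (g' x) x := fun x hx =>
    (hg x (Set.Ioo_subset_Icc_self hx)).hasDerivAt (Icc_mem_nhds hx.1 hx.2)
  rcases le_or_gt 0 t with h | h
  · have hsub : Set.Icc (0:ℝ) t ⊆ Set.Icc (-t₀) t₀ :=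
      Set.Icc_subset_Icc (by linarith) ht.2
    have hint : IntervalIntegrable g' MeasureTheory.volume 0 t :=
      (hg'.mono (by rwa [Set.uIcc_of_le h])).intervalIntegrable
    rw [integral_eq_sub_of_hasDerivAt_of_le h (hgc.mono hsub)
      (fun x hx => hderiv x ⟨by linarith [hx.1], lt_of_lt_of_le hx.2 ht.2⟩) hint, hg0, sub_zero]
  · have hsub : Set.Icc t (0:ℝ) ⊆ Set.Icc (-t₀) t₀ :=
      Set.Icc_subset_Icc ht.1 (by linarith)
    have hint : IntervalIntegrable g' MeasureTheory.volume t 0 :=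
      (hg'.mono (by rwa [Set.uIcc_of_le h.le])).intervalIntegrable
    rw [integral_symm]
    rw [integral_eq_sub_of_hasDerivAt_of_le h.le (hgc.mono hsub)
      (fun x hx => hderiv x ⟨lt_of_le_of_lt ht.1 hx.1, by linarith [hx.2]⟩) hint, hg0]
    ring

/-- If `g(0) = 0` and `|g'(x)| ≤ C|x|`, then `|g(t)| ≤ C t² / 2`. -/
lemma bound_quad {t₀ C : ℝ} (ht₀ : 0 < t₀) {g g' : ℝ → ℝ}
    (hg : ∀ x ∈ Set.Icc (-t₀) t₀, HasDerivWithinAt g (g' x) (Set.Icc (-t₀) t₀) x)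
    (hg' : ContinuousOn g' (Set.Icc (-t₀) t₀)) (hg0 : g 0 = 0)
    (hb : ∀ x ∈ Set.Icc (-t₀) t₀, |g' x| ≤ C * |x|)
    {t : ℝ} (ht : t ∈ Set.Icc (-t₀) t₀) : |g t| ≤ C * t ^ 2 / 2 := by
  rw [ftc_zero ht₀ hg hg' hg0 ht]
  rcases le_or_gt 0 t with h | h
  · have hsub : Set.Icc (0:ℝ) t ⊆ Set.Icc (-t₀) t₀ :=
      Set.Icc_subset_Icc (by linarith [ht.1]) ht.2
    have hint1 : IntervalIntegrable (fun x => |g' x|) MeasureTheory.volume 0 t :=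
      (hg'.abs.mono (by rwa [Set.uIcc_of_le h])).intervalIntegrable
    have hint2 : IntervalIntegrable (fun x => C * x) MeasureTheory.volume 0 t :=
      (continuous_const.mul continuous_id).intervalIntegrable _ _
    calc |∫ x in (0:ℝ)..t, g' x| ≤ ∫ x in (0:ℝ)..t, |g' x| :=
          abs_integral_le_integral_abs h
      _ ≤ ∫ x in (0:ℝ)..t, C * x := by
          apply integral_mono_on h hint1 hint2
          intro x hx
          have := hb x (hsub hx)
          rwa [abs_of_nonneg hx.1] at this
      _ = C * t ^ 2 / 2 := by
          rw [integral_const_mul, integral_id]; ring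
  · have hsub : Set.Icc t (0:ℝ) ⊆ Set.Icc (-t₀) t₀ :=
      Set.Icc_subset_Icc ht.1 (by linarith)
    have hint1 : IntervalIntegrable (fun x => |g' x|) MeasureTheory.volume t 0 :=
      (hg'.abs.mono (by rwa [Set.uIcc_of_le h.le])).intervalIntegrable
    have hint2 : IntervalIntegrable (fun x => C * (-x)) MeasureTheory.volume t 0 :=
      (continuous_const.mul continuous_neg).intervalIntegrable _ _
    calc |∫ x in (0:ℝ)..t, g' x| = |∫ x in t..(0:ℝ), g' x| := by
          rw [integral_symm, abs_neg]
      _ ≤ ∫ x in t..(0:ℝ), |g' x| := abs_integral_le_integral_abs h.le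
      _ ≤ ∫ x in t..(0:ℝ), C * (-x) := by
          apply integral_mono_on h.le hint1 hint2
          intro x hx
          have := hb x (hsub hx)
          rwa [abs_of_nonpos hx.2] at this
      _ = C * t ^ 2 / 2 := by
          simp only [mul_neg]
          rw [intervalIntegral.integral_neg, integral_const_mul, integral_id]; ring

/-- If `g(0) = 0` and `|g'| ≤ C`, then `|g(t)| ≤ C|t|`. -/
lemma bound_lin {t₀ C : ℝ} {g g' : ℝ → ℝ}
    (hg : ∀ x ∈ Set.Icc (-t₀) t₀, HasDerivWithinAt g (g' x) (Set.Icc (-t₀) t₀) x)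
    (hg0 : g 0 = 0)
    (hb : ∀ x ∈ Set.Icc (-t₀) t₀, |g' x| ≤ C)
    {t : ℝ} (ht : t ∈ Set.Icc (-t₀) t₀) (h0 : (0:ℝ) ∈ Set.Icc (-t₀) t₀) :
    |g t| ≤ C * |t| := by
  have := (convex_Icc (-t₀) t₀).norm_image_sub_le_of_norm_hasDerivWithin_le hg
    (fun x hx => by rw [Real.norm_eq_abs]; exact hb x hx) h0 ht
  simpa [Real.norm_eq_abs, hg0] using this

set_option maxHeartbeats 1000000 in
/-- (Comparison of solutions of two singular variational equations.)
For `−1/2 < λ < 0`, `C¹` coefficients `(α, β, σ)` and `(α̃, β̃, σ̃)` on `[−t₀, t₀]` with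
`t₀ < min{(1 − 2|λ|)/(½‖α‖ + ‖β‖), (1 − 2|λ|)/(½‖α̃‖ + ‖β̃‖)}`, the solutions `y`, `ỹ` with
`y(0) = ỹ(0) = 0`, `ẏ(0) = ẏ̃(0) = ẏ₀` satisfy
`‖ÿ − ÿ̃‖ ≤ ((‖α − α̃‖ + ‖β − β̃‖)‖ẏ̃‖ + ‖σ − σ̃‖)/(1 − 2|λ| − (½‖α‖ + ‖β‖)t₀)`. -/
theorem variational_eq_difference_estimate
    (lam t₀ : ℝ) (hlam1 : -(1 / 2) < lam) (hlam2 : lam < 0) (ht₀ : 0 < t₀)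
    (a b s at' bt st : ℝ → ℝ)
    (ha : ContDiffOn ℝ 1 a (Set.Icc (-t₀) t₀))
    (hb : ContDiffOn ℝ 1 b (Set.Icc (-t₀) t₀))
    (hs : ContDiffOn ℝ 1 s (Set.Icc (-t₀) t₀))
    (hat : ContDiffOn ℝ 1 at' (Set.Icc (-t₀) t₀))
    (hbt : ContDiffOn ℝ 1 bt (Set.Icc (-t₀) t₀))
    (hst : ContDiffOn ℝ 1 st (Set.Icc (-t₀) t₀))
    (hsmall : (1 / 2 * supAbsOn t₀ a + supAbsOn t₀ b) * t₀ < 1 - 2 * |lam|)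
    (hsmall' : (1 / 2 * supAbsOn t₀ at' + supAbsOn t₀ bt) * t₀ < 1 - 2 * |lam|)
    (y0' : ℝ) (y y' y'' z z' z'' : ℝ → ℝ)
    (hy : IsVarSol lam t₀ a b s y0' y y' y'')
    (hz : IsVarSol lam t₀ at' bt st y0' z z' z'') :
    supAbsOn t₀ (fun t => y'' t - z'' t) ≤
      ((supAbsOn t₀ (fun t => a t - at' t) + supAbsOn t₀ (fun t => b t - bt t)) *
          supAbsOn t₀ z' +
        supAbsOn t₀ (fun t => s t - st t)) /
        (1 - 2 * |lam| - (1 / 2 * supAbsOn t₀ a + supAbsOn t₀ b) * t₀) := by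
  obtain ⟨hy''c, hyd, hy'd, hy0, hy'0, hyeq⟩ := hy
  obtain ⟨hz''c, hzd, hz'd, hz0, hz'0, hzeq⟩ := hz
  set I := Set.Icc (-t₀) t₀ with hI
  have h0I : (0:ℝ) ∈ I := ⟨by linarith, ht₀.le⟩
  -- continuity facts
  have hw''c : ContinuousOn (fun t => y'' t - z'' t) I := hy''c.sub hz''c
  have hz'c : ContinuousOn z' I := fun x hx => (hz'd x hx).continuousWithinAt
  have hw'c : ContinuousOn (fun t => y' t - z' t) I :=
    (fun x hx => ((hy'd x hx).sub (hz'd x hx)).continuousWithinAt :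
      ∀ x ∈ I, ContinuousWithinAt _ I x)
  -- abbreviations
  set A := supAbsOn t₀ a with hA
  set B := supAbsOn t₀ b with hB
  set Da := supAbsOn t₀ (fun t => a t - at' t) with hDa
  set Db := supAbsOn t₀ (fun t => b t - bt t) with hDb
  set Ds := supAbsOn t₀ (fun t => s t - st t) with hDs
  set Z := supAbsOn t₀ z' with hZ
  set W := supAbsOn t₀ (fun t => y'' t - z'' t) with hW
  have hW0 : 0 ≤ W := supAbsOn_nonneg ht₀.le hw''c
  have hA0 : 0 ≤ A := supAbsOn_nonneg ht₀.le ha.continuousOn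
  have hB0 : 0 ≤ B := supAbsOn_nonneg ht₀.le hb.continuousOn
  have hDa0 : 0 ≤ Da := supAbsOn_nonneg ht₀.le (ha.continuousOn.sub hat.continuousOn)
  have hDb0 : 0 ≤ Db := supAbsOn_nonneg ht₀.le (hb.continuousOn.sub hbt.continuousOn)
  have hZ0 : 0 ≤ Z := supAbsOn_nonneg ht₀.le hz'c
  -- derivative of w and w'
  have hwd : ∀ x ∈ I, HasDerivWithinAt (fun t => y t - z t) (y' x - z' x) I x :=
    fun x hx => (hyd x hx).sub (hzd x hx)
  have hw'd : ∀ x ∈ I, HasDerivWithinAt (fun t => y' t - z' t) (y'' x - z'' x) I x :=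
    fun x hx => (hy'd x hx).sub (hz'd x hx)
  -- pointwise bounds
  have hw''le : ∀ x ∈ I, |y'' x - z'' x| ≤ W := fun x hx => abs_le_supAbsOn hw''c hx
  have hw'le : ∀ x ∈ I, |y' x - z' x| ≤ W * |x| := fun x hx =>
    bound_lin hw'd (by rw [hy'0, hz'0, sub_self]) hw''le hx h0I
  have hwle : ∀ x ∈ I, |y x - z x| ≤ W * x ^ 2 / 2 := fun x hx =>
    bound_quad ht₀ hwd hw'c (by rw [hy0, hz0, sub_self]) hw'le hx
  have hz'le : ∀ x ∈ I, |z' x| ≤ Z := fun x hx => abs_le_supAbsOn hz'c hx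
  have hzle : ∀ x ∈ I, |z x| ≤ Z * |x| := fun x hx =>
    bound_lin hzd hz0 hz'le hx h0I
  -- the function g(t) = t w'(t) − w(t), with derivative t w''(t)
  have hgd : ∀ x ∈ I, HasDerivWithinAt
      (fun t => t * (y' t - z' t) - (y t - z t)) (x * (y'' x - z'' x)) I x := by
    intro x hx
    have h1 := ((hasDerivWithinAt_id x I).mul (hw'd x hx)).sub (hwd x hx)
    refine h1.congr_deriv ?_
    simp only [id_eq]
    ring
  have hgle : ∀ x ∈ I, |x * (y' x - z' x) - (y x - z x)| ≤ W * x ^ 2 / 2 := by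
    intro x hx
    apply bound_quad ht₀ hgd
      ((continuous_id.continuousOn).mul hw''c) (by simp [hy0, hz0])
      (fun u hu => ?_) hx
    rw [abs_mul, mul_comm]
    exact mul_le_mul_of_nonneg_right (hw''le u hu) (abs_nonneg u)
  -- the big pointwise estimate at t ≠ 0
  set M : ℝ := 2 * |lam| * W + (1 / 2 * A + B) * t₀ * W + ((Da + Db) * Z + Ds) with hM
  have hMbound : ∀ t ∈ I, t ≠ 0 → |y'' t - z'' t| ≤ M := by
    intro t htI hne
    have htabs : 0 < |t| := abs_pos.2 hne
    have htle : |t| ≤ t₀ := abs_le.2 ⟨htI.1, htI.2⟩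
    have ht2 : (0:ℝ) < t ^ 2 := by positivity
    have heq : y'' t - z'' t =
        4 * lam * (t * (y' t - z' t) - (y t - z t)) / t ^ 2 +
        a t * (y t - z t) / t + (a t - at' t) * z t / t +
        b t * (y' t - z' t) + (b t - bt t) * z' t + (s t - st t) := by
      rw [hyeq t htI hne, hzeq t htI hne]
      field_simp
      ring
    have h1 : |4 * lam * (t * (y' t - z' t) - (y t - z t)) / t ^ 2| ≤ 2 * |lam| * W := by
      rw [abs_div, abs_of_pos ht2, div_le_iff₀ ht2, abs_mul]
      have h4 : |4 * lam| = 4 * |lam| := by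
        rw [abs_mul]; norm_num
      rw [h4]
      nlinarith [hgle t htI, abs_nonneg lam,
        mul_le_mul_of_nonneg_left (hgle t htI) (by positivity : (0:ℝ) ≤ 4 * |lam|)]
    have hw2 : |y t - z t| ≤ W * t₀ / 2 * |t| := by
      have h := hwle t htI
      have hsq : t ^ 2 = |t| ^ 2 := (sq_abs t).symm
      nlinarith [mul_nonneg (mul_nonneg hW0 (abs_nonneg t)) (sub_nonneg.2 htle)]
    have h2 : |a t * (y t - z t) / t| ≤ 1 / 2 * A * t₀ * W := by
      rw [abs_div, abs_mul, div_le_iff₀ htabs]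
      have haT : |a t| ≤ A := abs_le_supAbsOn ha.continuousOn htI
      nlinarith [mul_le_mul haT hw2 (abs_nonneg _) hA0]
    have h3 : |(a t - at' t) * z t / t| ≤ Da * Z := by
      rw [abs_div, abs_mul, div_le_iff₀ htabs]
      have hdT : |a t - at' t| ≤ Da :=
        abs_le_supAbsOn (ha.continuousOn.sub hat.continuousOn) htI
      nlinarith [mul_le_mul hdT (hzle t htI) (abs_nonneg _) hDa0]
    have h4 : |b t * (y' t - z' t)| ≤ B * t₀ * W := by
      rw [abs_mul]
      have hbT : |b t| ≤ B := abs_le_supAbsOn hb.continuousOn htI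
      nlinarith [mul_le_mul hbT (hw'le t htI) (abs_nonneg _) hB0,
        mul_nonneg (mul_nonneg hB0 hW0) (sub_nonneg.2 htle)]
    have h5 : |(b t - bt t) * z' t| ≤ Db * Z := by
      rw [abs_mul]
      have hdT : |b t - bt t| ≤ Db :=
        abs_le_supAbsOn (hb.continuousOn.sub hbt.continuousOn) htI
      exact mul_le_mul hdT (hz'le t htI) (abs_nonneg _) hDb0
    have h6 : |s t - st t| ≤ Ds :=
      abs_le_supAbsOn (hs.continuousOn.sub hst.continuousOn) htI
    rw [heq]
    have habs : ∀ p q r u v x : ℝ,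
        |p + q + r + u + v + x| ≤ |p| + |q| + |r| + |u| + |v| + |x| := by
      intro p q r u v x
      calc |p + q + r + u + v + x| ≤ |p + q + r + u + v| + |x| := abs_add_le _ _
        _ ≤ |p + q + r + u| + |v| + |x| := by linarith [abs_add_le (p + q + r + u) v]
        _ ≤ |p + q + r| + |u| + |v| + |x| := by linarith [abs_add_le (p + q + r) u]
        _ ≤ |p + q| + |r| + |u| + |v| + |x| := by linarith [abs_add_le (p + q) r]
        _ ≤ |p| + |q| + |r| + |u| + |v| + |x| := by linarith [abs_add_le p q]
    calc |_| ≤ _ := habs _ _ _ _ _ _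
      _ ≤ M := by rw [hM]; linarith
  -- bound at t = 0 by continuity
  have hM0 : |y'' 0 - z'' 0| ≤ M := by
    have htend : Filter.Tendsto (fun t => |y'' t - z'' t|) (nhdsWithin 0 (Set.Ioi (0:ℝ)))
        (nhds |y'' 0 - z'' 0|) := by
      have hc : ContinuousWithinAt (fun t => |y'' t - z'' t|) I 0 := (hw''c.abs) 0 h0I
      apply hc.tendsto.mono_left
      rw [← nhdsWithin_Ioc_eq_nhdsGT ht₀]
      exact nhdsWithin_mono _ (fun x hx => ⟨by linarith [hx.1], hx.2⟩)
    apply le_of_tendsto htend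
    filter_upwards [Ioc_mem_nhdsGT_of_mem ⟨le_refl 0, ht₀⟩] with t ht
    exact hMbound t ⟨by linarith [ht.1], ht.2⟩ (ne_of_gt ht.1)
  -- sup bound
  have hWM : W ≤ M := by
    apply supAbsOn_le ht₀.le
    intro t htI
    rcases eq_or_ne t 0 with rfl | hne
    · exact hM0
    · exact hMbound t htI hne
  -- rearrange
  have hD : 0 < 1 - 2 * |lam| - (1 / 2 * A + B) * t₀ := by linarith
  rw [le_div_iff₀ hD]
  rw [hM] at hWM
  nlinarith [hWM]
end
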